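/- arXiv:1505.05418 — 5 statements merged into one kernel-verified Lean document; each statement's English description precedes it below -/
import Mathlib

section
/- Let (x,v):[0,T] → H×H be a strong solution of the system v(t) ∈ ∂φ(x(t)), λ(t)ẋ(t) + v̇(t) + v(t) + ∇ψ(x(t)) = 0 a.e., with x(0)=x₀, v(0)=v₀. If λ(t) ≥ c₀ > 0 on [0,T] and φ+ψ is bounded below on H, then ∫₀ᵀ ‖ẋ(t)‖² dt ≤ (1/c₀)·((φ+ψ)(x₀) − inf_H (φ+ψ)). -/
open MeasureTheory Set Filter InnerProductSpace intervalIntegral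
open scoped Topology

variable {H : Type*} [NormedAddCommGroup H] [InnerProductSpace ℝ H] [CompleteSpace H]

lemma grad_subgrad {ψ : H → ℝ} (hc : ConvexOn ℝ Set.univ ψ) {g z : H}
    (hg : HasGradientAt ψ g z) (y : H) : ψ z + inner ℝ g (y - z) ≤ ψ y := by
  set c : ℝ → H := fun t => z + t • (y - z) with hcdef
  have hc0 : c 0 = z := by simp [hcdef]
  have hcz : ∀ t : ℝ, c t = (1 - t) • z + t • y := by
    intro t; simp only [hcdef, smul_sub, sub_smul, one_smul]; abel
  have hder : HasDerivAt (fun t : ℝ => ψ (c t)) (inner ℝ g (y - z)) 0 := by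
    have h1 : HasDerivAt c (y - z) 0 := by
      have : HasDerivAt (fun t : ℝ => t • (y - z)) (y - z) 0 := by
        simpa using (hasDerivAt_id (0:ℝ)).smul_const (y - z)
      simpa [hcdef] using this.const_add z
    have h2 : HasFDerivAt ψ (toDual ℝ H g) (c 0) := hc0 ▸ hg.hasFDerivAt
    have h3 := h2.comp_hasDerivAt (0:ℝ) h1
    rw [show (inner ℝ g (y - z)) = toDual ℝ H g (y - z) by simp]; exact h3
  -- slope inequality
  have hslope : ∀ t ∈ Set.Ioc (0:ℝ) 1, (ψ (c t) - ψ (c 0)) / t ≤ ψ y - ψ z := by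
    intro t ht
    have h4 := hc.2 (mem_univ z) (mem_univ y) (by linarith [ht.2] : (0:ℝ) ≤ 1 - t)
      (le_of_lt ht.1) (by ring)
    rw [← hcz t] at h4
    rw [hc0, div_le_iff₀ ht.1]
    simp only [smul_eq_mul] at h4
    nlinarith [h4, ht.1]
  have htend : Tendsto (fun t => (ψ (c t) - ψ (c 0)) / t) (𝓝[>] (0:ℝ))
      (𝓝 (inner ℝ g (y - z))) := by
    have h5 := hasDerivAt_iff_tendsto_slope.1 hder
    have h6 : Tendsto (slope (fun t => ψ (c t)) 0) (𝓝[>] (0:ℝ)) (𝓝 (inner ℝ g (y - z))) :=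
      h5.mono_left (nhdsWithin_mono _ (fun t ht => ne_of_gt ht))
    refine h6.congr' ?_
    filter_upwards [self_mem_nhdsWithin] with t ht
    simp [slope_def_field, div_eq_inv_mul]
  have : inner ℝ g (y - z) ≤ ψ y - ψ z := by
    refine le_of_tendsto htend ?_
    filter_upwards [Ioc_mem_nhdsGT_of_mem (by norm_num : (0:ℝ) ∈ Set.Ico 0 1)] with t ht
    exact hslope t ht
  linarith

lemma grad_cont {ψ : H → ℝ} {ψ' : H → H} (hc : ConvexOn ℝ Set.univ ψ)
    (hg : ∀ z, HasGradientAt ψ (ψ' z) z) : Continuous ψ' := by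
  rw [continuous_iff_continuousAt]
  intro z₀
  have hψc : ContinuousAt ψ z₀ := (hg z₀).hasFDerivAt.continuousAt
  obtain ⟨d, hd, hball⟩ := Metric.continuousAt_iff.1 hψc 1 one_pos
  set r : ℝ := d / 3 with hrdef
  have hr : 0 < r := by positivity
  set M : ℝ := (1 + r * ‖ψ' z₀‖) / r with hMdef
  have hM0 : 0 ≤ M := by positivity
  have hup : ∀ w : H, dist w z₀ < d → ψ w ≤ ψ z₀ + 1 := by
    intro w hw
    have := hball hw
    rw [Real.dist_eq] at this
    have := abs_lt.1 this
    linarith [this.1, this.2]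
  have hlow : ∀ z : H, ‖z - z₀‖ ≤ r → ψ z₀ - ‖ψ' z₀‖ * ‖z - z₀‖ ≤ ψ z := by
    intro z hz
    have h1 := grad_subgrad hc (hg z₀) z
    have h2 : -(‖ψ' z₀‖ * ‖z - z₀‖) ≤ (inner ℝ (ψ' z₀) (z - z₀) : ℝ) := by
      have h3 := abs_real_inner_le_norm (ψ' z₀) (z - z₀)
      linarith [neg_abs_le (inner ℝ (ψ' z₀) (z - z₀) : ℝ)]
    linarith
  have hM : ∀ z : H, ‖z - z₀‖ ≤ r → ‖ψ' z‖ ≤ M := by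
    intro z hz
    by_cases hp : ψ' z = 0
    · simp [hp, hM0]
    · have hnz : ‖ψ' z‖ ≠ 0 := norm_ne_zero_iff.2 hp
      set h : H := (r / ‖ψ' z‖) • ψ' z with hhdef
      have hnh : ‖h‖ = r := by
        rw [hhdef, norm_smul, norm_div, norm_norm, Real.norm_eq_abs, abs_of_pos hr]
        field_simp
      have hih : (inner ℝ (ψ' z) h : ℝ) = r * ‖ψ' z‖ := by
        rw [hhdef, real_inner_smul_right, real_inner_self_eq_norm_sq]
        field_simp
      have h1 := grad_subgrad hc (hg z) (z + h)
      simp only [add_sub_cancel_left] at h1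
      have h2 : ψ (z + h) ≤ ψ z₀ + 1 := by
        apply hup
        calc dist (z + h) z₀ ≤ ‖z - z₀‖ + ‖h‖ := by
              rw [dist_eq_norm]; calc ‖z + h - z₀‖ = ‖(z - z₀) + h‖ := by congr 1; abel
                _ ≤ _ := norm_add_le _ _
          _ < d := by rw [hnh]; linarith [hz]
      have h3 := hlow z hz
      have : r * ‖ψ' z‖ ≤ 1 + ‖ψ' z₀‖ * ‖z - z₀‖ := by
        rw [← hih]; linarith
      rw [hMdef, le_div_iff₀ hr]
      have h4 : ‖ψ' z₀‖ * ‖z - z₀‖ ≤ r * ‖ψ' z₀‖ := by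
        rw [mul_comm]; exact mul_le_mul_of_nonneg_right hz (norm_nonneg _)
      linarith [this]
  -- now continuity
  rw [Metric.continuousAt_iff]
  intro ε hε
  set ε' : ℝ := ε / 3 with hε'def
  have hε' : 0 < ε' := by positivity
  have hlo := hasFDerivAt_iff_isLittleO_nhds_zero.1 (hg z₀).hasFDerivAt
  have hev := hlo.def hε'
  rw [Metric.eventually_nhds_iff] at hev
  obtain ⟨d₀, hd₀, hδ⟩ := hev
  set δ : ℝ := min (d₀ / 2) r with hδdef
  have hδpos : 0 < δ := by positivity
  have hδr : δ ≤ r := min_le_right _ _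
  have hδd₀ : δ < d₀ := lt_of_le_of_lt (min_le_left _ _) (by linarith)
  set C : ℝ := M + ‖ψ' z₀‖ + 1 with hCdef
  have hC : 0 < C := by positivity
  refine ⟨min r (ε' * δ / C), by positivity, ?_⟩
  intro z hz
  rw [lt_min_iff] at hz
  rw [dist_eq_norm] at hz ⊢
  have hzr : ‖z - z₀‖ ≤ r := le_of_lt hz.1
  have hkey : ‖ψ' z - ψ' z₀‖ ≤ 2 * ε' := by
    set p : H := ψ' z - ψ' z₀ with hpdef
    by_cases hp : p = 0
    · rw [hp]; simp; positivity
    · have hnz : ‖p‖ ≠ 0 := norm_ne_zero_iff.2 hp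
      set h : H := (δ / ‖p‖) • p with hhdef
      have hnh : ‖h‖ = δ := by
        rw [hhdef, norm_smul, norm_div, norm_norm, Real.norm_eq_abs, abs_of_pos hδpos]
        field_simp
      have hih : (inner ℝ p h : ℝ) = δ * ‖p‖ := by
        rw [hhdef, real_inner_smul_right, real_inner_self_eq_norm_sq]
        field_simp
      -- A3
      have hA3 : ψ (z₀ + h) - ψ z₀ - inner ℝ (ψ' z₀) h ≤ ε' * δ := by
        have := hδ (y := h) (by rw [dist_zero_right, hnh]; exact hδd₀)
        simp only [toDual_apply_apply] at this
        have h2 := (abs_le.1 (by simpa [Real.norm_eq_abs] using this)).2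
        rw [hnh] at h2
        linarith [h2]
      -- A1
      have hA1 : (inner ℝ (ψ' z) (z₀ + h - z) : ℝ) ≤ ψ (z₀ + h) - ψ z := by
        have := grad_subgrad hc (hg z) (z₀ + h); linarith
      -- A2
      have hA2 : (inner ℝ (ψ' z) (z - z₀) : ℝ) ≤ M * ‖z - z₀‖ := by
        calc (inner ℝ (ψ' z) (z - z₀) : ℝ) ≤ ‖ψ' z‖ * ‖z - z₀‖ := real_inner_le_norm _ _
          _ ≤ M * ‖z - z₀‖ := mul_le_mul_of_nonneg_right (hM z hzr) (norm_nonneg _)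
      -- A4
      have hA4 : ψ z₀ - ψ z ≤ ‖ψ' z₀‖ * ‖z - z₀‖ := by
        have h1 := grad_subgrad hc (hg z₀) z
        have h2 : -(‖ψ' z₀‖ * ‖z - z₀‖) ≤ (inner ℝ (ψ' z₀) (z - z₀) : ℝ) := by
          have := abs_real_inner_le_norm (ψ' z₀) (z - z₀)
          linarith [neg_abs_le (inner ℝ (ψ' z₀) (z - z₀) : ℝ), this]
        linarith
      have hsplit : (inner ℝ (ψ' z) h : ℝ) = inner ℝ (ψ' z) (z₀ + h - z) + inner ℝ (ψ' z) (z - z₀) := by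
        rw [← inner_add_right]; congr 1; abel
      have hph : (inner ℝ p h : ℝ) = inner ℝ (ψ' z) h - inner ℝ (ψ' z₀) h := by
        rw [hpdef, inner_sub_left]
      have hbound : (inner ℝ p h : ℝ) ≤ ε' * δ + C * ‖z - z₀‖ := by
        rw [hph, hsplit]
        have : (inner ℝ (ψ' z₀) (z - z₀) : ℝ) ≥ -(‖ψ' z₀‖ * ‖z - z₀‖) := by
          have := abs_real_inner_le_norm (ψ' z₀) (z - z₀)
          linarith [neg_abs_le (inner ℝ (ψ' z₀) (z - z₀) : ℝ)]
        rw [hCdef]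
        nlinarith [norm_nonneg (z - z₀), hA1, hA2, hA3, hA4]
      have hzC : C * ‖z - z₀‖ ≤ ε' * δ := by
        have := le_of_lt hz.2
        calc C * ‖z - z₀‖ ≤ C * (ε' * δ / C) := mul_le_mul_of_nonneg_left this (le_of_lt hC)
          _ = ε' * δ := by field_simp
      have : δ * ‖p‖ ≤ 2 * (ε' * δ) := by rw [← hih]; linarith
      have hfin : ‖p‖ ≤ 2 * ε' := by
        rw [mul_comm δ ‖p‖] at this
        have := le_of_mul_le_mul_right (by linarith : ‖p‖ * δ ≤ (2 * ε') * δ) hδpos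
        exact this
      exact hfin
  calc ‖ψ' z - ψ' z₀‖ ≤ 2 * ε' := hkey
    _ < ε := by rw [hε'def]; linarith

lemma riemann_key {T : ℝ} (hT : 0 < T) (x x' : ℝ → H) (F : ℝ → ℝ) (w : ℝ → H)
    (hxint : IntegrableOn x' (Set.Icc 0 T))
    (hxrep : ∀ t ∈ Set.Icc (0:ℝ) T, x t = x 0 + ∫ s in (0:ℝ)..t, x' s)
    (hw : ContinuousOn w (Set.Icc 0 T))
    (hFW : ∀ s ∈ Set.Icc (0:ℝ) T, ∀ t ∈ Set.Icc (0:ℝ) T, s ≤ t →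
      F t - F s ≤ inner ℝ (w t) (x t - x s)) :
    F T - F 0 ≤ ∫ s in (0:ℝ)..T, (inner ℝ (w s) (x' s) : ℝ) := by
  -- basic integrability facts
  have hii : ∀ a b : ℝ, a ∈ Set.Icc (0:ℝ) T → b ∈ Set.Icc (0:ℝ) T →
      IntervalIntegrable x' volume a b := by
    intro a b ha hb
    rw [intervalIntegrable_iff]
    refine hxint.mono_set (Set.uIoc_subset_uIcc.trans ?_)
    refine (Set.uIcc_subset_uIcc ?_ ?_).trans (by rw [Set.uIcc_of_le hT.le]) <;>
      rw [Set.uIcc_of_le hT.le]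
    exacts [ha, hb]
  have hxdiff : ∀ a ∈ Set.Icc (0:ℝ) T, ∀ b ∈ Set.Icc (0:ℝ) T,
      x b - x a = ∫ s in a..b, x' s := by
    intro a ha b hb
    rw [hxrep a ha, hxrep b hb]
    have h0 : (0:ℝ) ∈ Set.Icc (0:ℝ) T := ⟨le_refl _, hT.le⟩
    rw [add_sub_add_left_eq_sub]
    exact (integral_interval_sub_left (hii 0 b h0 hb) (hii 0 a h0 ha))
  -- boundedness of w and measurability
  obtain ⟨M, hMb⟩ := (isCompact_Icc (a := (0:ℝ)) (b := T)).exists_bound_of_continuousOn hw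
  have hwm : AEStronglyMeasurable w (volume.restrict (Set.Icc 0 T)) :=
    hw.aestronglyMeasurable measurableSet_Icc
  have hxm : AEStronglyMeasurable x' (volume.restrict (Set.Icc 0 T)) := hxint.1
  have hg_int : IntegrableOn (fun s => (inner ℝ (w s) (x' s) : ℝ)) (Set.Icc 0 T) := by
    refine Integrable.mono' (hxint.norm.const_mul M) (hwm.inner hxm) ?_
    filter_upwards [ae_restrict_mem measurableSet_Icc] with s hs
    calc ‖(inner ℝ (w s) (x' s) : ℝ)‖ ≤ ‖w s‖ * ‖x' s‖ := norm_inner_le_norm _ _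
      _ ≤ M * ‖x' s‖ := mul_le_mul_of_nonneg_right (hMb s hs) (norm_nonneg _)
  have hnx_int : IntegrableOn (fun s => ‖x' s‖) (Set.Icc 0 T) := hxint.norm
  -- the ε-argument
  have key : ∀ ε > 0, F T - F 0 ≤ (∫ s in (0:ℝ)..T, (inner ℝ (w s) (x' s) : ℝ)) +
      ε * ((∫ s in (0:ℝ)..T, ‖x' s‖) + 1) := by
    intro ε hε
    -- uniform continuity
    obtain ⟨δ, hδ, hucont⟩ := Metric.uniformContinuousOn_iff.1
      ((isCompact_Icc (a := (0:ℝ)) (b := T)).uniformContinuousOn_of_continuous hw) ε hε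
    obtain ⟨n, hn⟩ := exists_nat_gt (T / δ)
    have hn0 : 0 < (n:ℝ) := lt_trans (div_pos hT hδ) hn
    have hn0' : (0:ℕ) < n := by exact_mod_cast hn0
    have hmesh : T / n < δ := by
      rw [div_lt_iff₀ hn0]
      rw [div_lt_iff₀ hδ] at hn
      linarith [hn]
    set a : ℕ → ℝ := fun i => i * (T / n) with hadef
    have ha_mem : ∀ i : ℕ, i ≤ n → a i ∈ Set.Icc (0:ℝ) T := by
      intro i hi
      constructor
      · positivity
      · rw [hadef]
        calc (i:ℝ) * (T / n) ≤ n * (T / n) := by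
              apply mul_le_mul_of_nonneg_right (by exact_mod_cast hi) (by positivity)
          _ = T := by field_simp
    have haT : a n = T := by rw [hadef]; field_simp
    have ha0 : a 0 = 0 := by simp [hadef]
    -- telescoping
    have htel : F T - F 0 = ∑ i ∈ Finset.range n, (F (a (i+1)) - F (a i)) := by
      rw [Finset.sum_range_sub (fun i => F (a i))]
      rw [haT, ha0]
    rw [htel]
    -- integrand comparison on each interval
    have hstep : ∀ i ∈ Finset.range n, F (a (i+1)) - F (a i) ≤
        ∫ s in (a i)..(a (i+1)), ((inner ℝ (w s) (x' s) : ℝ) + ε * ‖x' s‖) := by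
      intro i hi
      rw [Finset.mem_range] at hi
      have hi1 : i + 1 ≤ n := hi
      have hai : a i ∈ Set.Icc (0:ℝ) T := ha_mem i (le_of_lt hi)
      have hai1 : a (i+1) ∈ Set.Icc (0:ℝ) T := ha_mem (i+1) hi1
      have hle : a i ≤ a (i+1) := by
        rw [hadef]
        apply mul_le_mul_of_nonneg_right (by exact_mod_cast Nat.le_succ i) (by positivity)
      have h1 : F (a (i+1)) - F (a i) ≤ inner ℝ (w (a (i+1))) (x (a (i+1)) - x (a i)) :=
        hFW (a i) hai (a (i+1)) hai1 hle
      have h2 : (inner ℝ (w (a (i+1))) (x (a (i+1)) - x (a i)) : ℝ) =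
          ∫ s in (a i)..(a (i+1)), (inner ℝ (w (a (i+1))) (x' s) : ℝ) := by
        rw [hxdiff (a i) hai (a (i+1)) hai1]
        exact ((innerSL ℝ (w (a (i+1)))).intervalIntegral_comp_comm
          (hii _ _ hai hai1)).symm
      have h3 : (∫ s in (a i)..(a (i+1)), (inner ℝ (w (a (i+1))) (x' s) : ℝ)) ≤
          ∫ s in (a i)..(a (i+1)), ((inner ℝ (w s) (x' s) : ℝ) + ε * ‖x' s‖) := by
        have hsub : Set.Icc (a i) (a (i+1)) ⊆ Set.Icc 0 T :=
          Set.Icc_subset_Icc hai.1 hai1.2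
        apply intervalIntegral.integral_mono_on hle
        · rw [intervalIntegrable_iff, uIoc_of_le hle]
          exact (Integrable.const_inner _ (hxint.mono_set
            (Ioc_subset_Icc_self.trans hsub)))
        · rw [intervalIntegrable_iff, uIoc_of_le hle]
          refine ((hg_int.mono_set (Ioc_subset_Icc_self.trans hsub)).add
            ((hnx_int.mono_set (Ioc_subset_Icc_self.trans hsub)).const_mul ε))
        · intro s hs
          have hsT : s ∈ Set.Icc (0:ℝ) T := hsub hs
          have hdist : dist (a (i+1)) s < δ := by
            rw [Real.dist_eq, abs_lt]
            have h5 : a (i+1) - a i = T / n := by rw [hadef]; push_cast; ring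
            constructor <;> [linarith [hs.2, hmesh, hδ]; linarith [hs.1, h5, hmesh]]
          have hwd : ‖w (a (i+1)) - w s‖ < ε := by
            have := hucont (a (i+1)) hai1 s hsT hdist
            rwa [dist_eq_norm] at this
          have : (inner ℝ (w (a (i+1))) (x' s) : ℝ) =
              inner ℝ (w s) (x' s) + inner ℝ (w (a (i+1)) - w s) (x' s) := by
            rw [← inner_add_left]; congr 1; abel
          rw [this]
          have h6 : (inner ℝ (w (a (i+1)) - w s) (x' s) : ℝ) ≤ ε * ‖x' s‖ := by
            calc (inner ℝ (w (a (i+1)) - w s) (x' s) : ℝ) ≤ ‖w (a (i+1)) - w s‖ * ‖x' s‖ :=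
                  real_inner_le_norm _ _
              _ ≤ ε * ‖x' s‖ := mul_le_mul_of_nonneg_right hwd.le (norm_nonneg _)
          linarith
      linarith [h1, h2 ▸ h3]
    calc ∑ i ∈ Finset.range n, (F (a (i+1)) - F (a i))
        ≤ ∑ i ∈ Finset.range n, ∫ s in (a i)..(a (i+1)),
            ((inner ℝ (w s) (x' s) : ℝ) + ε * ‖x' s‖) := Finset.sum_le_sum hstep
      _ = ∫ s in (a 0)..(a n), ((inner ℝ (w s) (x' s) : ℝ) + ε * ‖x' s‖) := by
          apply intervalIntegral.sum_integral_adjacent_intervals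
          intro k hk
          have hk1 : a k ∈ Set.Icc (0:ℝ) T := ha_mem k (le_of_lt hk)
          have hk2 : a (k+1) ∈ Set.Icc (0:ℝ) T := ha_mem (k+1) hk
          rw [intervalIntegrable_iff]
          have hsub2 : Set.uIoc (a k) (a (k+1)) ⊆ Set.Icc 0 T := by
            rw [uIoc_of_le (by
              rw [hadef]
              exact mul_le_mul_of_nonneg_right (by exact_mod_cast Nat.le_succ k)
                (by positivity))]
            exact Ioc_subset_Icc_self.trans (Set.Icc_subset_Icc hk1.1 hk2.2)
          exact (hg_int.mono_set hsub2).add ((hnx_int.mono_set hsub2).const_mul ε)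
      _ = (∫ s in (0:ℝ)..T, (inner ℝ (w s) (x' s) : ℝ)) +
            ε * ((∫ s in (0:ℝ)..T, ‖x' s‖)) := by
          rw [ha0, haT]
          rw [intervalIntegral.integral_add, intervalIntegral.integral_const_mul]
          · rw [intervalIntegrable_iff, uIoc_of_le hT.le]
            exact hg_int.mono_set Ioc_subset_Icc_self
          · rw [intervalIntegrable_iff, uIoc_of_le hT.le]
            exact (hnx_int.mono_set Ioc_subset_Icc_self).const_mul ε
      _ ≤ (∫ s in (0:ℝ)..T, (inner ℝ (w s) (x' s) : ℝ)) +
            ε * ((∫ s in (0:ℝ)..T, ‖x' s‖) + 1) := by nlinarith [hε]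
  -- conclude
  by_contra hcon
  push_neg at hcon
  set X := ∫ s in (0:ℝ)..T, (inner ℝ (w s) (x' s) : ℝ)
  set K := (∫ s in (0:ℝ)..T, ‖x' s‖) + 1
  have hK : 0 < K := by
    have : 0 ≤ ∫ s in (0:ℝ)..T, ‖x' s‖ :=
      intervalIntegral.integral_nonneg hT.le (fun s _ => norm_nonneg _)
    simp only [K]; linarith
  have hgap : 0 < F T - F 0 - X := by linarith
  have := key ((F T - F 0 - X) / (2 * K)) (by positivity)
  have h7 : (F T - F 0 - X) / (2 * K) * K = (F T - F 0 - X) / 2 := by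
    field_simp
  rw [h7] at this
  linarith

/-- `v` belongs to the convex subdifferential of `φ` at `x`. -/
def IsSubdiff (φ : H → EReal) (x v : H) : Prop :=
  ∀ y : H, φ x + ((inner ℝ v (y - x) : ℝ) : EReal) ≤ φ y

/-- `φ` is proper, convex and lower semicontinuous. -/
def ProperConvexLSC (φ : H → EReal) : Prop :=
  (∀ z, φ z ≠ ⊥) ∧ (∃ z, φ z ≠ ⊤) ∧ LowerSemicontinuous φ ∧
  (∀ z w : H, ∀ a b : ℝ, 0 ≤ a → 0 ≤ b → a + b = 1 →
      φ (a • z + b • w) ≤ (a : EReal) * φ z + (b : EReal) * φ w)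

/-- Standing assumptions: `φ` proper convex lsc, `ψ` convex with gradient `ψ'`,
and `φ + ψ` bounded below on `H`. -/
def Standing (φ : H → EReal) (ψ : H → ℝ) (ψ' : H → H) : Prop :=
  ProperConvexLSC φ ∧
  ConvexOn ℝ Set.univ ψ ∧ (∀ z, HasGradientAt ψ (ψ' z) z) ∧
  (∃ m : ℝ, ∀ z, (m : EReal) ≤ φ z + (ψ z : EReal))

/-- The energy gap `(φ+ψ)(x₀) - inf_H (φ+ψ)` as a real number. -/
noncomputable def Egap (φ : H → EReal) (ψ : H → ℝ) (x₀ : H) : ℝ :=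
  ((φ x₀ + (ψ x₀ : EReal)) - sInf (Set.range fun z => φ z + (ψ z : EReal))).toReal

/-- `(x, v)` is a strong (absolutely continuous) solution on `[0, T]` of
`v ∈ ∂φ(x)`, `λ ẋ + v̇ + v + ∇ψ(x) = 0` a.e., with a.e. derivatives `x'`, `v'`. -/
structure StrongSol (φ : H → EReal) (ψ' : H → H) (lam : ℝ → ℝ) (T : ℝ)
    (x v x' v' : ℝ → H) : Prop where
  subdiff : ∀ t ∈ Set.Icc (0:ℝ) T, IsSubdiff φ (x t) (v t)
  xint : IntegrableOn x' (Set.Icc 0 T)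
  vint : IntegrableOn v' (Set.Icc 0 T)
  xrep : ∀ t ∈ Set.Icc (0:ℝ) T, x t = x 0 + ∫ s in (0:ℝ)..t, x' s
  vrep : ∀ t ∈ Set.Icc (0:ℝ) T, v t = v 0 + ∫ s in (0:ℝ)..t, v' s
  xderiv : ∀ᵐ t ∂(volume.restrict (Set.Ioo 0 T)), HasDerivAt x (x' t) t
  vderiv : ∀ᵐ t ∂(volume.restrict (Set.Ioo 0 T)), HasDerivAt v (v' t) t
  eqn : ∀ᵐ t ∂(volume.restrict (Set.Ioo 0 T)),
      lam t • x' t + v' t + v t + ψ' (x t) = 0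

theorem stmt1 (φ : H → EReal) (ψ : H → ℝ) (ψ' : H → H) (hst : Standing φ ψ ψ')
    (lam : ℝ → ℝ) (T c₀ : ℝ) (hT : 0 < T) (hc₀ : 0 < c₀)
    (hlam : ∀ t ∈ Set.Icc (0:ℝ) T, c₀ ≤ lam t)
    (x v x' v' : ℝ → H) (x₀ v₀ : H) (hx0 : x 0 = x₀) (hv0 : v 0 = v₀)
    (hv₀ : IsSubdiff φ x₀ v₀)
    (sol : StrongSol φ ψ' lam T x v x' v') :
    ∫ t in (0:ℝ)..T, ‖x' t‖ ^ 2 ≤ (1 / c₀) * Egap φ ψ x₀ := by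
  obtain ⟨⟨hbot, ⟨z₀, hz₀⟩, _hlsc, _hconv⟩, hψconv, hψgrad, ⟨m, hm⟩⟩ := hst
  have hψ'c : Continuous ψ' := grad_cont hψconv hψgrad
  have h0T : (0:ℝ) ∈ Set.Icc (0:ℝ) T := ⟨le_refl _, hT.le⟩
  have hTT : T ∈ Set.Icc (0:ℝ) T := ⟨hT.le, le_refl _⟩
  -- finiteness of φ at subdifferentiability points
  have hfin : ∀ {X V : H}, IsSubdiff φ X V → φ X ≠ ⊤ := by
    intro X V hd h
    have h1 := hd z₀
    rw [h, EReal.top_add_coe] at h1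
    exact hz₀ (top_le_iff.1 h1)
  set f : ℝ → ℝ := fun t => (φ (x t)).toReal with hfdef
  have hφfin : ∀ t ∈ Set.Icc (0:ℝ) T, φ (x t) ≠ ⊤ := fun t ht => hfin (sol.subdiff t ht)
  have hφreal : ∀ t ∈ Set.Icc (0:ℝ) T, φ (x t) = ((f t : ℝ) : EReal) :=
    fun t ht => (EReal.coe_toReal (hφfin t ht) (hbot _)).symm
  -- real sandwich for φ
  have hsandφ : ∀ s ∈ Set.Icc (0:ℝ) T, ∀ t ∈ Set.Icc (0:ℝ) T,
      f t - f s ≤ inner ℝ (v t) (x t - x s) := by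
    intro s hs t ht
    have h1 := sol.subdiff t ht (x s)
    rw [hφreal t ht, hφreal s hs, ← EReal.coe_add, EReal.coe_le_coe_iff] at h1
    have h3 : (inner ℝ (v t) (x s - x t) : ℝ) = - inner ℝ (v t) (x t - x s) := by
      rw [← inner_neg_right]; congr 1; abel
    rw [h3] at h1; linarith
  set F : ℝ → ℝ := fun t => f t + ψ (x t) with hFdef
  set w : ℝ → H := fun t => v t + ψ' (x t) with hwdef
  have hFW : ∀ s ∈ Set.Icc (0:ℝ) T, ∀ t ∈ Set.Icc (0:ℝ) T, s ≤ t →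
      F t - F s ≤ inner ℝ (w t) (x t - x s) := by
    intro s hs t ht _
    have h1 := hsandφ s hs t ht
    have h2 := grad_subgrad hψconv (hψgrad (x t)) (x s)
    have h3 : (inner ℝ (ψ' (x t)) (x s - x t) : ℝ) = - inner ℝ (ψ' (x t)) (x t - x s) := by
      rw [← inner_neg_right]; congr 1; abel
    rw [h3] at h2
    have h4 : (inner ℝ (w t) (x t - x s) : ℝ) =
        inner ℝ (v t) (x t - x s) + inner ℝ (ψ' (x t)) (x t - x s) := inner_add_left _ _ _
    simp only [hFdef]
    rw [h4]; linarith
  -- monotonicity of the subdifferential along the curve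
  have hmono : ∀ s ∈ Set.Icc (0:ℝ) T, ∀ t ∈ Set.Icc (0:ℝ) T,
      0 ≤ (inner ℝ (v t - v s) (x t - x s) : ℝ) := by
    intro s hs t ht
    have h1 := hsandφ s hs t ht
    have h2 := hsandφ t ht s hs
    have h3 : (inner ℝ (v s) (x s - x t) : ℝ) = - inner ℝ (v s) (x t - x s) := by
      rw [← inner_neg_right]; congr 1; abel
    rw [h3] at h2
    have h5 : (inner ℝ (v t - v s) (x t - x s) : ℝ) =
        inner ℝ (v t) (x t - x s) - inner ℝ (v s) (x t - x s) := inner_sub_left _ _ _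
    linarith [h5 ▸ (by linarith : (0:ℝ) ≤ inner ℝ (v t) (x t - x s) - inner ℝ (v s) (x t - x s))]
  -- continuity of x and v on [0,T]
  have hxc : ContinuousOn x (Set.Icc 0 T) := by
    have h1 : ContinuousOn (fun t => x 0 + ∫ s in (0:ℝ)..t, x' s) (Set.Icc 0 T) := by
      refine continuousOn_const.add ?_
      have h2 := intervalIntegral.continuousOn_primitive_interval
        (f := x') (μ := volume) (a := (0:ℝ)) (b := T)
        (by rw [Set.uIcc_of_le hT.le]; exact sol.xint)
      rwa [Set.uIcc_of_le hT.le] at h2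
    exact h1.congr sol.xrep
  have hvc : ContinuousOn v (Set.Icc 0 T) := by
    have h1 : ContinuousOn (fun t => v 0 + ∫ s in (0:ℝ)..t, v' s) (Set.Icc 0 T) := by
      refine continuousOn_const.add ?_
      have h2 := intervalIntegral.continuousOn_primitive_interval
        (f := v') (μ := volume) (a := (0:ℝ)) (b := T)
        (by rw [Set.uIcc_of_le hT.le]; exact sol.vint)
      rwa [Set.uIcc_of_le hT.le] at h2
    exact h1.congr sol.vrep
  have hwc : ContinuousOn w (Set.Icc 0 T) := hvc.add (hψ'c.comp_continuousOn hxc)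
  -- restate a.e. facts on Icc
  have hre : volume.restrict (Set.Ioo (0:ℝ) T) = volume.restrict (Set.Icc 0 T) :=
    Measure.restrict_congr_set Ioo_ae_eq_Icc
  -- B ≥ 0 a.e.
  set B : ℝ → ℝ := fun t => inner ℝ (v' t) (x' t) with hBdef
  have hB0 : ∀ᵐ t ∂(volume.restrict (Set.Icc (0:ℝ) T)), 0 ≤ B t := by
    rw [← hre]
    filter_upwards [sol.xderiv, sol.vderiv, ae_restrict_mem measurableSet_Ioo] with t hx hv ht
    have hslopex : Tendsto (slope x t) (𝓝[>] t) (𝓝 (x' t)) :=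
      (hasDerivAt_iff_tendsto_slope.1 hx).mono_left
        (nhdsWithin_mono _ fun u hu => Set.mem_compl_singleton_iff.2 (LT.lt.ne' hu))
    have hslopev : Tendsto (slope v t) (𝓝[>] t) (𝓝 (v' t)) :=
      (hasDerivAt_iff_tendsto_slope.1 hv).mono_left
        (nhdsWithin_mono _ fun u hu => Set.mem_compl_singleton_iff.2 (LT.lt.ne' hu))
    have htend : Tendsto (fun u => (inner ℝ (slope v t u) (slope x t u) : ℝ)) (𝓝[>] t)
        (𝓝 (inner ℝ (v' t) (x' t))) := hslopev.inner hslopex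
    refine ge_of_tendsto htend ?_
    filter_upwards [Ioc_mem_nhdsGT_of_mem ⟨le_refl t, ht.2⟩] with u hu
    have htI : t ∈ Set.Icc (0:ℝ) T := ⟨ht.1.le, ht.2.le⟩
    have huI : u ∈ Set.Icc (0:ℝ) T := ⟨le_trans ht.1.le hu.1.le, hu.2⟩
    rw [slope_def_module, slope_def_module, real_inner_smul_left, real_inner_smul_right]
    have h6 := hmono t htI u huI
    have h7 : (0:ℝ) ≤ (u - t)⁻¹ := inv_nonneg.2 (by linarith [hu.1])
    exact mul_nonneg h7 (mul_nonneg h7 h6)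
  -- G (integrable majorant)
  set G : ℝ → ℝ := fun t => -(inner ℝ (w t) (x' t)) with hGdef
  obtain ⟨M, hMb⟩ := (isCompact_Icc (a := (0:ℝ)) (b := T)).exists_bound_of_continuousOn hwc
  have hwm : AEStronglyMeasurable w (volume.restrict (Set.Icc (0:ℝ) T)) :=
    hwc.aestronglyMeasurable measurableSet_Icc
  have hxm : AEStronglyMeasurable x' (volume.restrict (Set.Icc (0:ℝ) T)) := sol.xint.1
  have hvm : AEStronglyMeasurable v' (volume.restrict (Set.Icc (0:ℝ) T)) := sol.vint.1
  have hG_int : IntegrableOn G (Set.Icc 0 T) := by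
    refine Integrable.mono' (sol.xint.norm.const_mul M) ((hwm.inner hxm).neg) ?_
    filter_upwards [ae_restrict_mem measurableSet_Icc] with s hs
    rw [norm_neg]
    calc ‖(inner ℝ (w s) (x' s) : ℝ)‖ ≤ ‖w s‖ * ‖x' s‖ := norm_inner_le_norm _ _
      _ ≤ M * ‖x' s‖ := mul_le_mul_of_nonneg_right (hMb s hs) (norm_nonneg _)
  set A : ℝ → ℝ := fun t => G t - B t with hAdef
  have hAeq : ∀ᵐ t ∂(volume.restrict (Set.Icc (0:ℝ) T)), A t = lam t * ‖x' t‖^2 := by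
    rw [← hre]
    filter_upwards [sol.eqn] with t ht
    have h8 := congrArg (fun z : H => (inner ℝ z (x' t) : ℝ)) ht
    simp only [inner_add_left, real_inner_smul_left, inner_zero_left] at h8
    have h9 : (inner ℝ (w t) (x' t) : ℝ) = inner ℝ (v t) (x' t) + inner ℝ (ψ' (x t)) (x' t) :=
      inner_add_left _ _ _
    have h10 : (inner ℝ (x' t) (x' t) : ℝ) = ‖x' t‖^2 := real_inner_self_eq_norm_sq _
    simp only [hAdef, hGdef, hBdef, h9]
    rw [← h10]; linarith
  have hA_lb : ∀ᵐ t ∂(volume.restrict (Set.Icc (0:ℝ) T)), c₀ * ‖x' t‖^2 ≤ A t := by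
    filter_upwards [hAeq, ae_restrict_mem measurableSet_Icc] with t hA ht
    rw [hA]
    exact mul_le_mul_of_nonneg_right (hlam t ht) (sq_nonneg _)
  have hB_int : IntegrableOn B (Set.Icc 0 T) := by
    refine Integrable.mono' hG_int.norm (hvm.inner hxm) ?_
    filter_upwards [hB0, hAeq, hA_lb] with t h0 hA hlb
    rw [Real.norm_eq_abs, abs_of_nonneg h0]
    have h11 : 0 ≤ A t := le_trans (by positivity) hlb
    have h12 : B t ≤ G t := by simp only [hAdef] at h11; linarith
    exact h12.trans (le_abs_self _)
  have hA_int : IntegrableOn A (Set.Icc 0 T) := hG_int.sub hB_int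
  set S : ℝ → ℝ := fun t => ‖x' t‖^2 with hSdef
  have hSm : AEStronglyMeasurable S (volume.restrict (Set.Icc (0:ℝ) T)) := by
    have h13 : AEStronglyMeasurable (fun t => ‖x' t‖ * ‖x' t‖)
        (volume.restrict (Set.Icc (0:ℝ) T)) := hxm.norm.mul hxm.norm
    refine h13.congr (Eventually.of_forall fun t => ?_)
    simp [hSdef, sq]
  have hS_int : IntegrableOn S (Set.Icc 0 T) := by
    refine Integrable.mono' (hA_int.const_mul (1/c₀)) hSm ?_
    filter_upwards [hA_lb] with t hlb
    rw [Real.norm_eq_abs, abs_of_nonneg (sq_nonneg _)]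
    calc ‖x' t‖^2 = 1/c₀ * (c₀ * ‖x' t‖^2) := by field_simp
      _ ≤ 1/c₀ * A t := mul_le_mul_of_nonneg_left hlb (by positivity)
  -- integral chain
  have hIB : 0 ≤ ∫ t in Set.Icc (0:ℝ) T, B t := integral_nonneg_of_ae hB0
  have hIA : ∫ t in Set.Icc (0:ℝ) T, A t =
      (∫ t in Set.Icc (0:ℝ) T, G t) - ∫ t in Set.Icc (0:ℝ) T, B t := by
    simp only [hAdef]; exact integral_sub hG_int hB_int
  have hc₀S : c₀ * ∫ t in Set.Icc (0:ℝ) T, S t ≤ ∫ t in Set.Icc (0:ℝ) T, A t := by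
    have h1 : ∫ t in Set.Icc (0:ℝ) T, c₀ * S t ≤ ∫ t in Set.Icc (0:ℝ) T, A t :=
      integral_mono_ae (hS_int.const_mul c₀) hA_int hA_lb
    rwa [MeasureTheory.integral_const_mul] at h1
  have hR := riemann_key hT x x' F w sol.xint sol.xrep hwc hFW
  have hIcc_Ioc : ∀ g : ℝ → ℝ, (∫ s in (0:ℝ)..T, g s) = ∫ t in Set.Icc (0:ℝ) T, g t := by
    intro g
    rw [intervalIntegral.integral_of_le hT.le, ← integral_Icc_eq_integral_Ioc]
  have hIG : ∫ t in Set.Icc (0:ℝ) T, G t =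
      - ∫ t in Set.Icc (0:ℝ) T, (inner ℝ (w t) (x' t) : ℝ) := by
    simp only [hGdef]; exact integral_neg _
  have hchain : c₀ * ∫ t in Set.Icc (0:ℝ) T, S t ≤ F 0 - F T := by
    have h2 : F T - F 0 ≤ ∫ t in Set.Icc (0:ℝ) T, (inner ℝ (w t) (x' t) : ℝ) := by
      rw [← hIcc_Ioc (fun s => inner ℝ (w s) (x' s))]; exact hR
    calc c₀ * ∫ t in Set.Icc (0:ℝ) T, S t ≤ ∫ t in Set.Icc (0:ℝ) T, A t := hc₀S
      _ = (∫ t in Set.Icc (0:ℝ) T, G t) - ∫ t in Set.Icc (0:ℝ) T, B t := hIA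
      _ ≤ ∫ t in Set.Icc (0:ℝ) T, G t := by linarith
      _ = - ∫ t in Set.Icc (0:ℝ) T, (inner ℝ (w t) (x' t) : ℝ) := hIG
      _ ≤ F 0 - F T := by linarith
  -- Egap arithmetic
  set I : EReal := sInf (Set.range fun z => φ z + (ψ z : EReal)) with hIdef
  have hET : φ (x T) + (ψ (x T) : EReal) = ((f T + ψ (x T) : ℝ) : EReal) := by
    rw [hφreal T hTT, ← EReal.coe_add]
  have hITle : I ≤ φ (x T) + (ψ (x T) : EReal) := sInf_le ⟨x T, rfl⟩
  have hImle : (m : EReal) ≤ I := le_sInf (by rintro b ⟨z, rfl⟩; exact hm z)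
  have hIbot : I ≠ ⊥ := by
    intro h
    rw [h, le_bot_iff] at hImle
    exact EReal.coe_ne_bot m hImle
  have hItop : I ≠ ⊤ := by
    intro h
    rw [h, top_le_iff, hET] at hITle
    exact EReal.coe_ne_top _ hITle
  have hφ0 : φ x₀ ≠ ⊤ := hfin hv₀
  have hE0 : φ x₀ + (ψ x₀ : EReal) = (((φ x₀).toReal + ψ x₀ : ℝ) : EReal) := by
    rw [← EReal.coe_toReal hφ0 (hbot x₀), ← EReal.coe_add, EReal.toReal_coe]
  have hEgap : Egap φ ψ x₀ = ((φ x₀).toReal + ψ x₀) - I.toReal := by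
    rw [Egap, ← hIdef, EReal.toReal_sub (by rw [hE0]; exact EReal.coe_ne_top _)
      (by rw [hE0]; exact EReal.coe_ne_bot _) hItop hIbot, hE0, EReal.toReal_coe]
  have hF0 : F 0 = (φ x₀).toReal + ψ x₀ := by simp only [hFdef, hfdef, hx0]
  have hFT : I.toReal ≤ F T := by
    have h3 := EReal.toReal_le_toReal hITle hIbot (by rw [hET]; exact EReal.coe_ne_top _)
    rwa [hET, EReal.toReal_coe] at h3
  have hgap : F 0 - F T ≤ Egap φ ψ x₀ := by rw [hEgap, hF0]; linarith
  -- finish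
  have hfinal : (∫ t in Set.Icc (0:ℝ) T, S t) ≤ 1 / c₀ * Egap φ ψ x₀ := by
    rw [one_div, inv_mul_eq_div, le_div_iff₀ hc₀, mul_comm]
    linarith
  calc ∫ t in (0:ℝ)..T, ‖x' t‖ ^ 2 = ∫ t in Set.Icc (0:ℝ) T, S t := by
        rw [hIcc_Ioc (fun t => ‖x' t‖ ^ 2)]
    _ ≤ 1 / c₀ * Egap φ ψ x₀ := hfinal
end

section
/- Let (x,v) be a strong solution on [0,T] of v ∈ ∂φ(x), λẋ + v̇ + v + ∇ψ(x) = 0 a.e. with λ ≥ c₀ > 0, and suppose ∇ψ is globally L_ψ-Lipschitz. Then ∫₀ᵀ ‖v̇(t)‖² dt ≤ ‖v₀‖² + 2T‖∇ψ(x₀)‖² + (2T²L_ψ²/c₀)·((φ+ψ)(x₀) − inf_H (φ+ψ)). -/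
open MeasureTheory Set Filter intervalIntegral
open scoped Topology

variable {H : Type*} [NormedAddCommGroup H] [InnerProductSpace ℝ H] [CompleteSpace H]

-- gradient inequality for convex functions
lemma convex_grad_ineq (ψ : H → ℝ) (ψ' : H → H) (hconv : ConvexOn ℝ Set.univ ψ)
    (hgrad : ∀ z, HasGradientAt ψ (ψ' z) z) (a b : H) :
    ψ b - ψ a ≤ inner ℝ (ψ' b) (b - a) := by
  -- suffices: inner ℝ (ψ' a) (b - a) ≤ ψ b - ψ a  for all a b, then swap
  suffices h : ∀ a b : H, (inner ℝ (ψ' a) (b - a) : ℝ) ≤ ψ b - ψ a by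
    have := h b a
    have h2 : (inner ℝ (ψ' b) (a - b) : ℝ) = - inner ℝ (ψ' b) (b - a) := by
      rw [← inner_neg_right]; rw [neg_sub]
    linarith [this, h2 ▸ this]
  intro a b
  set d := b - a with hd
  set g : ℝ → ℝ := fun θ => ψ (a + θ • d) with hg
  have hderiv : HasDerivAt g (inner ℝ (ψ' a) d) 0 := by
    have h1 : HasFDerivAt ψ ((InnerProductSpace.toDual ℝ H) (ψ' a)) a := (hgrad a).hasFDerivAt
    have h2 : HasDerivAt (fun θ : ℝ => a + θ • d) d 0 := by
      simpa using ((hasDerivAt_id (0:ℝ)).smul_const d).const_add a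
    have h1' : HasFDerivAt ψ ((InnerProductSpace.toDual ℝ H) (ψ' a)) (a + (0:ℝ) • d) := by
      simpa using h1
    have := h1'.comp_hasDerivAt (x := (0:ℝ)) h2
    simpa [g, Function.comp_def] using this
  have hslope : Tendsto (fun θ : ℝ => θ⁻¹ * (g θ - g 0)) (𝓝[>] 0) (𝓝 (inner ℝ (ψ' a) d)) := by
    have := hasDerivAt_iff_tendsto_slope.1 hderiv
    refine (this.mono_left (nhdsWithin_mono _ ?_)).congr ?_
    · intro x hx; exact ne_of_gt hx
    · intro θ; simp [slope_def_field, div_eq_inv_mul, g]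
  have hbound : ∀ᶠ θ in 𝓝[>] (0:ℝ), θ⁻¹ * (g θ - g 0) ≤ ψ b - ψ a := by
    filter_upwards [Ioo_mem_nhdsGT_of_mem (by norm_num : (0:ℝ) ∈ Ico 0 1)] with θ hθ
    obtain ⟨h0, h1⟩ := hθ
    have hcvx := hconv.2 (mem_univ a) (mem_univ b) (by linarith : (0:ℝ) ≤ 1 - θ) h0.le (by ring)
    have : a + θ • d = (1 - θ) • a + θ • b := by
      simp [hd, smul_sub]; module
    rw [inv_mul_le_iff₀ h0]
    have := this ▸ hcvx
    simp only [g, smul_eq_mul] at this ⊢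
    have h00 : a + (0:ℝ) • d = a := by simp
    rw [h00]
    nlinarith [this]
  exact le_of_tendsto hslope hbound

lemma sq_integral_le {t : ℝ} (ht : 0 < t) (f : ℝ → ℝ)
    (h1 : IntervalIntegrable f volume 0 t)
    (h2 : IntervalIntegrable (fun s => f s ^ 2) volume 0 t) :
    (∫ s in (0:ℝ)..t, f s) ^ 2 ≤ t * ∫ s in (0:ℝ)..t, f s ^ 2 := by
  set c : ℝ := (∫ s in (0:ℝ)..t, f s) / t with hc
  have key : (0:ℝ) ≤ ∫ s in (0:ℝ)..t, (f s - c) ^ 2 :=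
    intervalIntegral.integral_nonneg ht.le (fun u _ => sq_nonneg _)
  have expand : ∫ s in (0:ℝ)..t, (f s - c) ^ 2
      = (∫ s in (0:ℝ)..t, f s ^ 2) - 2 * c * (∫ s in (0:ℝ)..t, f s) + c ^ 2 * t := by
    have : ∀ s, (f s - c) ^ 2 = f s ^ 2 - (2*c) * f s + c ^ 2 := by intro s; ring
    rw [intervalIntegral.integral_congr (g := fun s => f s ^ 2 - (2*c) * f s + c ^ 2)
      (fun s _ => this s)]
    rw [intervalIntegral.integral_add (h2.sub (h1.const_mul (2*c))) intervalIntegrable_const,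
      intervalIntegral.integral_sub h2 (h1.const_mul (2*c)),
      intervalIntegral.integral_const_mul, intervalIntegral.integral_const]
    simp [smul_eq_mul]; ring
  rw [expand] at key
  have : c * t = ∫ s in (0:ℝ)..t, f s := by rw [hc]; field_simp
  nlinarith [key, this]

lemma key_telescope {T : ℝ} (hT : 0 < T) (w : ℝ → H) (hw : Continuous w)
    (u' : ℝ → H) (hu' : Integrable u' volume) (F : ℝ → ℝ)
    (hF : ∀ s ∈ Icc (0:ℝ) T, ∀ t ∈ Icc (0:ℝ) T, s ≤ t →
      F t - F s ≤ inner ℝ (w t) (∫ r in s..t, u' r)) :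
    F T - F 0 ≤ ∫ t in Ioc (0:ℝ) T, (inner ℝ (w t) (u' t) : ℝ) := by
  borelize H
  -- the step map
  set τ : ℕ → ℝ → ℝ := fun N r => ((⌊r * N / T⌋ + 1 : ℤ) : ℝ) * (T / N) with hτdef
  set g : ℕ → ℝ → ℝ := fun N r => (inner ℝ (w (τ N r)) (u' r) : ℝ) with hgdef
  -- bound for w on [0, 2T]
  obtain ⟨M, hM⟩ : ∃ M : ℝ, ∀ y ∈ Icc (0:ℝ) (2*T), ‖w y‖ ≤ M := by
    obtain ⟨M, hM⟩ := (isCompact_Icc (a := (0:ℝ)) (b := 2*T)).exists_bound_of_continuousOn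
      hw.continuousOn
    exact ⟨M, hM⟩
  have hM0 : 0 ≤ M := le_trans (norm_nonneg _) (hM 0 ⟨le_refl _, by linarith⟩)
  -- basic facts about τ for N ≥ 1
  have hτmem : ∀ N : ℕ, 1 ≤ N → ∀ r ∈ Ioc (0:ℝ) T, r < τ N r ∧ τ N r ≤ r + T / N := by
    intro N hN r hr
    have hNpos : (0:ℝ) < N := by exact_mod_cast hN
    have hTN : (0:ℝ) < T / N := div_pos hT hNpos
    constructor
    · have h1 : r * N / T < (⌊r * N / T⌋ : ℝ) + 1 := Int.lt_floor_add_one _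
      have h2 : r = (r * N / T) * (T / N) := by field_simp
      calc r = (r * N / T) * (T / N) := h2
        _ < ((⌊r * N / T⌋ : ℝ) + 1) * (T / N) := by
            exact mul_lt_mul_of_pos_right h1 hTN
        _ = ((⌊r * N / T⌋ + 1 : ℤ) : ℝ) * (T / N) := by push_cast; ring
    · have h1 : (⌊r * N / T⌋ : ℝ) ≤ r * N / T := Int.floor_le _
      have : ((⌊r * N / T⌋ : ℝ) + 1) * (T / N) ≤ (r * N / T + 1) * (T / N) := by
        apply mul_le_mul_of_nonneg_right _ hTN.le; linarith
      calc ((⌊r * N / T⌋ + 1 : ℤ) : ℝ) * (T / N) ≤ (r * N / T + 1) * (T / N) := by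
            push_cast; exact this
        _ = r + T / N := by field_simp
  have hτIcc : ∀ N : ℕ, 1 ≤ N → ∀ r ∈ Ioc (0:ℝ) T, τ N r ∈ Icc (0:ℝ) (2*T) := by
    intro N hN r hr
    obtain ⟨h1, h2⟩ := hτmem N hN r hr
    have hNpos : (1:ℝ) ≤ N := by exact_mod_cast hN
    have : T / N ≤ T := by
      rw [div_le_iff₀ (by linarith)]; nlinarith
    exact ⟨by linarith [hr.1], by linarith [hr.2]⟩
  -- value of τ on subintervals
  have hτval : ∀ N : ℕ, 1 ≤ N → ∀ i : ℕ, ∀ r : ℝ,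
      (i : ℝ) * (T / N) ≤ r → r < ((i : ℝ) + 1) * (T / N) → τ N r = ((i : ℝ) + 1) * (T / N) := by
    intro N hN i r h1 h2
    have hNpos : (0:ℝ) < N := by exact_mod_cast hN
    have hTN : (0:ℝ) < T / N := div_pos hT hNpos
    have hfloor : ⌊r * N / T⌋ = (i : ℤ) := by
      rw [Int.floor_eq_iff]
      constructor
      · push_cast
        rw [le_div_iff₀ hT]
        calc (i:ℝ) * T = (i:ℝ) * (T/N) * N := by field_simp
          _ ≤ r * N := by apply mul_le_mul_of_nonneg_right h1 hNpos.le
      · push_cast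
        rw [div_lt_iff₀ hT]
        calc r * N < ((i:ℝ)+1) * (T/N) * N := by apply mul_lt_mul_of_pos_right h2 hNpos
          _ = ((i:ℝ)+1) * T := by field_simp
    simp only [hτdef, hfloor]
    push_cast
    ring
  -- measurability of w ∘ τ N
  have hwmeas : ∀ N : ℕ, AEStronglyMeasurable (fun r => w (τ N r))
      (volume.restrict (Ioc (0:ℝ) T)) := by
    intro N
    have hτmeas : Measurable (τ N) := by
      have h1 : Measurable fun r : ℝ => ⌊r * N / T⌋ :=
        ((measurable_id.mul_const (N:ℝ)).div_const T).floor
      exact (measurable_from_top (f := fun k : ℤ => ((k + 1 : ℤ) : ℝ) * (T / N))).comp h1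
    have hmeas : Measurable fun r => w (τ N r) := hw.measurable.comp hτmeas
    refine (stronglyMeasurable_iff_measurable_separable.2 ⟨hmeas, ?_⟩).aestronglyMeasurable
    have hsub : range (fun r => w (τ N r)) ⊆
        w '' (range fun k : ℤ => ((k + 1 : ℤ) : ℝ) * (T / N)) := by
      rintro - ⟨r, rfl⟩
      exact mem_image_of_mem w ⟨⌊r * N / T⌋, rfl⟩
    exact (((countable_range _).image w).isSeparable).mono hsub
  -- integrability of g N
  have hgint : ∀ N : ℕ, 1 ≤ N → IntegrableOn (g N) (Ioc (0:ℝ) T) := by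
    intro N hN
    have hmeas : AEStronglyMeasurable (g N) (volume.restrict (Ioc (0:ℝ) T)) :=
      (hwmeas N).inner hu'.aestronglyMeasurable.restrict
    refine Integrable.mono' ((hu'.norm.const_mul M).restrict) hmeas ?_
    rw [ae_restrict_iff' measurableSet_Ioc]
    filter_upwards with r hr
    calc ‖g N r‖ ≤ ‖w (τ N r)‖ * ‖u' r‖ := norm_inner_le_norm _ _
      _ ≤ M * ‖u' r‖ :=
        mul_le_mul_of_nonneg_right (hM _ (hτIcc N hN r hr)) (norm_nonneg _)
  -- main step estimate for fixed N
  have hmain : ∀ N : ℕ, 1 ≤ N → F T - F 0 ≤ ∫ r in Ioc (0:ℝ) T, g N r := by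
    intro N hN
    have hNR : (0:ℝ) < N := by exact_mod_cast hN
    set δ := T / N with hδdef
    have hδ : 0 < δ := div_pos hT hNR
    have hNδ : (N:ℝ) * δ = T := by rw [hδdef]; field_simp
    have hmem : ∀ i : ℕ, i ≤ N → (i:ℝ) * δ ∈ Icc (0:ℝ) T := by
      intro i hi
      refine ⟨by positivity, ?_⟩
      rw [← hNδ]
      apply mul_le_mul_of_nonneg_right _ hδ.le
      exact_mod_cast hi
    have hpt : ∀ i : ℕ, i < N →
        F (((i:ℝ)+1) * δ) - F ((i:ℝ) * δ) ≤ ∫ r in ((i:ℝ)*δ)..(((i:ℝ)+1)*δ), g N r := by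
      intro i hi
      have hm1 : (i:ℝ) * δ ∈ Icc (0:ℝ) T := hmem i hi.le
      have hm2 : ((i:ℝ)+1) * δ ∈ Icc (0:ℝ) T := by
        have := hmem (i+1) hi
        push_cast at this
        exact this
      have hle : (i:ℝ) * δ ≤ ((i:ℝ)+1) * δ := by nlinarith
      have h1 := hF _ hm1 _ hm2 hle
      have h2 : (inner ℝ (w (((i:ℝ)+1)*δ)) (∫ r in ((i:ℝ)*δ)..(((i:ℝ)+1)*δ), u' r) : ℝ)
          = ∫ r in Ioc ((i:ℝ)*δ) (((i:ℝ)+1)*δ), (inner ℝ (w (((i:ℝ)+1)*δ)) (u' r) : ℝ) := by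
        rw [intervalIntegral.integral_of_le hle]
        exact (integral_inner hu'.restrict _).symm
      have h3 : ∫ r in Ioc ((i:ℝ)*δ) (((i:ℝ)+1)*δ), (inner ℝ (w (((i:ℝ)+1)*δ)) (u' r) : ℝ)
          = ∫ r in Ioc ((i:ℝ)*δ) (((i:ℝ)+1)*δ), g N r := by
        apply MeasureTheory.integral_congr_ae
        rw [Filter.EventuallyEq, ae_restrict_iff' measurableSet_Ioc]
        have hne : ∀ᵐ r : ℝ, r ≠ ((i:ℝ)+1)*δ :=
          ae_iff.2 (by
            have : {a : ℝ | ¬a ≠ ((i:ℝ)+1)*δ} = {((i:ℝ)+1)*δ} := by ext a; simp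
            rw [this]
            exact Real.volume_singleton)
        filter_upwards [hne] with r hrne hr
        have : τ N r = ((i:ℝ)+1) * δ :=
          hτval N hN i r hr.1.le (lt_of_le_of_ne hr.2 hrne)
        simp only [hgdef, this]
      rw [intervalIntegral.integral_of_le hle]
      calc F (((i:ℝ)+1) * δ) - F ((i:ℝ) * δ) ≤ _ := h1
        _ = ∫ r in Ioc ((i:ℝ)*δ) (((i:ℝ)+1)*δ), g N r := by rw [h2, h3]
    -- telescoping sum
    have tele : F T - F 0 = ∑ i ∈ Finset.range N, (F (((i:ℝ)+1) * δ) - F ((i:ℝ) * δ)) := by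
      have h := Finset.sum_range_sub (f := fun i : ℕ => F ((i:ℝ) * δ)) N
      simp only [Nat.cast_zero, zero_mul, Nat.cast_add, Nat.cast_one] at h
      rw [hNδ] at h
      exact h.symm
    have hii : ∀ k : ℕ, k < N → IntervalIntegrable (g N) volume ((k:ℝ)*δ) (((k:ℝ)+1)*δ) := by
      intro k hk
      rw [intervalIntegrable_iff]
      apply (hgint N hN).mono_set
      rw [uIoc_of_le (by nlinarith)]
      apply Ioc_subset_Ioc
      · positivity
      · exact (hmem (k+1) hk).2.trans_eq' (by push_cast; ring)
    have hii' : ∀ k : ℕ, k < N →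
        IntervalIntegrable (g N) volume (((k:ℕ):ℝ)*δ) (((k+1:ℕ):ℝ)*δ) := by
      intro k hk
      have := hii k hk
      convert this using 2
      push_cast
      ring
    have hsum : ∑ i ∈ Finset.range N, ∫ r in ((i:ℝ)*δ)..(((i:ℝ)+1)*δ), g N r
        = ∫ r in (((0:ℕ):ℝ)*δ)..(((N:ℕ):ℝ)*δ), g N r := by
      rw [← intervalIntegral.sum_integral_adjacent_intervals
        (a := fun i : ℕ => (i:ℝ) * δ) (μ := volume) (f := g N) (n := N) hii']
      apply Finset.sum_congr rfl
      intro i _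
      congr 1
      push_cast
      ring
    calc F T - F 0 = _ := tele
      _ ≤ ∑ i ∈ Finset.range N, ∫ r in ((i:ℝ)*δ)..(((i:ℝ)+1)*δ), g N r :=
        Finset.sum_le_sum fun i hi => hpt i (Finset.mem_range.1 hi)
      _ = ∫ r in (((0:ℕ):ℝ)*δ)..(((N:ℕ):ℝ)*δ), g N r := hsum
      _ = ∫ r in Ioc (0:ℝ) T, g N r := by
        norm_num
        rw [hNδ, intervalIntegral.integral_of_le hT.le]
  -- limit
  have hconv : Tendsto (fun n : ℕ => ∫ r in Ioc (0:ℝ) T, g (n+1) r) atTop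
      (𝓝 (∫ r in Ioc (0:ℝ) T, (inner ℝ (w r) (u' r) : ℝ))) := by
    apply tendsto_integral_of_dominated_convergence (fun r => M * ‖u' r‖)
    · intro n
      exact (hwmeas (n+1)).inner hu'.aestronglyMeasurable.restrict
    · exact (hu'.norm.const_mul M).restrict
    · intro n
      rw [ae_restrict_iff' measurableSet_Ioc]
      filter_upwards with r hr
      calc ‖g (n+1) r‖ ≤ ‖w (τ (n+1) r)‖ * ‖u' r‖ := norm_inner_le_norm _ _
        _ ≤ M * ‖u' r‖ :=
          mul_le_mul_of_nonneg_right (hM _ (hτIcc (n+1) (by omega) r hr)) (norm_nonneg _)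
    · rw [ae_restrict_iff' measurableSet_Ioc]
      filter_upwards with r hr
      have hτlim : Tendsto (fun n : ℕ => τ (n+1) r) atTop (𝓝 r) := by
        have hup : Tendsto (fun n : ℕ => r + T / ((n:ℝ)+1)) atTop (𝓝 r) := by
          have h0 : Tendsto (fun n : ℕ => T / ((n:ℝ)+1)) atTop (𝓝 0) := by
            apply Tendsto.div_atTop (tendsto_const_nhds (x := T))
            exact tendsto_atTop_add_const_right _ _ tendsto_natCast_atTop_atTop
          simpa using tendsto_const_nhds.add h0
        apply tendsto_of_tendsto_of_tendsto_of_le_of_le tendsto_const_nhds hup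
        · intro n; exact (hτmem (n+1) (by omega) r hr).1.le
        · intro n
          have := (hτmem (n+1) (by omega) r hr).2
          convert this using 2
          rfl
          push_cast
          ring
      have : Tendsto (fun n : ℕ => w (τ (n+1) r)) atTop (𝓝 (w r)) :=
        (hw.tendsto r).comp hτlim
      exact this.inner tendsto_const_nhds
  exact ge_of_tendsto hconv (Eventually.of_forall fun n => hmain (n+1) (by omega))



lemma subdiff_fin {φ : H → EReal} {a b : H} (hφbot : ∀ z, φ z ≠ ⊥) {z₀ : H} (hz₀ : φ z₀ ≠ ⊤)
    (h : IsSubdiff φ a b) : φ a = ((φ a).toReal : EReal) := by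
  have hne : φ a ≠ ⊤ := by
    intro htop
    have := h z₀
    rw [htop] at this
    rw [EReal.top_add_of_ne_bot (by simp)] at this
    exact hz₀ (top_le_iff.1 this)
  exact (EReal.coe_toReal hne (hφbot a)).symm

lemma subdiff_ineq_real {φ : H → EReal} {a b c d : H} (hφbot : ∀ z, φ z ≠ ⊥) {z₀ : H}
    (hz₀ : φ z₀ ≠ ⊤) (hab : IsSubdiff φ a b) (hcd : IsSubdiff φ c d) :
    (φ a).toReal + (inner ℝ b (c - a) : ℝ) ≤ (φ c).toReal := by
  have h := hab c
  rw [subdiff_fin hφbot hz₀ hab, subdiff_fin hφbot hz₀ hcd, ← EReal.coe_add,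
    EReal.coe_le_coe_iff] at h
  exact h

lemma subdiff_mono {φ : H → EReal} {a b c d : H} (hφbot : ∀ z, φ z ≠ ⊥) {z₀ : H}
    (hz₀ : φ z₀ ≠ ⊤) (hab : IsSubdiff φ a b) (hcd : IsSubdiff φ c d) :
    0 ≤ (inner ℝ (a - c) (b - d) : ℝ) := by
  have h1 := subdiff_ineq_real hφbot hz₀ hab hcd
  have h2 := subdiff_ineq_real hφbot hz₀ hcd hab
  have : (inner ℝ b (c - a) : ℝ) + inner ℝ d (a - c) ≤ 0 := by linarith
  have hr : (inner ℝ (a - c) (b - d) : ℝ) = -(inner ℝ b (c - a) + inner ℝ d (a - c) : ℝ) := by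
    have e0 : (inner ℝ (a - c) (b - d) : ℝ)
        = inner ℝ a b - inner ℝ a d - inner ℝ c b + inner ℝ c d := by
      simp only [inner_sub_left, inner_sub_right]; ring
    have e1 : (inner ℝ b (c - a) : ℝ) = inner ℝ b c - inner ℝ b a := inner_sub_right _ _ _
    have e2 : (inner ℝ d (a - c) : ℝ) = inner ℝ d a - inner ℝ d c := inner_sub_right _ _ _
    rw [e0, e1, e2, real_inner_comm b c, real_inner_comm b a, real_inner_comm d a,
      real_inner_comm d c]
    ring
  rw [hr]
  linarith

lemma subdiff_inner_deriv_nonneg {T : ℝ} {φ : H → EReal} {x v : ℝ → H} {x't v't : H} {t : ℝ}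
    (ht : t ∈ Ioo (0:ℝ) T)
    (hsub : ∀ s ∈ Icc (0:ℝ) T, IsSubdiff φ (x s) (v s))
    (hφbot : ∀ z, φ z ≠ ⊥) {z₀ : H} (hz₀ : φ z₀ ≠ ⊤)
    (hx : HasDerivAt x x't t) (hv : HasDerivAt v v't t) :
    0 ≤ (inner ℝ x't v't : ℝ) := by
  have hxs := hasDerivAt_iff_tendsto_slope.1 hx
  have hvs := hasDerivAt_iff_tendsto_slope.1 hv
  have hlim : Tendsto (fun s => (inner ℝ (slope x t s) (slope v t s) : ℝ)) (𝓝[≠] t)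
      (𝓝 (inner ℝ x't v't)) := hxs.inner hvs
  refine ge_of_tendsto hlim ?_
  have hIoo : Ioo (0:ℝ) T ∈ 𝓝[≠] t :=
    nhdsWithin_le_nhds (isOpen_Ioo.mem_nhds ht)
  filter_upwards [hIoo, self_mem_nhdsWithin] with s hs hst
  have hst' : s ≠ t := hst
  have hmono := subdiff_mono hφbot hz₀ (hsub s (Ioo_subset_Icc_self hs))
    (hsub t (Ioo_subset_Icc_self ht))
  have : (inner ℝ (slope x t s) (slope v t s) : ℝ)
      = ((s - t)⁻¹ * (s - t)⁻¹) * inner ℝ (x s - x t) (v s - v t) := by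
    simp only [slope_def_module]
    rw [real_inner_smul_left, real_inner_smul_right]
    ring
  rw [this]
  apply mul_nonneg
  · exact mul_self_nonneg _
  · exact hmono

set_option maxHeartbeats 2000000 in
theorem stmt3 (φ : H → EReal) (ψ : H → ℝ) (ψ' : H → H) (hst : Standing φ ψ ψ')
    (lam : ℝ → ℝ) (T c₀ : ℝ) (hT : 0 < T) (hc₀ : 0 < c₀)
    (hlam : ∀ t ∈ Set.Icc (0:ℝ) T, c₀ ≤ lam t)
    (x v x' v' : ℝ → H) (x₀ v₀ : H) (hx0 : x 0 = x₀) (hv0 : v 0 = v₀)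
    (hv₀ : IsSubdiff φ x₀ v₀)
    (sol : StrongSol φ ψ' lam T x v x' v')
    (Lψ : ℝ) (hLψ : 0 ≤ Lψ)
    (hlip : ∀ a b : H, ‖ψ' a - ψ' b‖ ≤ Lψ * ‖a - b‖) :
    ∫ t in (0:ℝ)..T, ‖v' t‖ ^ 2 ≤
      ‖v₀‖ ^ 2 + 2 * T * ‖ψ' x₀‖ ^ 2 + (2 * T ^ 2 * Lψ ^ 2 / c₀) * Egap φ ψ x₀ := by
  classical
  borelize H
  obtain ⟨⟨hφbot, ⟨z₀, hz₀⟩, _hlsc, _hφcvx⟩, hψconv, hψgrad, m, hm⟩ := hst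
  have hresIoc : volume.restrict (Ioc (0:ℝ) T) = volume.restrict (Ioo (0:ℝ) T) :=
    (Measure.restrict_congr_set Ioo_ae_eq_Ioc).symm
  have hresIcc : volume.restrict (Icc (0:ℝ) T) = volume.restrict (Ioo (0:ℝ) T) :=
    (Measure.restrict_congr_set Ioo_ae_eq_Icc).symm
  have hfinμ : IsFiniteMeasure (volume.restrict (Ioo (0:ℝ) T)) := by
    constructor
    rw [Measure.restrict_apply_univ, Real.volume_Ioo]
    exact ENNReal.ofReal_lt_top
  have hx0Icc : (0:ℝ) ∈ Icc (0:ℝ) T := ⟨le_refl _, hT.le⟩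
  have hTIcc : T ∈ Icc (0:ℝ) T := ⟨hT.le, le_refl _⟩
  -- ψ' is continuous
  have hψ'cont : Continuous ψ' := by
    refine (LipschitzWith.of_dist_le_mul (K := Real.toNNReal Lψ) ?_).continuous
    intro a b
    rw [dist_eq_norm, dist_eq_norm, Real.coe_toNNReal _ hLψ]
    exact hlip a b
  -- global integrable versions of x', v' and continuous versions of x, v
  set x'i : ℝ → H := (Icc (0:ℝ) T).indicator x' with hx'idef
  set v'i : ℝ → H := (Icc (0:ℝ) T).indicator v' with hv'idef
  have hx'iInt : Integrable x'i volume := by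
    rw [hx'idef, integrable_indicator_iff measurableSet_Icc]; exact sol.xint
  have hv'iInt : Integrable v'i volume := by
    rw [hv'idef, integrable_indicator_iff measurableSet_Icc]; exact sol.vint
  set X : ℝ → H := fun t => x₀ + ∫ s in (0:ℝ)..t, x'i s with hXdef
  set V : ℝ → H := fun t => v₀ + ∫ s in (0:ℝ)..t, v'i s with hVdef
  have hXcont : Continuous X := continuous_const.add (hx'iInt.continuous_primitive 0)
  have hVcont : Continuous V := continuous_const.add (hv'iInt.continuous_primitive 0)
  have hXeq : ∀ t ∈ Icc (0:ℝ) T, X t = x t := by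
    intro t ht
    rw [sol.xrep t ht, hx0, hXdef]
    simp only
    congr 1
    apply intervalIntegral.integral_congr
    intro s hs
    rw [uIcc_of_le ht.1] at hs
    exact indicator_of_mem (Set.mem_Icc.mpr ⟨(Set.mem_Icc.mp hs).1, (Set.mem_Icc.mp hs).2.trans ht.2⟩) x'
  have hVeq : ∀ t ∈ Icc (0:ℝ) T, V t = v t := by
    intro t ht
    rw [sol.vrep t ht, hv0, hVdef]
    simp only
    congr 1
    apply intervalIntegral.integral_congr
    intro s hs
    rw [uIcc_of_le ht.1] at hs
    exact indicator_of_mem (Set.mem_Icc.mpr ⟨(Set.mem_Icc.mp hs).1, (Set.mem_Icc.mp hs).2.trans ht.2⟩) v'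
  have hX0 : X 0 = x₀ := by simp [hXdef]
  have hV0 : V 0 = v₀ := by simp [hVdef]
  set W : ℝ → H := fun t => V t + ψ' (X t) with hWdef
  have hWcont : Continuous W := hVcont.add (hψ'cont.comp hXcont)
  have hWeq : ∀ t ∈ Icc (0:ℝ) T, W t = v t + ψ' (x t) := by
    intro t ht
    rw [hWdef]
    simp only
    rw [hXeq t ht, hVeq t ht]
  -- bounds on compact [0,T]
  obtain ⟨M, hMw⟩ := (isCompact_Icc (a := (0:ℝ)) (b := T)).exists_bound_of_continuousOn
    hWcont.continuousOn
  have hM0 : 0 ≤ M := le_trans (norm_nonneg _) (hMw 0 hx0Icc)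
  obtain ⟨Mv, hMv⟩ := (isCompact_Icc (a := (0:ℝ)) (b := T)).exists_bound_of_continuousOn
    hVcont.continuousOn
  have hMv0 : 0 ≤ Mv := le_trans (norm_nonneg _) (hMv 0 hx0Icc)
  obtain ⟨Mp, hMp⟩ := (isCompact_Icc (a := (0:ℝ)) (b := T)).exists_bound_of_continuousOn
    (hψ'cont.comp hXcont).continuousOn
  have hMp0 : 0 ≤ Mp := le_trans (norm_nonneg _) (hMp 0 hx0Icc)
  -- pointwise a.e. facts
  have hae : ∀ᵐ t ∂(volume.restrict (Ioo (0:ℝ) T)),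
      c₀ * ‖x' t‖^2 + inner ℝ (W t) (x' t) ≤ 0 ∧
      ‖x' t‖ ≤ M / c₀ ∧
      ‖v' t‖^2 / 2 + inner ℝ (V t) (v' t) ≤ ‖ψ' (X t)‖^2 / 2 ∧
      ‖v' t‖ ≤ Mp + Mv := by
    filter_upwards [sol.xderiv, sol.vderiv, sol.eqn, ae_restrict_mem measurableSet_Ioo]
      with t hdx hdv heq htm
    have htIcc : t ∈ Icc (0:ℝ) T := Ioo_subset_Icc_self htm
    have hmono : 0 ≤ (inner ℝ (x' t) (v' t) : ℝ) :=
      subdiff_inner_deriv_nonneg htm sol.subdiff hφbot hz₀ hdx hdv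
    have heq' : v' t = -(lam t • x' t) - v t - ψ' (x t) := by
      have h := heq
      have h2 : v' t + (lam t • x' t + v t + ψ' (x t)) = 0 := by
        rw [← h]; abel
      have h3 := eq_neg_of_add_eq_zero_left h2
      rw [h3]; abel
    have hinx : (inner ℝ (v' t) (x' t) : ℝ)
        = -(lam t * ‖x' t‖^2) - inner ℝ (v t) (x' t) - inner ℝ (ψ' (x t)) (x' t) := by
      rw [heq']
      simp only [inner_sub_left, inner_neg_left, real_inner_smul_left]
      rw [real_inner_self_eq_norm_sq]
      try ring
    have hinv : (‖v' t‖^2 : ℝ)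
        = -(lam t * inner ℝ (x' t) (v' t)) - inner ℝ (v t) (v' t) - inner ℝ (ψ' (x t)) (v' t) := by
      rw [← real_inner_self_eq_norm_sq]
      nth_rewrite 1 [heq']
      simp only [inner_sub_left, inner_neg_left, real_inner_smul_left]
      try ring
    have hlamt := hlam t htIcc
    have hWt : W t = v t + ψ' (x t) := hWeq t htIcc
    have hP1 : c₀ * ‖x' t‖^2 + inner ℝ (W t) (x' t) ≤ 0 := by
      have h1 : (inner ℝ (v' t) (x' t) : ℝ) = inner ℝ (x' t) (v' t) := real_inner_comm _ _
      have h2 : (inner ℝ (W t) (x' t) : ℝ) = inner ℝ (v t) (x' t) + inner ℝ (ψ' (x t)) (x' t) := by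
        rw [hWt, inner_add_left]
      nlinarith [sq_nonneg ‖x' t‖, hmono, hinx, hlamt]
    refine ⟨hP1, ?_, ?_, ?_⟩
    · -- ‖x' t‖ ≤ M / c₀
      have hb : c₀ * ‖x' t‖^2 ≤ M * ‖x' t‖ := by
        have h1 : -(inner ℝ (W t) (x' t) : ℝ) ≤ ‖W t‖ * ‖x' t‖ := by
          have h2 := abs_real_inner_le_norm (W t) (x' t)
          have h3 := neg_abs_le (inner ℝ (W t) (x' t) : ℝ)
          linarith
        have h3 : ‖W t‖ * ‖x' t‖ ≤ M * ‖x' t‖ :=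
          mul_le_mul_of_nonneg_right (hMw t htIcc) (norm_nonneg _)
        linarith [hP1]
      rcases eq_or_lt_of_le (norm_nonneg (x' t)) with h0 | h0
      · rw [← h0]; positivity
      · rw [le_div_iff₀ hc₀]
        have hb' : (c₀ * ‖x' t‖) * ‖x' t‖ ≤ M * ‖x' t‖ := by nlinarith [hb]
        have h6 : c₀ * ‖x' t‖ ≤ M := (mul_le_mul_iff_of_pos_right h0).1 hb'
        linarith
    · -- v' estimate
      have h1 : (inner ℝ (ψ' (x t)) (v' t) : ℝ) ≥ -(‖ψ' (x t)‖ * ‖v' t‖) := by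
        have h2 := abs_real_inner_le_norm (ψ' (x t)) (v' t)
        linarith [neg_abs_le (inner ℝ (ψ' (x t)) (v' t) : ℝ)]
      have hVt : V t = v t := hVeq t htIcc
      have hXt : X t = x t := hXeq t htIcc
      rw [hVt, hXt]
      nlinarith [hinv, hmono, hlamt, sq_nonneg (‖ψ' (x t)‖ - ‖v' t‖)]
    · -- ‖v' t‖ ≤ Mp + Mv
      have hXt : X t = x t := hXeq t htIcc
      have h1 : (inner ℝ (ψ' (x t)) (v' t) : ℝ) ≥ -(Mp * ‖v' t‖) := by
        have h2 := abs_real_inner_le_norm (ψ' (x t)) (v' t)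
        have h3 : ‖ψ' (x t)‖ ≤ Mp := by rw [← hXt]; exact hMp t htIcc
        nlinarith [neg_abs_le (inner ℝ (ψ' (x t)) (v' t) : ℝ), norm_nonneg (v' t)]
      have h4 : (inner ℝ (v t) (v' t) : ℝ) ≥ -(Mv * ‖v' t‖) := by
        have h2 := abs_real_inner_le_norm (v t) (v' t)
        have h3 : ‖v t‖ ≤ Mv := by rw [← hVeq t htIcc]; exact hMv t htIcc
        nlinarith [neg_abs_le (inner ℝ (v t) (v' t) : ℝ), norm_nonneg (v' t)]
      have hb : ‖v' t‖^2 ≤ (Mp + Mv) * ‖v' t‖ := by nlinarith [hinv, hmono, hlamt]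
      rcases eq_or_lt_of_le (norm_nonneg (v' t)) with h0 | h0
      · rw [← h0]; positivity
      · have hb' : ‖v' t‖ * ‖v' t‖ ≤ (Mp + Mv) * ‖v' t‖ := by nlinarith [hb]
        exact (mul_le_mul_iff_of_pos_right h0).1 hb'
  -- measurability facts
  have hx'meas : AEStronglyMeasurable x' (volume.restrict (Ioo (0:ℝ) T)) := by
    rw [← hresIcc]; exact sol.xint.aestronglyMeasurable
  have hv'meas : AEStronglyMeasurable v' (volume.restrict (Ioo (0:ℝ) T)) := by
    rw [← hresIcc]; exact sol.vint.aestronglyMeasurable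
  have hx'Int : Integrable x' (volume.restrict (Ioo (0:ℝ) T)) := by
    rw [← hresIcc]; exact sol.xint
  have hv'Int : Integrable v' (volume.restrict (Ioo (0:ℝ) T)) := by
    rw [← hresIcc]; exact sol.vint
  -- integrability facts
  have i1 : Integrable (fun t => ‖x' t‖^2) (volume.restrict (Ioo (0:ℝ) T)) := by
    have hms : AEStronglyMeasurable (fun t => ‖x' t‖^2) (volume.restrict (Ioo (0:ℝ) T)) := by
      have := hx'meas.norm.mul hx'meas.norm
      simpa [pow_two, Pi.mul_def] using this
    refine Integrable.mono' (integrable_const ((M/c₀)^2)) hms ?_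
    filter_upwards [hae] with t ht
    rw [Real.norm_eq_abs, abs_of_nonneg (sq_nonneg _)]
    have h2 := ht.2.1
    nlinarith [norm_nonneg (x' t)]
  have i2 : Integrable (fun t => (inner ℝ (W t) (x' t) : ℝ)) (volume.restrict (Ioo (0:ℝ) T)) := by
    have hms : AEStronglyMeasurable (fun t => (inner ℝ (W t) (x' t) : ℝ))
        (volume.restrict (Ioo (0:ℝ) T)) :=
      hWcont.aestronglyMeasurable.inner hx'meas
    refine Integrable.mono' (hx'Int.norm.const_mul M) hms ?_
    filter_upwards [ae_restrict_mem measurableSet_Ioo] with t ht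
    calc ‖(inner ℝ (W t) (x' t) : ℝ)‖ ≤ ‖W t‖ * ‖x' t‖ := norm_inner_le_norm _ _
      _ ≤ M * ‖x' t‖ :=
        mul_le_mul_of_nonneg_right (hMw t (Ioo_subset_Icc_self ht)) (norm_nonneg _)
  have i3 : Integrable (fun t => ‖v' t‖^2) (volume.restrict (Ioo (0:ℝ) T)) := by
    have hms : AEStronglyMeasurable (fun t => ‖v' t‖^2) (volume.restrict (Ioo (0:ℝ) T)) := by
      have := hv'meas.norm.mul hv'meas.norm
      simpa [pow_two, Pi.mul_def] using this
    refine Integrable.mono' (integrable_const ((Mp + Mv)^2)) hms ?_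
    filter_upwards [hae] with t ht
    rw [Real.norm_eq_abs, abs_of_nonneg (sq_nonneg _)]
    have h2 := ht.2.2.2
    nlinarith [norm_nonneg (v' t)]
  have i4 : Integrable (fun t => (inner ℝ (V t) (v' t) : ℝ)) (volume.restrict (Ioo (0:ℝ) T)) := by
    have hms : AEStronglyMeasurable (fun t => (inner ℝ (V t) (v' t) : ℝ))
        (volume.restrict (Ioo (0:ℝ) T)) :=
      hVcont.aestronglyMeasurable.inner hv'meas
    refine Integrable.mono' (hv'Int.norm.const_mul Mv) hms ?_
    filter_upwards [ae_restrict_mem measurableSet_Ioo] with t ht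
    calc ‖(inner ℝ (V t) (v' t) : ℝ)‖ ≤ ‖V t‖ * ‖v' t‖ := norm_inner_le_norm _ _
      _ ≤ Mv * ‖v' t‖ :=
        mul_le_mul_of_nonneg_right (hMv t (Ioo_subset_Icc_self ht)) (norm_nonneg _)
  have i5 : Integrable (fun t => ‖ψ' (X t)‖^2) (volume.restrict (Ioo (0:ℝ) T)) := by
    have hms : AEStronglyMeasurable (fun t => ‖ψ' (X t)‖^2)
        (volume.restrict (Ioo (0:ℝ) T)) :=
      (((hψ'cont.comp hXcont).norm.pow 2)).aestronglyMeasurable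
    refine Integrable.mono' (integrable_const (Mp^2)) hms ?_
    filter_upwards [ae_restrict_mem measurableSet_Ioo] with t ht
    rw [Real.norm_eq_abs, abs_of_nonneg (sq_nonneg _)]
    have h2 : ‖ψ' (X t)‖ ≤ Mp := hMp t (Ioo_subset_Icc_self ht)
    nlinarith [norm_nonneg (ψ' (X t))]

  -- finiteness of φ along the path; Egap facts
  set φr : H → ℝ := fun z => (φ z).toReal with hφrdef
  have hfinx : ∀ t ∈ Icc (0:ℝ) T, φ (x t) = ((φr (x t) : ℝ) : EReal) :=
    fun t ht => subdiff_fin hφbot hz₀ (sol.subdiff t ht)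
  set S := sInf (Set.range fun z => φ z + (ψ z : EReal)) with hSdef
  have hSbound : (m : EReal) ≤ S := le_sInf (by rintro - ⟨z, rfl⟩; exact hm z)
  have hSupper : S ≤ ((φr (x T) + ψ (x T) : ℝ) : EReal) := by
    have h := sInf_le (Set.mem_range_self (f := fun z => φ z + (ψ z : EReal)) (x T))
    rw [← hSdef] at h
    rwa [hfinx T hTIcc, ← EReal.coe_add] at h
  have hSbot : S ≠ ⊥ := by
    intro h
    rw [h, le_bot_iff] at hSbound
    exact (EReal.coe_ne_bot m) hSbound
  have hStop : S ≠ ⊤ := by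
    intro h
    rw [h, top_le_iff] at hSupper
    exact (EReal.coe_ne_top _) hSupper
  set Sr := S.toReal with hSrdef
  have hSr : S = (Sr : EReal) := (EReal.coe_toReal hStop hSbot).symm
  have hφx₀ : φ x₀ = ((φr x₀ : ℝ) : EReal) := by
    have := hfinx 0 hx0Icc
    rwa [hx0] at this
  have hEgap : Egap φ ψ x₀ = (φr x₀ + ψ x₀) - Sr := by
    rw [Egap, hφx₀, ← hSdef, hSr, ← EReal.coe_add, ← EReal.coe_sub, EReal.toReal_coe]
  have hgapT : Sr ≤ φr (x T) + ψ (x T) := by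
    rw [hSr] at hSupper
    exact_mod_cast hSupper
  -- (E1) energy estimate along x
  set F₁ : ℝ → ℝ := fun t => φr (X t) + ψ (X t) with hF₁def
  have hE1 : F₁ T - F₁ 0 ≤ ∫ t in Ioc (0:ℝ) T, (inner ℝ (W t) (x'i t) : ℝ) := by
    apply key_telescope hT W hWcont x'i hx'iInt F₁
    intro s hs t ht hst
    have hint : (∫ r in s..t, x'i r) = X t - X s := by
      rw [hXdef]
      simp only
      rw [add_sub_add_left_eq_sub,
        ← intervalIntegral.integral_interval_sub_left hx'iInt.intervalIntegrable
          hx'iInt.intervalIntegrable]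
    rw [hint, hF₁def]
    simp only
    rw [hXeq t ht, hXeq s hs, hWeq t ht, inner_add_left]
    have hφpart : φr (x t) - φr (x s) ≤ inner ℝ (v t) (x t - x s) := by
      have h := subdiff_ineq_real hφbot hz₀ (sol.subdiff t ht) (sol.subdiff s hs)
      have h2 : (inner ℝ (v t) (x s - x t) : ℝ) = -(inner ℝ (v t) (x t - x s) : ℝ) := by
        rw [← inner_neg_right, neg_sub]
      rw [h2] at h
      rw [hφrdef]
      simp only
      linarith
    have hψpart := convex_grad_ineq ψ ψ' hψconv hψgrad (x s) (x t)
    linarith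
  have hF₁T : F₁ T = φr (x T) + ψ (x T) := by
    rw [hF₁def]; simp only; rw [hXeq T hTIcc]
  have hF₁0 : F₁ 0 = φr x₀ + ψ x₀ := by
    rw [hF₁def]; simp only; rw [hX0]
  -- convert E1 integral to Ioo with x'
  have hE1' : F₁ T - F₁ 0 ≤ ∫ t in Ioo (0:ℝ) T, (inner ℝ (W t) (x' t) : ℝ) := by
    refine hE1.trans_eq ?_
    rw [hresIoc]
    apply MeasureTheory.integral_congr_ae
    rw [Filter.EventuallyEq, ae_restrict_iff' measurableSet_Ioo]
    filter_upwards with t ht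
    rw [hx'idef, indicator_of_mem (Ioo_subset_Icc_self ht)]
  -- the estimate on K = ∫ ‖x'‖²
  set K := ∫ t in Ioo (0:ℝ) T, ‖x' t‖^2 with hKdef
  have hK0 : 0 ≤ K := by
    rw [hKdef]
    apply setIntegral_nonneg measurableSet_Ioo
    intro t _
    exact sq_nonneg _
  have hKle : c₀ * K ≤ Egap φ ψ x₀ := by
    have hmono : ∫ t in Ioo (0:ℝ) T, c₀ * ‖x' t‖^2
        ≤ ∫ t in Ioo (0:ℝ) T, (-(inner ℝ (W t) (x' t)) : ℝ) := by
      apply integral_mono_ae (i1.const_mul c₀) i2.neg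
      filter_upwards [hae] with t ht
      simp only [Pi.neg_apply]
      linarith [ht.1]
    rw [MeasureTheory.integral_const_mul, MeasureTheory.integral_neg, ← hKdef] at hmono
    have h2 : -(∫ t in Ioo (0:ℝ) T, (inner ℝ (W t) (x' t) : ℝ)) ≤ F₁ 0 - F₁ T := by
      linarith [hE1']
    rw [hF₁0, hF₁T] at h2
    rw [hEgap]
    linarith [hgapT, hmono, h2]
  -- (E2) energy estimate along v
  have hE2 : ‖V T‖^2/2 - ‖V 0‖^2/2 ≤ ∫ t in Ioc (0:ℝ) T, (inner ℝ (V t) (v'i t) : ℝ) := by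
    apply key_telescope hT V hVcont v'i hv'iInt (fun t => ‖V t‖^2/2)
    intro s hs t ht hst
    have hint : (∫ r in s..t, v'i r) = V t - V s := by
      rw [hVdef]
      simp only
      rw [add_sub_add_left_eq_sub,
        ← intervalIntegral.integral_interval_sub_left hv'iInt.intervalIntegrable
          hv'iInt.intervalIntegrable]
    rw [hint]
    have h1 : (inner ℝ (V t) (V t - V s) : ℝ) = ‖V t‖^2 - inner ℝ (V t) (V s) := by
      rw [inner_sub_right, real_inner_self_eq_norm_sq]
    have h2 : (inner ℝ (V t) (V s) : ℝ) ≤ ‖V t‖ * ‖V s‖ := real_inner_le_norm _ _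
    rw [h1]
    nlinarith [sq_nonneg (‖V t‖ - ‖V s‖)]
  have hIvv : -(∫ t in Ioo (0:ℝ) T, (inner ℝ (V t) (v' t) : ℝ)) ≤ ‖v₀‖^2/2 := by
    have hconv : ∫ t in Ioc (0:ℝ) T, (inner ℝ (V t) (v'i t) : ℝ)
        = ∫ t in Ioo (0:ℝ) T, (inner ℝ (V t) (v' t) : ℝ) := by
      rw [hresIoc]
      apply MeasureTheory.integral_congr_ae
      rw [Filter.EventuallyEq, ae_restrict_iff' measurableSet_Ioo]
      filter_upwards with t ht
      rw [hv'idef, indicator_of_mem (Ioo_subset_Icc_self ht)]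
    rw [hconv, hV0] at hE2
    nlinarith [sq_nonneg ‖V T‖, hE2]
  -- integrate P2
  have hInt2 : (∫ t in Ioo (0:ℝ) T, ‖v' t‖^2) / 2 + ∫ t in Ioo (0:ℝ) T, (inner ℝ (V t) (v' t) : ℝ)
      ≤ (∫ t in Ioo (0:ℝ) T, ‖ψ' (X t)‖^2) / 2 := by
    have hmono : ∫ t in Ioo (0:ℝ) T, (‖v' t‖^2/2 + inner ℝ (V t) (v' t))
        ≤ ∫ t in Ioo (0:ℝ) T, ‖ψ' (X t)‖^2/2 := by
      apply integral_mono_ae ((i3.div_const 2).add i4) (i5.div_const 2)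
      filter_upwards [hae] with t ht
      exact ht.2.2.1
    rw [MeasureTheory.integral_add (i3.div_const 2) i4, MeasureTheory.integral_div, MeasureTheory.integral_div] at hmono
    linarith
  -- integrability of ‖x'i‖² globally
  have i1' : Integrable (fun s => ‖x'i s‖^2) volume := by
    have he : (fun s => ‖x'i s‖^2) = (Icc (0:ℝ) T).indicator (fun s => ‖x' s‖^2) := by
      funext s
      by_cases hs : s ∈ Icc (0:ℝ) T
      · rw [indicator_of_mem hs, hx'idef, indicator_of_mem hs]
      · rw [indicator_of_notMem hs, hx'idef, indicator_of_notMem hs]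
        simp
    rw [he, integrable_indicator_iff measurableSet_Icc]
    show Integrable _ (volume.restrict (Icc (0:ℝ) T))
    rw [hresIcc]
    exact i1
  have hKi : ∫ s in Ioo (0:ℝ) T, ‖x'i s‖^2 = K := by
    rw [hKdef]
    apply MeasureTheory.integral_congr_ae
    rw [Filter.EventuallyEq, ae_restrict_iff' measurableSet_Ioo]
    filter_upwards with s hs
    rw [hx'idef, indicator_of_mem (Ioo_subset_Icc_self hs)]
  -- pointwise bound on ‖X t - x₀‖²
  have hXb : ∀ t ∈ Ioo (0:ℝ) T, ‖X t - x₀‖^2 ≤ T * K := by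
    intro t ht
    have hXdiff : X t - x₀ = ∫ s in (0:ℝ)..t, x'i s := by
      rw [hXdef]; simp only; rw [add_sub_cancel_left]
    have hA : ‖X t - x₀‖ ≤ ∫ s in (0:ℝ)..t, ‖x'i s‖ := by
      rw [hXdiff]
      exact intervalIntegral.norm_integral_le_integral_norm ht.1.le
    have hCS : (∫ s in (0:ℝ)..t, ‖x'i s‖)^2 ≤ t * ∫ s in (0:ℝ)..t, ‖x'i s‖^2 :=
      sq_integral_le ht.1 _ hx'iInt.norm.intervalIntegrable i1'.intervalIntegrable
    have hmonoI : ∫ s in (0:ℝ)..t, ‖x'i s‖^2 ≤ K := by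
      rw [← hKi, intervalIntegral.integral_of_le ht.1.le]
      apply setIntegral_mono_set i1'.integrableOn
      · exact Eventually.of_forall fun s => sq_nonneg _
      · exact HasSubset.Subset.eventuallyLE fun s hs => ⟨hs.1, lt_of_le_of_lt hs.2 ht.2⟩
    have hnn : 0 ≤ ∫ s in (0:ℝ)..t, ‖x'i s‖ :=
      intervalIntegral.integral_nonneg ht.1.le (fun _ _ => norm_nonneg _)
    have h0t : 0 ≤ ∫ s in (0:ℝ)..t, ‖x'i s‖^2 :=
      intervalIntegral.integral_nonneg ht.1.le (fun _ _ => sq_nonneg _)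
    calc ‖X t - x₀‖^2 ≤ (∫ s in (0:ℝ)..t, ‖x'i s‖)^2 := by
          nlinarith [hA, norm_nonneg (X t - x₀)]
      _ ≤ t * ∫ s in (0:ℝ)..t, ‖x'i s‖^2 := hCS
      _ ≤ T * K := by nlinarith [ht.1, ht.2, hmonoI, h0t]
  -- bound on the ψ'-term integral
  have hψint : ∫ t in Ioo (0:ℝ) T, ‖ψ' (X t)‖^2
      ≤ T * (2*‖ψ' x₀‖^2 + 2*Lψ^2*(T*K)) := by
    have hpt : ∀ t ∈ Ioo (0:ℝ) T, ‖ψ' (X t)‖^2 ≤ 2*‖ψ' x₀‖^2 + 2*Lψ^2*(T*K) := by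
      intro t ht
      have h1 : ‖ψ' (X t) - ψ' x₀‖ ≤ Lψ * ‖X t - x₀‖ := hlip _ _
      have h2 : ‖ψ' (X t)‖ ≤ ‖ψ' x₀‖ + Lψ * ‖X t - x₀‖ := by
        have h3 := norm_add_le (ψ' x₀) (ψ' (X t) - ψ' x₀)
        have h4 : ψ' x₀ + (ψ' (X t) - ψ' x₀) = ψ' (X t) := by abel
        rw [h4] at h3
        linarith
      have h5 := hXb t ht
      nlinarith [norm_nonneg (ψ' (X t)), norm_nonneg (ψ' x₀),
        mul_nonneg hLψ (norm_nonneg (X t - x₀)), sq_nonneg (‖ψ' x₀‖ - Lψ*‖X t - x₀‖),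
        sq_nonneg Lψ, norm_nonneg (X t - x₀)]
    calc ∫ t in Ioo (0:ℝ) T, ‖ψ' (X t)‖^2
        ≤ ∫ _t in Ioo (0:ℝ) T, (2*‖ψ' x₀‖^2 + 2*Lψ^2*(T*K)) :=
          setIntegral_mono_on i5 (integrable_const _) measurableSet_Ioo hpt
      _ = (volume (Ioo (0:ℝ) T)).toReal * (2*‖ψ' x₀‖^2 + 2*Lψ^2*(T*K)) := by
          rw [setIntegral_const, smul_eq_mul]; rfl
      _ = T * (2*‖ψ' x₀‖^2 + 2*Lψ^2*(T*K)) := by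
          rw [Real.volume_Ioo, ENNReal.toReal_ofReal (by linarith : (0:ℝ) ≤ T - 0)]
          norm_num
  -- final assembly
  have hvv : ∫ t in (0:ℝ)..T, ‖v' t‖^2 = ∫ t in Ioo (0:ℝ) T, ‖v' t‖^2 := by
    rw [intervalIntegral.integral_of_le hT.le, hresIoc]
  rw [hvv]
  have hfin1 : ∫ t in Ioo (0:ℝ) T, ‖v' t‖^2
      ≤ ‖v₀‖^2 + ∫ t in Ioo (0:ℝ) T, ‖ψ' (X t)‖^2 := by
    linarith [hInt2, hIvv]
  have hKE : K ≤ Egap φ ψ x₀ / c₀ := by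
    rw [le_div_iff₀ hc₀]
    linarith [hKle]
  have hcoef : 2 * T^2 * Lψ^2 * K ≤ 2 * T^2 * Lψ^2 / c₀ * Egap φ ψ x₀ := by
    have h1 : 2 * T^2 * Lψ^2 * K ≤ 2 * T^2 * Lψ^2 * (Egap φ ψ x₀ / c₀) :=
      mul_le_mul_of_nonneg_left hKE (by positivity)
    have h2 : 2 * T^2 * Lψ^2 * (Egap φ ψ x₀ / c₀) = 2 * T^2 * Lψ^2 / c₀ * Egap φ ψ x₀ := by
      ring
    linarith
  have hexp : T * (2*‖ψ' x₀‖^2 + 2*Lψ^2*(T*K)) = 2*T*‖ψ' x₀‖^2 + 2*T^2*Lψ^2*K := by ring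
  linarith [hfin1, hψint, hcoef, hexp]
end

section
/- Under the same assumptions, the dual trajectory satisfies ‖v‖_{L^∞(0,T;H)} ≤ ‖v₀‖ + √(2T)‖∇ψ(x₀)‖ + √(2/c₀)·T·L_ψ·((φ+ψ)(x₀) − inf_H (φ+ψ))^{1/2}. -/
open MeasureTheory Set Filter
open scoped Topology

variable {H : Type*} [NormedAddCommGroup H] [InnerProductSpace ℝ H] [CompleteSpace H]

local notation "⟪" a ", " b "⟫" => (inner ℝ a b : ℝ)

lemma aux_subdiff_finite {φ : H → EReal} (hφ : ProperConvexLSC φ) {p w : H}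
    (h : IsSubdiff φ p w) : φ p ≠ ⊥ ∧ φ p ≠ ⊤ := by
  refine ⟨hφ.1 p, ?_⟩
  obtain ⟨z, hz⟩ := hφ.2.1
  intro htop
  have h2 := h z
  rw [htop, EReal.top_add_coe] at h2
  exact hz (top_le_iff.mp h2)

lemma aux_subdiff_toReal_le {φ : H → EReal} (hφ : ProperConvexLSC φ) {p w q u : H}
    (hp : IsSubdiff φ p w) (hq : IsSubdiff φ q u) :
    (φ q).toReal - (φ p).toReal ≤ ⟪u, q - p⟫ := by
  have hfp := aux_subdiff_finite hφ hp
  have hfq := aux_subdiff_finite hφ hq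
  have h := hq p
  rw [← EReal.coe_toReal hfq.2 hfq.1, ← EReal.coe_toReal hfp.2 hfp.1,
    ← EReal.coe_add, EReal.coe_le_coe_iff] at h
  have e : (inner ℝ u (p - q) : ℝ) = - ⟪u, q - p⟫ := by
    rw [show p - q = -(q - p) by abel, inner_neg_right]
  rw [e] at h
  linarith

lemma aux_subdiff_mono {φ : H → EReal} (hφ : ProperConvexLSC φ) {p w q u : H}
    (hp : IsSubdiff φ p w) (hq : IsSubdiff φ q u) :
    0 ≤ ⟪u - w, q - p⟫ := by
  have h1 := aux_subdiff_toReal_le hφ hp hq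
  have h2 := aux_subdiff_toReal_le hφ hq hp
  have e2 : (⟪w, p - q⟫ : ℝ) = - ⟪w, q - p⟫ := by
    rw [show p - q = -(q - p) by abel, inner_neg_right]
  rw [e2] at h2
  have e1 : ⟪u - w, q - p⟫ = ⟪u, q - p⟫ - ⟪w, q - p⟫ := by
    rw [inner_sub_left]
  linarith

lemma aux_convex_grad {ψ : H → ℝ} {ψ' : H → H} (hcv : ConvexOn ℝ Set.univ ψ)
    (hgrad : ∀ z, HasGradientAt ψ (ψ' z) z) (a b : H) :
    ψ b - ψ a ≤ ⟪ψ' b, b - a⟫ := by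
  set c : ℝ → H := fun θ => a + θ • (b - a) with hc
  have hderiv : ∀ θ : ℝ, HasDerivAt (fun θ => ψ (c θ)) ⟪ψ' (c θ), b - a⟫ θ := by
    intro θ
    have h1 : HasDerivAt c (b - a) θ := by
      rw [hc]
      simpa using ((hasDerivAt_id θ).smul_const (b - a)).const_add a
    have h2 := (hgrad (c θ)).hasFDerivAt.comp_hasDerivAt θ h1
    exact h2
  have hconv : ConvexOn ℝ Set.univ (fun θ : ℝ => ψ (c θ)) := by
    have := hcv.comp_affineMap (AffineMap.lineMap a b : ℝ →ᵃ[ℝ] H)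
    simp only [Set.preimage_univ] at this
    have hfun : (fun θ : ℝ => ψ (c θ)) = ψ ∘ ⇑(AffineMap.lineMap a b : ℝ →ᵃ[ℝ] H) := by
      funext θ
      simp [hc, AffineMap.lineMap_apply, Function.comp]
      congr 1
      module
    rw [hfun]; exact this
  have hsl := hconv.slope_le_of_hasDerivAt (Set.mem_univ (0:ℝ)) (Set.mem_univ (1:ℝ))
    one_pos (hderiv 1)
  have hc1 : c 1 = b := by simp [hc]
  have hc0 : c 0 = a := by simp [hc]
  rw [slope_def_field] at hsl
  rw [hc1] at hsl
  simp [hc0] at hsl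
  linarith

lemma aux_cont_primitive {g : ℝ → H} {T : ℝ} (hg : IntegrableOn g (Icc 0 T)) (z : H) :
    ContinuousOn (fun s => z + ∫ r in (0:ℝ)..s, g r) (Icc 0 T) := by
  have h := intervalIntegral.continuousOn_primitive (f := g) (a := 0) (b := T) (μ := volume) hg
  have h2 : ContinuousOn (fun s => z + ∫ r in Ioc (0:ℝ) s, g r) (Icc 0 T) :=
    continuousOn_const.add h
  apply h2.congr
  intro s hs
  show z + (∫ r in (0:ℝ)..s, g r) = z + ∫ r in Ioc (0:ℝ) s, g r
  rw [intervalIntegral.integral_of_le hs.1]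

lemma aux_int_inner {f g : ℝ → H} {a b : ℝ} (hf : ContinuousOn f (Icc a b))
    (hg : IntegrableOn g (Icc a b)) :
    IntegrableOn (fun r => ⟪f r, g r⟫) (Icc a b) := by
  obtain ⟨C, hC⟩ := isCompact_Icc.exists_bound_of_continuousOn hf
  have hfm : AEStronglyMeasurable f (volume.restrict (Icc a b)) :=
    hf.aestronglyMeasurable measurableSet_Icc
  refine Integrable.mono' (hg.norm.const_mul C) (hfm.inner hg.1) ?_
  filter_upwards [ae_restrict_mem measurableSet_Icc] with r hr
  calc ‖(⟪f r, g r⟫ : ℝ)‖ ≤ ‖f r‖ * ‖g r‖ := norm_inner_le_norm _ _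
    _ ≤ C * ‖g r‖ := mul_le_mul_of_nonneg_right (hC r hr) (norm_nonneg _)

lemma aux_interval_eq_Icc {E : Type*} [NormedAddCommGroup E] [NormedSpace ℝ E]
    (u : ℝ → E) {t : ℝ} (ht : 0 ≤ t) :
    (∫ s in (0:ℝ)..t, u s) = ∫ s in Icc 0 t, u s := by
  rw [intervalIntegral.integral_of_le ht]
  exact setIntegral_congr_set Ioc_ae_eq_Icc

lemma aux_tele {F : ℝ → ℝ} {f g : ℝ → H} {t : ℝ} (ht : 0 < t)
    (hf : ContinuousOn f (Icc 0 t)) (hg : IntegrableOn g (Icc 0 t))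
    (hFab : ∀ a b : ℝ, 0 ≤ a → a ≤ b → b ≤ t → F b - F a ≤ ⟪f b, ∫ s in a..b, g s⟫) :
    F t - F 0 ≤ ∫ s in (0:ℝ)..t, ⟪f s, g s⟫ := by
  have hinner_int : IntegrableOn (fun s => ⟪f s, g s⟫) (Icc 0 t) := aux_int_inner hf hg
  have hnorm_int : IntegrableOn (fun s => ‖g s‖) (Icc 0 t) := hg.norm
  refine le_of_forall_pos_le_add fun ε hε => ?_
  set M := ∫ s in (0:ℝ)..t, ‖g s‖ with hM
  have hM0 : 0 ≤ M :=
    intervalIntegral.integral_nonneg ht.le (fun _ _ => norm_nonneg _)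
  set ε' : ℝ := ε / (M + 1) with hε'
  have hε'0 : 0 < ε' := div_pos hε (by linarith)
  have hunif : UniformContinuousOn f (Icc 0 t) :=
    isCompact_Icc.uniformContinuousOn_of_continuous hf
  rw [Metric.uniformContinuousOn_iff] at hunif
  obtain ⟨δ, hδ0, hδ⟩ := hunif ε' hε'0
  obtain ⟨n, hn⟩ := exists_nat_gt (t / δ)
  have hn0 : 0 < (n:ℝ) := lt_of_le_of_lt (div_nonneg ht.le hδ0.le) hn
  set τ : ℕ → ℝ := fun i => i * (t / n) with hτ
  have htn : 0 < t / n := div_pos ht hn0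
  have hτmem : ∀ i : ℕ, (i:ℝ) ≤ (n:ℝ) → τ i ∈ Icc 0 t := by
    intro i hi
    constructor
    · exact mul_nonneg (Nat.cast_nonneg i) htn.le
    · calc (i:ℝ) * (t/n) ≤ (n:ℝ) * (t/n) := by
            exact mul_le_mul_of_nonneg_right hi htn.le
        _ = t := by field_simp
  have hτmono : ∀ i : ℕ, τ i ≤ τ (i+1) := by
    intro i
    simp only [hτ]
    push_cast
    nlinarith [htn]
  have hτ0 : τ 0 = 0 := by simp [hτ]
  have hτn : τ n = t := by simp only [hτ]; field_simp
  have hstep : ∀ i : ℕ, τ (i+1) - τ i = t / n := by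
    intro i; simp only [hτ]; push_cast; ring
  have hmesh : t / n < δ := by
    rw [div_lt_iff₀ hn0]
    rw [div_lt_iff₀ hδ0] at hn
    linarith
  have hIoc_sub : ∀ k : ℕ, (k:ℝ) + 1 ≤ (n:ℝ) → Ioc (τ k) (τ (k+1)) ⊆ Icc 0 t := by
    intro k hk
    have h1 := hτmem k (by linarith)
    have h2 := hτmem (k+1) (by push_cast; linarith)
    intro s hs
    exact ⟨le_trans h1.1 hs.1.le, le_trans hs.2 h2.2⟩
  have hint2 : ∀ k : ℕ, (k:ℝ) + 1 ≤ (n:ℝ) →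
      IntervalIntegrable (fun s => ⟪f s, g s⟫ + ε' * ‖g s‖) volume (τ k) (τ (k+1)) := by
    intro k hk
    rw [intervalIntegrable_iff, uIoc_of_le (hτmono k)]
    exact (hinner_int.mono_set (hIoc_sub k hk)).add ((hnorm_int.mono_set (hIoc_sub k hk)).const_mul ε')
  have key : ∀ k : ℕ, k < n →
      F (τ (k+1)) - F (τ k) ≤ ∫ s in τ k..τ (k+1), (⟪f s, g s⟫ + ε' * ‖g s‖) := by
    intro k hk
    have hk' : (k:ℝ) + 1 ≤ (n:ℝ) := by exact_mod_cast hk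
    have hmemk := hτmem k (by linarith)
    have hmemk1 := hτmem (k+1) (by push_cast; linarith)
    refine le_trans (hFab (τ k) (τ (k+1)) hmemk.1 (hτmono k) hmemk1.2) ?_
    have hgIoc : IntegrableOn g (Ioc (τ k) (τ (k+1))) := hg.mono_set (hIoc_sub k hk')
    have h1 : (⟪f (τ (k+1)), ∫ s in τ k..τ (k+1), g s⟫ : ℝ)
        = ∫ s in Ioc (τ k) (τ (k+1)), ⟪f (τ (k+1)), g s⟫ := by
      rw [intervalIntegral.integral_of_le (hτmono k)]
      exact (integral_inner hgIoc (f (τ (k+1)))).symm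
    rw [h1, ← intervalIntegral.integral_of_le (hτmono k)]
    apply intervalIntegral.integral_mono_on (hτmono k) ?_ (hint2 k hk')
    · intro s hs
      have hsmem : s ∈ Icc 0 t := ⟨le_trans hmemk.1 hs.1, le_trans hs.2 hmemk1.2⟩
      have hdist : dist s (τ (k+1)) < δ := by
        rw [Real.dist_eq, abs_sub_lt_iff]
        have := hstep k
        constructor <;> [linarith [hs.2, htn] ; linarith [hs.1, hmesh, hs.2]]
      have hfd : dist (f s) (f (τ (k+1))) < ε' := hδ s hsmem (τ (k+1)) hmemk1 hdist
      have hbound : (⟪f (τ (k+1)) - f s, g s⟫ : ℝ) ≤ ε' * ‖g s‖ := by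
        calc (⟪f (τ (k+1)) - f s, g s⟫ : ℝ) ≤ ‖f (τ (k+1)) - f s‖ * ‖g s‖ :=
              real_inner_le_norm _ _
          _ ≤ ε' * ‖g s‖ := by
              apply mul_le_mul_of_nonneg_right _ (norm_nonneg _)
              rw [← dist_eq_norm, dist_comm]
              exact hfd.le
      have hexp : (⟪f (τ (k+1)), g s⟫ : ℝ) = ⟪f s, g s⟫ + ⟪f (τ (k+1)) - f s, g s⟫ := by
        rw [inner_sub_left]; ring
      rw [hexp]
      linarith
    · rw [intervalIntegrable_iff, uIoc_of_le (hτmono k)]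
      exact (hg.mono_set (hIoc_sub k hk')).const_inner _
  have sum1 : F t - F 0 = ∑ k ∈ Finset.range n, (F (τ (k+1)) - F (τ k)) := by
    rw [Finset.sum_range_sub (fun k => F (τ k)), hτn, hτ0]
  have sum2 : ∑ k ∈ Finset.range n, ∫ s in τ k..τ (k+1), (⟪f s, g s⟫ + ε' * ‖g s‖)
      = ∫ s in (0:ℝ)..t, (⟪f s, g s⟫ + ε' * ‖g s‖) := by
    have h := intervalIntegral.sum_integral_adjacent_intervals (μ := volume)
      (f := fun s => ⟪f s, g s⟫ + ε' * ‖g s‖) (a := τ) (n := n) ?_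
    · rw [hτ0, hτn] at h; exact h
    · intro k hk
      exact hint2 k (by exact_mod_cast hk)
  have hii : IntervalIntegrable (fun s => ⟪f s, g s⟫) volume 0 t := by
    rw [intervalIntegrable_iff, uIoc_of_le ht.le]
    exact hinner_int.mono_set Ioc_subset_Icc_self
  have hni : IntervalIntegrable (fun s => ‖g s‖) volume 0 t := by
    rw [intervalIntegrable_iff, uIoc_of_le ht.le]
    exact hnorm_int.mono_set Ioc_subset_Icc_self
  calc F t - F 0 = ∑ k ∈ Finset.range n, (F (τ (k+1)) - F (τ k)) := sum1
    _ ≤ ∑ k ∈ Finset.range n, ∫ s in τ k..τ (k+1), (⟪f s, g s⟫ + ε' * ‖g s‖) :=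
        Finset.sum_le_sum (fun k hk => key k (Finset.mem_range.mp hk))
    _ = ∫ s in (0:ℝ)..t, (⟪f s, g s⟫ + ε' * ‖g s‖) := sum2
    _ = (∫ s in (0:ℝ)..t, ⟪f s, g s⟫) + ε' * M := by
        rw [intervalIntegral.integral_add hii (hni.const_mul ε'),
          intervalIntegral.integral_const_mul]
    _ ≤ (∫ s in (0:ℝ)..t, ⟪f s, g s⟫) + ε := by
        have : ε' * M ≤ ε := by
          rw [hε', div_mul_eq_mul_div, div_le_iff₀ (by linarith : (0:ℝ) < M + 1)]
          nlinarith
        linarith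

set_option maxHeartbeats 2000000 in
theorem stmt4 (φ : H → EReal) (ψ : H → ℝ) (ψ' : H → H) (hst : Standing φ ψ ψ')
    (lam : ℝ → ℝ) (T c₀ : ℝ) (hT : 0 < T) (hc₀ : 0 < c₀)
    (hlam : ∀ t ∈ Set.Icc (0:ℝ) T, c₀ ≤ lam t)
    (x v x' v' : ℝ → H) (x₀ v₀ : H) (hx0 : x 0 = x₀) (hv0 : v 0 = v₀)
    (hv₀ : IsSubdiff φ x₀ v₀)
    (sol : StrongSol φ ψ' lam T x v x' v')
    (Lψ : ℝ) (hLψ : 0 ≤ Lψ)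
    (hlip : ∀ a b : H, ‖ψ' a - ψ' b‖ ≤ Lψ * ‖a - b‖) :
    ∀ t ∈ Set.Icc (0:ℝ) T,
      ‖v t‖ ≤ ‖v₀‖ + Real.sqrt (2 * T) * ‖ψ' x₀‖ +
        Real.sqrt (2 / c₀) * T * Lψ * Real.sqrt (Egap φ ψ x₀) := by
  obtain ⟨hφ, hcv, hgrad, m, hm⟩ := hst
  have hTne : (0:ℝ) ≤ T := hT.le
  have hxc : ContinuousOn x (Icc 0 T) :=
    ContinuousOn.congr (aux_cont_primitive sol.xint (x 0)) (fun s hs => sol.xrep s hs)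
  have hvc : ContinuousOn v (Icc 0 T) :=
    ContinuousOn.congr (aux_cont_primitive sol.vint (v 0)) (fun s hs => sol.vrep s hs)
  have hψ'c : Continuous ψ' := by
    have hl : LipschitzWith (Real.toNNReal Lψ) ψ' := by
      apply LipschitzWith.of_dist_le_mul
      intro a b
      rw [dist_eq_norm, dist_eq_norm]
      calc ‖ψ' a - ψ' b‖ ≤ Lψ * ‖a - b‖ := hlip a b
        _ = (Real.toNNReal Lψ) * ‖a - b‖ := by rw [Real.coe_toNNReal Lψ hLψ]
    exact hl.continuous
  -- a.e. monotonicity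
  have hmono : ∀ᵐ s ∂(volume.restrict (Ioo 0 T)), 0 ≤ ⟪v' s, x' s⟫ := by
    filter_upwards [sol.xderiv, sol.vderiv, ae_restrict_mem measurableSet_Ioo]
      with s hdx hdv hs
    have hmap : Tendsto (fun h : ℝ => s + h) (𝓝[>] 0) (𝓝[≠] s) := by
      rw [tendsto_nhdsWithin_iff]
      constructor
      · have h1 : Tendsto (fun h : ℝ => s + h) (𝓝 0) (𝓝 s) := by
          simpa using (continuous_add_left s).tendsto (0:ℝ)
        exact h1.mono_left nhdsWithin_le_nhds
      · filter_upwards [self_mem_nhdsWithin] with h hh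
        have : (0:ℝ) < h := hh
        simp only [mem_compl_iff, mem_singleton_iff, add_eq_left]
        exact ne_of_gt this
    have hsx := (hasDerivAt_iff_tendsto_slope.1 hdx).comp hmap
    have hsv := (hasDerivAt_iff_tendsto_slope.1 hdv).comp hmap
    have hlim : Tendsto (fun h : ℝ => ⟪slope v s (s + h), slope x s (s + h)⟫)
        (𝓝[>] 0) (𝓝 ⟪v' s, x' s⟫) := hsv.inner hsx
    refine ge_of_tendsto hlim ?_
    have hTs : 0 < T - s := by linarith [hs.2]
    filter_upwards [Ioo_mem_nhdsGT_of_mem (left_mem_Ico.2 hTs)] with h hh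
    have hh0 : 0 < h := hh.1
    have hmem : s + h ∈ Icc (0:ℝ) T := ⟨by linarith [hs.1], by linarith [hh.2]⟩
    have hsub := aux_subdiff_mono hφ (sol.subdiff s ⟨hs.1.le, hs.2.le⟩)
      (sol.subdiff (s+h) hmem)
    rw [slope_def_module, slope_def_module, show s + h - s = h by ring,
      real_inner_smul_left, real_inner_smul_right]
    exact mul_nonneg (inv_nonneg.2 hh0.le) (mul_nonneg (inv_nonneg.2 hh0.le) hsub)
  -- fix t
  intro t htmem
  obtain ⟨ht0, htT⟩ := htmem
  rcases eq_or_lt_of_le ht0 with heq | ht0'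
  · rw [← heq, hv0]
    have h1 : 0 ≤ Real.sqrt (2*T) * ‖ψ' x₀‖ :=
      mul_nonneg (Real.sqrt_nonneg _) (norm_nonneg _)
    have h2 : 0 ≤ Real.sqrt (2/c₀) * T * Lψ * Real.sqrt (Egap φ ψ x₀) :=
      mul_nonneg (mul_nonneg (mul_nonneg (Real.sqrt_nonneg _) hTne) hLψ)
        (Real.sqrt_nonneg _)
    linarith
  -- 0 < t ≤ T
  have hsubT : Icc (0:ℝ) t ⊆ Icc (0:ℝ) T := Icc_subset_Icc le_rfl htT
  have hxct : ContinuousOn x (Icc 0 t) := hxc.mono hsubT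
  have hvct : ContinuousOn v (Icc 0 t) := hvc.mono hsubT
  have hxint_t : IntegrableOn x' (Icc 0 t) := sol.xint.mono_set hsubT
  have hvint_t : IntegrableOn v' (Icc 0 t) := sol.vint.mono_set hsubT
  have hiix : ∀ a : ℝ, 0 ≤ a → a ≤ T → IntervalIntegrable x' volume 0 a := by
    intro a h0 ha
    rw [intervalIntegrable_iff, uIoc_of_le h0]
    exact sol.xint.mono_set (fun s hs => ⟨hs.1.le, hs.2.trans ha⟩)
  have hiiv : ∀ a : ℝ, 0 ≤ a → a ≤ T → IntervalIntegrable v' volume 0 a := by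
    intro a h0 ha
    rw [intervalIntegrable_iff, uIoc_of_le h0]
    exact sol.vint.mono_set (fun s hs => ⟨hs.1.le, hs.2.trans ha⟩)
  have hxdiff : ∀ a b : ℝ, 0 ≤ a → a ≤ b → b ≤ t → x b - x a = ∫ s in a..b, x' s := by
    intro a b h0a hab hbt
    have hbT : b ≤ T := hbt.trans htT
    have haT : a ≤ T := hab.trans hbT
    rw [sol.xrep b ⟨h0a.trans hab, hbT⟩, sol.xrep a ⟨h0a, haT⟩,
      ← intervalIntegral.integral_interval_sub_left (hiix b (h0a.trans hab) hbT)
        (hiix a h0a haT)]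
    abel
  have hvdiff : ∀ a b : ℝ, 0 ≤ a → a ≤ b → b ≤ t → v b - v a = ∫ s in a..b, v' s := by
    intro a b h0a hab hbt
    have hbT : b ≤ T := hbt.trans htT
    have haT : a ≤ T := hab.trans hbT
    rw [sol.vrep b ⟨h0a.trans hab, hbT⟩, sol.vrep a ⟨h0a, haT⟩,
      ← intervalIntegral.integral_interval_sub_left (hiiv b (h0a.trans hab) hbT)
        (hiiv a h0a haT)]
    abel
  have hae : ∀ᵐ s ∂(volume.restrict (Ioo 0 t)),
      (lam s • x' s + v' s + v s + ψ' (x s) = 0) ∧ 0 ≤ ⟪v' s, x' s⟫ ∧ s ∈ Ioo 0 t := by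
    have h1 := ae_restrict_of_ae_restrict_of_subset (Ioo_subset_Ioo_right htT) sol.eqn
    have h2 := ae_restrict_of_ae_restrict_of_subset (Ioo_subset_Ioo_right htT) hmono
    filter_upwards [h1, h2, ae_restrict_mem measurableSet_Ioo] with s hs1 hs2 hs3
    exact ⟨hs1, hs2, hs3⟩
  have hIooIcc : volume.restrict (Ioo (0:ℝ) t) = volume.restrict (Icc 0 t) :=
    Measure.restrict_congr_set Ioo_ae_eq_Icc
  set φr : ℝ → ℝ := fun s => (φ (x s)).toReal + ψ (x s) with hφr
  have hsubdiffs : ∀ s ∈ Icc (0:ℝ) t, IsSubdiff φ (x s) (v s) :=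
    fun s hs => sol.subdiff s (hsubT hs)
  -- step A
  have hA0 : ∀ a b : ℝ, 0 ≤ a → a ≤ b → b ≤ t →
      φr b - φr a ≤ ⟪v b + ψ' (x b), ∫ s in a..b, x' s⟫ := by
    intro a b h0a hab hbt
    rw [← hxdiff a b h0a hab hbt, inner_add_left]
    have h1 := aux_subdiff_toReal_le hφ (hsubdiffs a ⟨h0a, hab.trans hbt⟩)
      (hsubdiffs b ⟨h0a.trans hab, hbt⟩)
    have h2 := aux_convex_grad hcv hgrad (x a) (x b)
    simp only [hφr]
    linarith
  have hfψ : ContinuousOn (fun s => v s + ψ' (x s)) (Icc 0 t) :=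
    hvct.add (hψ'c.comp_continuousOn hxct)
  have hA : φr t - φr 0 ≤ ∫ s in (0:ℝ)..t, ⟪v s + ψ' (x s), x' s⟫ :=
    aux_tele ht0' hfψ hxint_t hA0
  set G : ℝ → ℝ := fun s => ⟪v s + ψ' (x s), x' s⟫ with hG
  have hGint : IntegrableOn G (Icc 0 t) := aux_int_inner hfψ hxint_t
  have hGbound : ∀ᵐ s ∂(volume.restrict (Ioo 0 t)), c₀ * ‖x' s‖^2 ≤ -G s := by
    filter_upwards [hae] with s hstriple
    obtain ⟨hs1, hs2, hs3⟩ := hstriple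
    have hveq : v s + ψ' (x s) = -(lam s • x' s) - v' s := by
      have h := hs1
      rw [show lam s • x' s + v' s + v s + ψ' (x s)
          = (v s + ψ' (x s)) + (lam s • x' s + v' s) by abel] at h
      rw [add_eq_zero_iff_eq_neg] at h
      rw [h]; abel
    have hGs : G s = -(lam s * ‖x' s‖^2) - ⟪v' s, x' s⟫ := by
      simp only [hG, hveq, inner_sub_left, inner_neg_left, real_inner_smul_left,
        real_inner_self_eq_norm_sq]
    have hlams : c₀ ≤ lam s := hlam s ⟨hs3.1.le, hs3.2.le.trans htT⟩
    have hmul : c₀ * ‖x' s‖^2 ≤ lam s * ‖x' s‖^2 :=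
      mul_le_mul_of_nonneg_right hlams (sq_nonneg _)
    rw [hGs]
    linarith
  have hGbIcc : ∀ᵐ s ∂(volume.restrict (Icc 0 t)), c₀ * ‖x' s‖^2 ≤ -G s := by
    rw [← hIooIcc]; exact hGbound
  have hx'm : AEStronglyMeasurable x' (volume.restrict (Icc 0 t)) := hxint_t.1
  have hsqm : AEStronglyMeasurable (fun s => ‖x' s‖^2) (volume.restrict (Icc 0 t)) :=
    (hx'm.norm.mul hx'm.norm).congr (Eventually.of_forall (fun s => (pow_two _).symm))
  have hsq_int : IntegrableOn (fun s => ‖x' s‖^2) (Icc 0 t) := by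
    apply Integrable.mono' (hGint.neg.const_mul c₀⁻¹) hsqm
    filter_upwards [hGbIcc] with s hs
    rw [Real.norm_eq_abs, abs_of_nonneg (sq_nonneg _)]
    simp only [Pi.neg_apply]
    rw [inv_mul_eq_div, le_div_iff₀ hc₀]
    linarith
  set S : ℝ := ∫ s in Icc (0:ℝ) t, ‖x' s‖^2 with hSdef
  have hS0 : 0 ≤ S :=
    setIntegral_nonneg measurableSet_Icc (fun s _ => sq_nonneg _)
  have hstepA : c₀ * S ≤ φr 0 - φr t := by
    have h1 : ∫ s in Icc (0:ℝ) t, c₀ * ‖x' s‖^2 ≤ ∫ s in Icc (0:ℝ) t, -G s :=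
      integral_mono_ae (hsq_int.const_mul c₀) hGint.neg hGbIcc
    rw [integral_const_mul, integral_neg] at h1
    have h2 : (∫ s in Icc (0:ℝ) t, G s) = ∫ s in (0:ℝ)..t, G s :=
      (aux_interval_eq_Icc G ht0'.le).symm
    rw [h2] at h1
    linarith
  have hEgapIneq : φr 0 - φr t ≤ Egap φ ψ x₀ := by
    have hfin0 := aux_subdiff_finite hφ hv₀
    have hfint := aux_subdiff_finite hφ (hsubdiffs t ⟨ht0, le_rfl⟩)
    set A : EReal := φ x₀ + (ψ x₀ : EReal) with hA'
    set B : EReal := φ (x t) + (ψ (x t) : EReal) with hB'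
    set I : EReal := sInf (Set.range fun z => φ z + (ψ z : EReal)) with hI'
    have hAeq : A = (((φ x₀).toReal + ψ x₀ : ℝ) : EReal) := by
      rw [hA', EReal.coe_add, EReal.coe_toReal hfin0.2 hfin0.1]
    have hBeq : B = (((φ (x t)).toReal + ψ (x t) : ℝ) : EReal) := by
      rw [hB', EReal.coe_add, EReal.coe_toReal hfint.2 hfint.1]
    have hAtop : A ≠ ⊤ := by rw [hAeq]; exact EReal.coe_ne_top _
    have hAbot : A ≠ ⊥ := by rw [hAeq]; exact EReal.coe_ne_bot _
    have hBtop : B ≠ ⊤ := by rw [hBeq]; exact EReal.coe_ne_top _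
    have hBbot : B ≠ ⊥ := by rw [hBeq]; exact EReal.coe_ne_bot _
    have hIA : I ≤ A := sInf_le ⟨x₀, rfl⟩
    have hIB : I ≤ B := sInf_le ⟨x t, rfl⟩
    have hmI : (m : EReal) ≤ I := le_sInf (by rintro _ ⟨z, rfl⟩; exact hm z)
    have hItop : I ≠ ⊤ := ne_top_of_le_ne_top hAtop hIA
    have hIbot : I ≠ ⊥ := fun h => by simp [h] at hmI
    have hEg : Egap φ ψ x₀ = A.toReal - I.toReal := by
      rw [Egap, EReal.toReal_sub hAtop hAbot hItop hIbot]
    have hIle : I.toReal ≤ B.toReal := EReal.toReal_le_toReal hIB hIbot hBtop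
    have hAval : A.toReal = (φ x₀).toReal + ψ x₀ := by rw [hAeq, EReal.toReal_coe]
    have hBval : B.toReal = (φ (x t)).toReal + ψ (x t) := by rw [hBeq, EReal.toReal_coe]
    have hφr0 : φr 0 = A.toReal := by
      simp only [hφr, hx0, hAval]
    have hφrt : φr t = B.toReal := by
      simp only [hφr, hBval]
    rw [hEg, hφr0, hφrt]
    linarith
  have hcS : c₀ * S ≤ Egap φ ψ x₀ := le_trans hstepA hEgapIneq
  have hE0 : 0 ≤ Egap φ ψ x₀ := le_trans (mul_nonneg hc₀.le hS0) hcS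
  -- step B : L¹ bound via Cauchy–Schwarz
  set N : ℝ := ∫ s in Icc (0:ℝ) t, ‖x' s‖ with hNdef
  have hN0 : 0 ≤ N := setIntegral_nonneg measurableSet_Icc (fun s _ => norm_nonneg _)
  have hNbound : ∀ a : ℝ, 0 < a → N ≤ (a * S + t / a) / 2 := by
    intro a ha
    have hpt : ∀ s : ℝ, ‖x' s‖ ≤ (a * ‖x' s‖^2 + 1/a) / 2 := by
      intro s
      have h1 : a * (1/a) = 1 := by field_simp
      nlinarith [sq_nonneg (a * ‖x' s‖ - 1), ha]
    have hint : ∫ s in Icc (0:ℝ) t, ‖x' s‖ ≤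
        ∫ s in Icc (0:ℝ) t, (a * ‖x' s‖^2 + 1/a) / 2 := by
      apply integral_mono_ae hxint_t.norm ?_ (Eventually.of_forall hpt)
      have : (fun s => (a * ‖x' s‖^2 + 1/a) / 2)
          = fun s => ((a/2) * ‖x' s‖^2 + (1/a)/2) := by funext s; ring
      rw [this]
      exact (hsq_int.const_mul (a/2)).add (integrableOn_const (by
        rw [Real.volume_Icc]; exact ENNReal.ofReal_ne_top))
    have hconst : ∫ _ in Icc (0:ℝ) t, (1:ℝ)/a = t * (1/a) := by
      rw [setIntegral_const, Real.volume_real_Icc_of_le (by linarith), smul_eq_mul]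
      ring
    have heval : ∫ s in Icc (0:ℝ) t, (a * ‖x' s‖^2 + 1/a) / 2
        = (a * S + t / a) / 2 := by
      have e1 : (fun s => (a * ‖x' s‖^2 + 1/a) / 2)
          = fun s => ((a/2) * ‖x' s‖^2 + (1/a)/2) := by funext s; ring
      rw [e1, integral_add (hsq_int.const_mul (a/2)) (integrableOn_const (by
        rw [Real.volume_Icc]; exact ENNReal.ofReal_ne_top)),
        integral_const_mul, setIntegral_const, Real.volume_real_Icc_of_le (by linarith), smul_eq_mul]
      field_simp
      ring
    rw [hNdef]
    calc (∫ s in Icc (0:ℝ) t, ‖x' s‖) ≤ _ := hint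
      _ = (a * S + t / a) / 2 := heval
  have hNle : N ≤ Real.sqrt (t * S) := by
    rcases eq_or_lt_of_le hS0 with hSz | hSpos
    · have hN0' : N ≤ 0 := by
        refine le_of_forall_pos_le_add (fun ε hε => ?_)
        have ha : 0 < t / (2*ε) := div_pos ht0' (by linarith)
        have := hNbound (t/(2*ε)) ha
        rw [← hSz] at this
        have he : (t / (2*ε) * 0 + t / (t / (2*ε))) / 2 = ε := by
          field_simp
          ring
        rw [he] at this
        linarith
      exact hN0'.trans (Real.sqrt_nonneg _)
    · set a : ℝ := Real.sqrt (t / S) with ha'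
      have ha : 0 < a := Real.sqrt_pos.2 (div_pos ht0' hSpos)
      have key := hNbound a ha
      have hst : Real.sqrt t ^ 2 = t := Real.sq_sqrt ht0'.le
      have hsS : Real.sqrt S ^ 2 = S := Real.sq_sqrt hS0
      have hsSpos : 0 < Real.sqrt S := Real.sqrt_pos.2 hSpos
      have hstpos : 0 < Real.sqrt t := Real.sqrt_pos.2 ht0'
      have haeq : a = Real.sqrt t / Real.sqrt S := by rw [ha', Real.sqrt_div ht0'.le]
      have hmul : Real.sqrt (t*S) = Real.sqrt t * Real.sqrt S := Real.sqrt_mul ht0'.le S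
      have h2 : a * S = Real.sqrt (t * S) := by
        rw [haeq, hmul]
        field_simp
        linear_combination -hsS
      have h3 : t / a = Real.sqrt (t * S) := by
        rw [haeq, hmul]
        field_simp
        linear_combination -hst
      rw [h2, h3] at key
      linarith
  have hxdist : ∀ s ∈ Icc (0:ℝ) t, ‖x s - x₀‖ ≤ Real.sqrt (t * S) := by
    intro s hs
    rw [← hx0]
    have he : x s - x 0 = ∫ r in (0:ℝ)..s, x' r := hxdiff 0 s le_rfl hs.1 hs.2
    rw [he, aux_interval_eq_Icc _ hs.1]
    calc ‖∫ r in Icc (0:ℝ) s, x' r‖ ≤ ∫ r in Icc (0:ℝ) s, ‖x' r‖ :=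
          norm_integral_le_integral_norm _
      _ ≤ N := by
          apply setIntegral_mono_set hxint_t.norm
            (Eventually.of_forall (fun r => norm_nonneg _))
          exact HasSubset.Subset.eventuallyLE (Icc_subset_Icc le_rfl hs.2)
      _ ≤ Real.sqrt (t * S) := hNle
  set K : ℝ := ‖ψ' x₀‖ + Lψ * Real.sqrt (t * S) with hKdef
  have hK0 : 0 ≤ K := by positivity
  have hKb : ∀ s ∈ Icc (0:ℝ) t, ‖ψ' (x s)‖ ≤ K := by
    intro s hs
    calc ‖ψ' (x s)‖ = ‖ψ' x₀ + (ψ' (x s) - ψ' x₀)‖ := by congr 1; abel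
      _ ≤ ‖ψ' x₀‖ + ‖ψ' (x s) - ψ' x₀‖ := norm_add_le _ _
      _ ≤ ‖ψ' x₀‖ + Lψ * ‖x s - x₀‖ := by linarith [hlip (x s) x₀]
      _ ≤ K := by
          rw [hKdef]
          have := mul_le_mul_of_nonneg_left (hxdist s hs) hLψ
          linarith
  -- step D
  have hD0 : ∀ a b : ℝ, 0 ≤ a → a ≤ b → b ≤ t →
      ‖v b‖^2 - ‖v a‖^2 ≤ ⟪(2:ℝ) • v b, ∫ s in a..b, v' s⟫ := by
    intro a b h0a hab hbt
    rw [← hvdiff a b h0a hab hbt, real_inner_smul_left]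
    have h1 : (⟪v b, v b - v a⟫ : ℝ) = ‖v b‖^2 - ⟪v b, v a⟫ := by
      rw [inner_sub_right, real_inner_self_eq_norm_sq]
    have h2 : ‖v b - v a‖^2 = ‖v b‖^2 - 2*⟪v b, v a⟫ + ‖v a‖^2 :=
      norm_sub_sq_real _ _
    nlinarith [sq_nonneg ‖v b - v a‖, sq_nonneg (‖v b - v a‖)]
  have hD : ‖v t‖^2 - ‖v 0‖^2 ≤ ∫ s in (0:ℝ)..t, ⟪(2:ℝ) • v s, v' s⟫ := by
    have hcont2 : ContinuousOn (fun s => (2:ℝ) • v s) (Icc 0 t) :=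
      hvct.const_smul (2:ℝ)
    exact aux_tele ht0' hcont2 hvint_t hD0
  have hDbound : ∀ᵐ s ∂(volume.restrict (Ioo 0 t)),
      (⟪(2:ℝ) • v s, v' s⟫ : ℝ) ≤ K^2/2 := by
    filter_upwards [hae] with s hstriple
    obtain ⟨hs1, hs2, hs3⟩ := hstriple
    have heq2 : (⟪lam s • x' s + v' s + v s + ψ' (x s), v' s⟫ : ℝ) = 0 := by
      rw [hs1, inner_zero_left]
    rw [inner_add_left, inner_add_left, inner_add_left, real_inner_smul_left,
      real_inner_self_eq_norm_sq] at heq2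
    have hlams : c₀ ≤ lam s := hlam s ⟨hs3.1.le, hs3.2.le.trans htT⟩
    have hsmem : s ∈ Icc (0:ℝ) t := ⟨hs3.1.le, hs3.2.le⟩
    have hKs : ‖ψ' (x s)‖ ≤ K := hKb s hsmem
    have hCS : -(K * ‖v' s‖) ≤ ⟪ψ' (x s), v' s⟫ := by
      have h1 := abs_real_inner_le_norm (ψ' (x s)) (v' s)
      have h2 : ‖ψ' (x s)‖ * ‖v' s‖ ≤ K * ‖v' s‖ :=
        mul_le_mul_of_nonneg_right hKs (norm_nonneg _)
      have h3 := neg_abs_le (⟪ψ' (x s), v' s⟫ : ℝ)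
      linarith
    have h4 : 0 ≤ lam s * ⟪x' s, v' s⟫ :=
      mul_nonneg (le_trans hc₀.le hlams) (by rw [real_inner_comm]; exact hs2)
    rw [real_inner_smul_left]
    have h5 : 0 ≤ ‖v' s‖^2 - K*‖v' s‖ + K^2/4 := by nlinarith [sq_nonneg (‖v' s‖ - K/2)]
    generalize hg1 : (inner ℝ (v s) (v' s) : ℝ) = a1 at heq2 ⊢
    generalize hg2 : (inner ℝ (x' s) (v' s) : ℝ) = a2 at heq2 h4
    generalize hg3 : (inner ℝ (ψ' (x s)) (v' s) : ℝ) = a3 at heq2 hCS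
    generalize hg4 : ‖v' s‖ = u at heq2 h5 hCS
    clear_value S N K
    linarith [heq2, h4, hCS, h5]
  have hDint : (∫ s in (0:ℝ)..t, ⟪(2:ℝ) • v s, v' s⟫) ≤ t * (K^2/2) := by
    have hvv : IntegrableOn (fun s => ⟪(2:ℝ) • v s, v' s⟫) (Icc 0 t) :=
      aux_int_inner (hvct.const_smul (2:ℝ)) hvint_t
    have hb : ∀ᵐ s ∂(volume.restrict (Icc 0 t)),
        (⟪(2:ℝ) • v s, v' s⟫ : ℝ) ≤ K^2/2 := by
      rw [← hIooIcc]; exact hDbound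
    have h1 : (∫ s in Icc (0:ℝ) t, ⟪(2:ℝ) • v s, v' s⟫)
        ≤ ∫ _ in Icc (0:ℝ) t, K^2/2 :=
      integral_mono_ae hvv (integrableOn_const (by
        rw [Real.volume_Icc]; exact ENNReal.ofReal_ne_top)) hb
    rw [setIntegral_const, Real.volume_real_Icc_of_le (by linarith), smul_eq_mul] at h1
    rw [aux_interval_eq_Icc _ ht0'.le]
    simpa using h1
  have hv2 : ‖v t‖^2 ≤ ‖v₀‖^2 + t * (K^2/2) := by
    have := hD.trans hDint
    rw [hv0] at this
    linarith
  have hfin1 : ‖v t‖ ≤ ‖v₀‖ + Real.sqrt (t/2) * K := by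
    have hs2 : Real.sqrt (t/2)^2 = t/2 := Real.sq_sqrt (by positivity)
    have hR0 : 0 ≤ ‖v₀‖ + Real.sqrt (t/2) * K := by positivity
    have hsq : ‖v t‖^2 ≤ (‖v₀‖ + Real.sqrt (t/2) * K)^2 := by
      nlinarith [mul_nonneg (mul_nonneg (norm_nonneg v₀) (Real.sqrt_nonneg (t/2))) hK0]
    nlinarith [norm_nonneg (v t)]
  -- final comparison
  have hsqrt1 : Real.sqrt (t/2) ≤ Real.sqrt (2*T) :=
    Real.sqrt_le_sqrt (by linarith)
  have hterm1 : Real.sqrt (t/2) * ‖ψ' x₀‖ ≤ Real.sqrt (2*T) * ‖ψ' x₀‖ :=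
    mul_le_mul_of_nonneg_right hsqrt1 (norm_nonneg _)
  have hterm2 : Real.sqrt (t/2) * (Lψ * Real.sqrt (t * S))
      ≤ Real.sqrt (2/c₀) * T * Lψ * Real.sqrt (Egap φ ψ x₀) := by
    have hSle : S ≤ Egap φ ψ x₀ / c₀ := by
      rw [le_div_iff₀ hc₀]
      linarith [hcS]
    have hmain : Real.sqrt (t/2) * Real.sqrt (t * S)
        ≤ Real.sqrt (2/c₀) * T * Real.sqrt (Egap φ ψ x₀) := by
      rw [← Real.sqrt_mul (by positivity : (0:ℝ) ≤ t/2)]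
      have hrhs : Real.sqrt (2/c₀) * T * Real.sqrt (Egap φ ψ x₀)
          = Real.sqrt ((2/c₀) * T^2 * Egap φ ψ x₀) := by
        rw [Real.sqrt_mul (by positivity : (0:ℝ) ≤ 2/c₀ * T^2),
          Real.sqrt_mul (by positivity : (0:ℝ) ≤ 2/c₀), Real.sqrt_sq hTne]
      rw [hrhs]
      apply Real.sqrt_le_sqrt
      have h1 : t/2 * (t * S) = t * t * S / 2 := by ring
      have h2 : t * t * S ≤ T * T * (Egap φ ψ x₀ / c₀) := by
        have ha : t * t * S ≤ T * T * S :=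
          mul_le_mul_of_nonneg_right (mul_le_mul htT htT ht0'.le hTne) hS0
        have hb : T * T * S ≤ T * T * (Egap φ ψ x₀ / c₀) :=
          mul_le_mul_of_nonneg_left hSle (by positivity)
        linarith
      have h3 : 2/c₀ * T^2 * Egap φ ψ x₀ = 2 * (T * T * (Egap φ ψ x₀ / c₀)) := by
        field_simp
      rw [h1, h3]
      have h4 : 0 ≤ T * T * (Egap φ ψ x₀ / c₀) := by positivity
      linarith
    calc Real.sqrt (t/2) * (Lψ * Real.sqrt (t * S))
        = Lψ * (Real.sqrt (t/2) * Real.sqrt (t * S)) := by ring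
      _ ≤ Lψ * (Real.sqrt (2/c₀) * T * Real.sqrt (Egap φ ψ x₀)) :=
          mul_le_mul_of_nonneg_left hmain hLψ
      _ = Real.sqrt (2/c₀) * T * Lψ * Real.sqrt (Egap φ ψ x₀) := by ring
  calc ‖v t‖ ≤ ‖v₀‖ + Real.sqrt (t/2) * K := hfin1
    _ = ‖v₀‖ + Real.sqrt (t/2) * ‖ψ' x₀‖ + Real.sqrt (t/2) * (Lψ * Real.sqrt (t * S)) := by
        rw [hKdef]; ring
    _ ≤ ‖v₀‖ + Real.sqrt (2*T) * ‖ψ' x₀‖ +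
        Real.sqrt (2/c₀) * T * Lψ * Real.sqrt (Egap φ ψ x₀) := by
        linarith
end

section
/- Let (x,v) be a strong solution on [0,T] of v ∈ ∂φ(x) and λẋ + v̇ + v + ∇ψ(x) = 0 a.e., with λ ≥ c₀ > 0. Then for almost every t, c₀‖ẋ(t)‖ ≤ ‖v(t) + ∇ψ(x(t))‖ and ‖v̇(t)‖ ≤ ‖v(t) + ∇ψ(x(t))‖. -/
open MeasureTheory Set Filter
open scoped Topology

variable {H : Type*} [NormedAddCommGroup H] [InnerProductSpace ℝ H] [CompleteSpace H]

omit [CompleteSpace H] in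
lemma subdiff_mono_s5 {φ : H → EReal} (hbot : ∀ z, φ z ≠ ⊥) (htop : ∃ z, φ z ≠ ⊤)
    {a b va vb : H} (ha : IsSubdiff φ a va) (hb : IsSubdiff φ b vb) :
    0 ≤ (inner ℝ (vb - va) (b - a) : ℝ) := by
  have hfin : ∀ (c : H) (vc : H), IsSubdiff φ c vc → φ c ≠ ⊤ := by
    intro c vc hc hctop
    obtain ⟨z, hz⟩ := htop
    apply hz
    have := hc z
    rw [hctop] at this
    rwa [EReal.top_add_of_ne_bot (by exact_mod_cast EReal.coe_ne_bot _), top_le_iff] at this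
  have hat := hfin a va ha
  have hbt := hfin b vb hb
  lift φ a to ℝ using ⟨hat, hbot a⟩ with ra hra
  lift φ b to ℝ using ⟨hbt, hbot b⟩ with rb hrb
  have h1 := ha b
  have h2 := hb a
  rw [← hra, ← hrb] at h1 h2
  rw [← EReal.coe_add, EReal.coe_le_coe_iff] at h1 h2
  have e1 : (inner ℝ vb (a - b) : ℝ) = inner ℝ vb a - inner ℝ vb b := inner_sub_right _ _ _
  have e2 : (inner ℝ va (b - a) : ℝ) = inner ℝ va b - inner ℝ va a := inner_sub_right _ _ _
  have e3 : (inner ℝ (vb - va) (b - a) : ℝ)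
      = (inner ℝ vb b - inner ℝ vb a) - (inner ℝ va b - inner ℝ va a) := by
    rw [inner_sub_left, inner_sub_right, inner_sub_right]; try ring
  rw [e3]; rw [e1] at h2; rw [e2] at h1
  linarith

theorem stmt5 (φ : H → EReal) (ψ : H → ℝ) (ψ' : H → H) (hst : Standing φ ψ ψ')
    (lam : ℝ → ℝ) (T c₀ : ℝ) (hT : 0 < T) (hc₀ : 0 < c₀)
    (hlam : ∀ t ∈ Set.Icc (0:ℝ) T, c₀ ≤ lam t)
    (x v x' v' : ℝ → H) (x₀ v₀ : H) (hx0 : x 0 = x₀) (hv0 : v 0 = v₀)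
    (hv₀ : IsSubdiff φ x₀ v₀)
    (sol : StrongSol φ ψ' lam T x v x' v') :
    ∀ᵐ t ∂(volume.restrict (Set.Ioo 0 T)),
      c₀ * ‖x' t‖ ≤ ‖v t + ψ' (x t)‖ ∧ ‖v' t‖ ≤ ‖v t + ψ' (x t)‖ := by
  have hbot := hst.1.1
  have htop := hst.1.2.1
  filter_upwards [sol.xderiv, sol.vderiv, sol.eqn,
    ae_restrict_mem measurableSet_Ioo] with t hx hv heq ht
  have htIcc : t ∈ Set.Icc (0:ℝ) T := ⟨le_of_lt ht.1, le_of_lt ht.2⟩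
  set w := v t + ψ' (x t) with hw
  have hts : lam t • x' t + v' t = -w := by
    have h0 : (lam t • x' t + v' t) + (v t + ψ' (x t)) = 0 := by
      rw [← add_assoc]; exact heq
    exact eq_neg_of_add_eq_zero_left h0
  -- key monotonicity: 0 ≤ ⟨v'(t), x'(t)⟩
  have hkey : 0 ≤ (inner ℝ (v' t) (x' t) : ℝ) := by
    have hmap : Tendsto (fun h : ℝ => t + h) (𝓝[>] (0:ℝ)) (𝓝[≠] t) := by
      apply tendsto_nhdsWithin_of_tendsto_nhds_of_eventually_within
      · have : Tendsto (fun h : ℝ => t + h) (𝓝 (0:ℝ)) (𝓝 t) := by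
          simpa using (tendsto_const_nhds.add tendsto_id : Tendsto (fun h : ℝ => t + h) (𝓝 0) (𝓝 (t + 0)))
        exact this.mono_left nhdsWithin_le_nhds
      · filter_upwards [self_mem_nhdsWithin] with h hh
        simp only [mem_compl_iff, mem_singleton_iff]
        intro hcontra
        have : h = 0 := by linarith [add_eq_left.mp hcontra]
        exact (lt_irrefl (0:ℝ)) (this ▸ hh)
    have hsx : Tendsto (fun h : ℝ => slope x t (t + h)) (𝓝[>] (0:ℝ)) (𝓝 (x' t)) :=
      (hasDerivAt_iff_tendsto_slope.mp hx).comp hmap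
    have hsv : Tendsto (fun h : ℝ => slope v t (t + h)) (𝓝[>] (0:ℝ)) (𝓝 (v' t)) :=
      (hasDerivAt_iff_tendsto_slope.mp hv).comp hmap
    have hlim : Tendsto (fun h : ℝ => (inner ℝ (slope v t (t + h)) (slope x t (t + h)) : ℝ))
        (𝓝[>] (0:ℝ)) (𝓝 (inner ℝ (v' t) (x' t))) := hsv.inner hsx
    refine ge_of_tendsto hlim ?_
    have hmem : Set.Ioo (0:ℝ) (T - t) ∈ 𝓝[>] (0:ℝ) :=
      Ioo_mem_nhdsGT_of_mem ⟨le_refl 0, sub_pos.mpr ht.2⟩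
    filter_upwards [hmem] with h hh
    have hhpos : 0 < h := hh.1
    have hthIcc : t + h ∈ Set.Icc (0:ℝ) T :=
      ⟨by linarith [ht.1], by linarith [hh.2]⟩
    have hmono : 0 ≤ (inner ℝ (v (t + h) - v t) (x (t + h) - x t) : ℝ) :=
      subdiff_mono_s5 hbot htop (sol.subdiff t htIcc) (sol.subdiff (t + h) hthIcc)
    have hsl : ∀ f : ℝ → H, slope f t (t + h) = h⁻¹ • (f (t + h) - f t) := by
      intro f; rw [slope_def_module]; congr 1; ring
    rw [hsl v, hsl x, real_inner_smul_left, real_inner_smul_right]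
    positivity
  -- the equation and Cauchy–Schwarz
  have hcs_x : (inner ℝ (-w) (x' t) : ℝ) ≤ ‖w‖ * ‖x' t‖ := by
    have := real_inner_le_norm (-w) (x' t); rwa [norm_neg] at this
  have hcs_v : (inner ℝ (-w) (v' t) : ℝ) ≤ ‖w‖ * ‖v' t‖ := by
    have := real_inner_le_norm (-w) (v' t); rwa [norm_neg] at this
  have hlamt := hlam t htIcc
  constructor
  · have hexp : (inner ℝ (lam t • x' t + v' t) (x' t) : ℝ)
        = lam t * ‖x' t‖ ^ 2 + inner ℝ (v' t) (x' t) := by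
      rw [inner_add_left, real_inner_smul_left, real_inner_self_eq_norm_sq]
    have h1 : lam t * ‖x' t‖ ^ 2 + (inner ℝ (v' t) (x' t) : ℝ) ≤ ‖w‖ * ‖x' t‖ := by
      rw [← hexp, hts]; exact hcs_x
    have h2 : c₀ * ‖x' t‖ * ‖x' t‖ ≤ ‖w‖ * ‖x' t‖ := by
      nlinarith [sq_nonneg ‖x' t‖, norm_nonneg (x' t)]
    rcases eq_or_lt_of_le (norm_nonneg (x' t)) with h0 | h0
    · rw [← h0, mul_zero]; exact norm_nonneg _
    · exact le_of_mul_le_mul_right h2 h0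
  · have hexp : (inner ℝ (lam t • x' t + v' t) (v' t) : ℝ)
        = lam t * inner ℝ (x' t) (v' t) + ‖v' t‖ ^ 2 := by
      rw [inner_add_left, real_inner_smul_left, real_inner_self_eq_norm_sq]
    have h1 : lam t * (inner ℝ (x' t) (v' t) : ℝ) + ‖v' t‖ ^ 2 ≤ ‖w‖ * ‖v' t‖ := by
      rw [← hexp, hts]; exact hcs_v
    have hcomm : (inner ℝ (x' t) (v' t) : ℝ) = inner ℝ (v' t) (x' t) := real_inner_comm _ _
    have h2 : ‖v' t‖ * ‖v' t‖ ≤ ‖w‖ * ‖v' t‖ := by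
      nlinarith [mul_nonneg (le_of_lt (lt_of_lt_of_le hc₀ hlamt)) (hcomm ▸ hkey)]
    rcases eq_or_lt_of_le (norm_nonneg (v' t)) with h0 | h0
    · rw [← h0]; exact norm_nonneg _
    · exact le_of_mul_le_mul_right h2 h0
end

section
/- (Stability theorem) Let λ, η : [0,T] → [c₀,∞) be absolutely continuous with c₀ > 0, and let (x,v), (y,w) : [0,T] → H×H be strong solutions of λẋ + v̇ + v + ∇ψ(x) = 0, v ∈ ∂φ(x), x(0)=x₀, v(0)=v₀ and ηẏ + ẇ + w + ∇ψ(y) = 0, w ∈ ∂φ(y), y(0)=y₀, w(0)=w₀, respectively. Set θ(t) = √(c₀²‖x(t)−y(t)‖² + ‖v(t)−w(t)‖²). Then ‖θ‖_{L^∞([0,T])} ≤ [ ((λ(0)+η(0))/2)‖x₀−y₀‖ + ‖v₀−w₀‖ + (C/2)‖λ−η‖_{L¹([0,T])} ] · exp( ‖λ̇+η̇‖_{L¹([0,T])}/(2c₀) + T(1 + L_ψ/c₀) ), where C is any upper bound for ‖ẋ + ẏ‖_{L^∞(0,T;H)}. -/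
open MeasureTheory Set Filter
open scoped Topology

variable {H : Type*} [NormedAddCommGroup H] [InnerProductSpace ℝ H] [CompleteSpace H]

set_option linter.unusedVariables false
set_option linter.unusedSectionVars false

lemma subdiff_ne_top {φ : H → EReal} (hb : ∀ z, φ z ≠ ⊥) {z₀ : H} (ht : φ z₀ ≠ ⊤)
    {x v : H} (hv : IsSubdiff φ x v) : φ x ≠ ⊤ := by
  intro h
  have := hv z₀
  rw [h] at this
  rw [EReal.top_add_coe] at this
  exact ht (top_le_iff.mp this)

lemma subdiff_mono_s9 {φ : H → EReal} (hφ : ProperConvexLSC φ)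
    {x v y w : H} (hv : IsSubdiff φ x v) (hw : IsSubdiff φ y w) :
    0 ≤ (inner ℝ (x - y) (v - w) : ℝ) := by
  obtain ⟨hb, ⟨z₀, ht⟩, -, -⟩ := hφ
  have hx : φ x ≠ ⊤ := subdiff_ne_top hb ht hv
  have hy : φ y ≠ ⊤ := subdiff_ne_top hb ht hw
  set p := (φ x).toReal with hp
  set q := (φ y).toReal with hq
  have hpx : φ x = (p : EReal) := (EReal.coe_toReal hx (hb x)).symm
  have hqy : φ y = (q : EReal) := (EReal.coe_toReal hy (hb y)).symm
  have h1 := hv y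
  have h2 := hw x
  rw [hpx, hqy] at h1 h2
  rw [← EReal.coe_add, EReal.coe_le_coe_iff] at h1 h2
  have hsum : (inner ℝ v (y - x) : ℝ) + (inner ℝ w (x - y) : ℝ) ≤ 0 := by linarith
  have h3 : (inner ℝ v (y - x) : ℝ) = - (inner ℝ v (x - y) : ℝ) := by
    rw [← inner_neg_right]; congr 1; abel
  have h4 : (inner ℝ (x - y) (v - w) : ℝ) = (inner ℝ v (x-y) : ℝ) - (inner ℝ w (x-y) : ℝ) := by
    rw [real_inner_comm, inner_sub_left]
  rw [h4]
  rw [h3] at hsum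
  linarith [real_inner_comm v (x - y), real_inner_comm w (x - y)]

/-- scalar L¹ • bounded measurable vector is integrable -/
lemma int_smul_bdd {S : Set ℝ} (hS : MeasurableSet S) {c : ℝ → ℝ} {X : ℝ → H}
    (hc : IntegrableOn c S) (hX : AEStronglyMeasurable X (volume.restrict S))
    {M : ℝ} (hM : ∀ s ∈ S, ‖X s‖ ≤ M) :
    IntegrableOn (fun s => c s • X s) S := by
  refine Integrable.mono' (hc.norm.mul_const M) (hc.aestronglyMeasurable.smul hX) ?_
  filter_upwards [ae_restrict_mem hS] with s hs
  rw [norm_smul]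
  exact mul_le_mul_of_nonneg_left (hM s hs) (norm_nonneg _)

/-- bounded measurable scalar * L¹ vector is integrable -/
lemma int_bdd_smul {S : Set ℝ} (hS : MeasurableSet S) {c : ℝ → ℝ} {X : ℝ → H}
    (hc : AEStronglyMeasurable c (volume.restrict S)) (hX : IntegrableOn X S)
    {M : ℝ} (hM : ∀ s ∈ S, |c s| ≤ M) :
    IntegrableOn (fun s => c s • X s) S := by
  refine Integrable.mono' (hX.norm.const_mul M) (hc.smul hX.aestronglyMeasurable) ?_
  filter_upwards [ae_restrict_mem hS] with s hs
  rw [norm_smul]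
  exact mul_le_mul_of_nonneg_right (hM s hs) (norm_nonneg _)

/-- Core Fubini identity: product of primitives. -/
lemma prod_primitives {T t : ℝ} (hT : 0 ≤ T) (ht : t ∈ Set.Icc 0 T)
    {p' : ℝ → ℝ} {q' : ℝ → H}
    (hp' : IntegrableOn p' (Set.Icc 0 T)) (hq' : IntegrableOn q' (Set.Icc 0 T)) :
    (∫ s in (0:ℝ)..t, p' s) • (∫ s in (0:ℝ)..t, q' s) =
      ∫ s in (0:ℝ)..t, ((p' s) • (∫ r in (0:ℝ)..s, q' r)
        + (∫ r in (0:ℝ)..s, p' r) • q' s) := by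
  obtain ⟨ht0, htT⟩ := ht
  set μ := volume.restrict (Set.Ioc (0:ℝ) t) with hμ
  have hsub : Set.Ioc (0:ℝ) t ⊆ Set.Icc 0 T := fun s hs => ⟨hs.1.le, hs.2.trans htT⟩
  have hp : Integrable p' μ := (hp'.mono_set hsub)
  have hq : Integrable q' μ := (hq'.mono_set hsub)
  set P : ℝ → ℝ := fun s => ∫ r in (0:ℝ)..s, p' r with hP
  set Q : ℝ → H := fun s => ∫ r in (0:ℝ)..s, q' r with hQ
  -- the kernel
  set F : ℝ × ℝ → H := fun z => Set.indicator {z : ℝ × ℝ | z.1 < z.2}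
      (fun z => p' z.1 • q' z.2) z with hF
  have hmeas : MeasurableSet {z : ℝ × ℝ | z.1 < z.2} :=
    measurableSet_lt measurable_fst measurable_snd
  have hint0 : Integrable (fun z : ℝ × ℝ => p' z.1 • q' z.2) (μ.prod μ) :=
    Integrable.smul_prod hp hq
  have hintF : Integrable F (μ.prod μ) := hint0.indicator hmeas
  -- inner integral in r
  have hinner1 : ∀ s ∈ Set.Ioc (0:ℝ) t,
      (∫ r, F (s, r) ∂μ) = p' s • (∫ r in Set.Ioc s t, q' r) := by
    intro s hs
    have : (fun r => F (s, r)) = Set.indicator (Set.Ioi s) (fun r => p' s • q' r) := by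
      funext r
      simp only [hF, Set.indicator, Set.mem_setOf_eq, Set.mem_Ioi]
    rw [this, hμ, setIntegral_indicator measurableSet_Ioi]
    have : Set.Ioc (0:ℝ) t ∩ Set.Ioi s = Set.Ioc s t := by
      ext r
      simp only [Set.mem_inter_iff, Set.mem_Ioc, Set.mem_Ioi]
      constructor
      · rintro ⟨⟨_, h2⟩, h3⟩; exact ⟨h3, h2⟩
      · rintro ⟨h1, h2⟩; exact ⟨⟨hs.1.trans h1, h2⟩, h1⟩
    rw [this, integral_smul]
  -- inner integral in s
  have hinner2 : ∀ r ∈ Set.Ioc (0:ℝ) t,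
      (∫ s, F (s, r) ∂μ) = P r • q' r := by
    intro r hr
    have : (fun s => F (s, r)) = Set.indicator (Set.Iio r) (fun s => p' s • q' r) := by
      funext s
      simp only [hF, Set.indicator, Set.mem_setOf_eq, Set.mem_Iio]
    rw [this, hμ, setIntegral_indicator measurableSet_Iio]
    have h2 : Set.Ioc (0:ℝ) t ∩ Set.Iio r = Set.Ioo 0 r := by
      ext s
      simp only [Set.mem_inter_iff, Set.mem_Ioc, Set.mem_Iio, Set.mem_Ioo]
      constructor
      · rintro ⟨⟨h1, _⟩, h3⟩; exact ⟨h1, h3⟩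
      · rintro ⟨h1, h2⟩; exact ⟨⟨h1, h2.le.trans hr.2⟩, h2⟩
    rw [h2, integral_smul_const]
    have h3 : P r = ∫ x in Set.Ioo 0 r, p' x := by
      show (∫ u in (0:ℝ)..r, p' u) = _
      rw [intervalIntegral.integral_of_le hr.1.le, integral_Ioc_eq_integral_Ioo]
    rw [h3]
  -- continuity and bounds for primitives
  have hQc : ContinuousOn Q (Set.Icc 0 t) := by
    have := intervalIntegral.continuousOn_primitive_interval
      (μ := volume) (a := (0:ℝ)) (b := t) (f := q')
      (by rw [Set.uIcc_of_le ht0]; exact hq'.mono_set (Set.Icc_subset_Icc le_rfl htT))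
    rwa [Set.uIcc_of_le ht0] at this
  have hPc : ContinuousOn P (Set.Icc 0 t) := by
    have := intervalIntegral.continuousOn_primitive_interval
      (μ := volume) (a := (0:ℝ)) (b := t) (f := p')
      (by rw [Set.uIcc_of_le ht0]; exact hp'.mono_set (Set.Icc_subset_Icc le_rfl htT))
    rwa [Set.uIcc_of_le ht0] at this
  obtain ⟨MQ, hMQ⟩ := (isCompact_Icc (a := (0:ℝ)) (b := t)).exists_bound_of_continuousOn hQc
  obtain ⟨MP, hMP⟩ := (isCompact_Icc (a := (0:ℝ)) (b := t)).exists_bound_of_continuousOn hPc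
  have hIocIcc : Set.Ioc (0:ℝ) t ⊆ Set.Icc 0 t := Set.Ioc_subset_Icc_self
  have hmeasIoc : MeasurableSet (Set.Ioc (0:ℝ) t) := measurableSet_Ioc
  -- integrabilities
  have hpQ : Integrable (fun s => p' s • Q s) μ :=
    int_smul_bdd hmeasIoc hp
      ((hQc.mono hIocIcc).aestronglyMeasurable hmeasIoc)
      (fun s hs => hMQ s (hIocIcc hs))
  have hPq : Integrable (fun s => P s • q' s) μ :=
    int_bdd_smul hmeasIoc
      ((hPc.mono hIocIcc).aestronglyMeasurable hmeasIoc) hq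
      (fun s hs => by rw [← Real.norm_eq_abs]; exact hMP s (hIocIcc hs))
  have hFs : Integrable (fun s => ∫ r, F (s, r) ∂μ) μ := hintF.integral_prod_left
  -- pointwise decomposition of the left factor
  have key : ∀ s ∈ Set.Ioc (0:ℝ) t, p' s • Q t = p' s • Q s + ∫ r, F (s, r) ∂μ := by
    intro s hs
    rw [hinner1 s hs]
    have h1 : IntervalIntegrable q' volume 0 s := by
      rw [intervalIntegrable_iff_integrableOn_Ioc_of_le hs.1.le]
      exact hq'.mono_set (fun r hr => ⟨hr.1.le, hr.2.trans (hs.2.trans htT)⟩)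
    have h2 : IntervalIntegrable q' volume s t := by
      rw [intervalIntegrable_iff_integrableOn_Ioc_of_le hs.2]
      exact hq'.mono_set (fun r hr => ⟨(hs.1.trans hr.1).le, hr.2.trans htT⟩)
    have hQt : Q t = Q s + ∫ r in s..t, q' r :=
      (intervalIntegral.integral_add_adjacent_intervals h1 h2).symm
    rw [hQt, smul_add, intervalIntegral.integral_of_le hs.2]
  -- put it together
  have swap : (∫ s, (∫ r, F (s, r) ∂μ) ∂μ) = ∫ r, (∫ s, F (s, r) ∂μ) ∂μ := by
    have huncurry : Function.uncurry (fun s r => F (s, r)) = F := by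
      funext z; rfl
    exact MeasureTheory.integral_integral_swap (by rw [huncurry]; exact hintF)
  have lhs1 : (∫ s in (0:ℝ)..t, p' s) • (∫ s in (0:ℝ)..t, q' s)
      = ∫ s, p' s • Q t ∂μ := by
    rw [intervalIntegral.integral_of_le ht0, hμ, integral_smul_const]
  have lhs2 : (∫ s, p' s • Q t ∂μ) = (∫ s, p' s • Q s ∂μ) + ∫ r, P r • q' r ∂μ := by
    rw [show (∫ s, p' s • Q t ∂μ) = ∫ s, (p' s • Q s + ∫ r, F (s, r) ∂μ) ∂μ from
      setIntegral_congr_fun hmeasIoc key]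
    rw [integral_add hpQ hFs, swap]
    congr 1
    exact setIntegral_congr_fun hmeasIoc hinner2
  rw [lhs1, lhs2, intervalIntegral.integral_of_le ht0, ← integral_add hpQ hPq]

/-- Product rule in integral form for functions given by integral representations. -/
lemma parts_rep {T : ℝ} (hT : 0 ≤ T) {p : ℝ → ℝ} {q : ℝ → H} {p' : ℝ → ℝ} {q' : ℝ → H}
    (hp' : IntegrableOn p' (Set.Icc 0 T)) (hq' : IntegrableOn q' (Set.Icc 0 T))
    (hp : ∀ t ∈ Set.Icc (0:ℝ) T, p t = p 0 + ∫ s in (0:ℝ)..t, p' s)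
    (hq : ∀ t ∈ Set.Icc (0:ℝ) T, q t = q 0 + ∫ s in (0:ℝ)..t, q' s)
    {t : ℝ} (ht : t ∈ Set.Icc (0:ℝ) T) :
    p t • q t = p 0 • q 0 + ∫ s in (0:ℝ)..t, (p' s • q s + p s • q' s) := by
  obtain ⟨ht0, htT⟩ := ht
  set μ := volume.restrict (Set.Ioc (0:ℝ) t) with hμ
  have hsub : Set.Ioc (0:ℝ) t ⊆ Set.Icc 0 T := fun s hs => ⟨hs.1.le, hs.2.trans htT⟩
  have hpμ : Integrable p' μ := (hp'.mono_set hsub)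
  have hqμ : Integrable q' μ := (hq'.mono_set hsub)
  set P : ℝ → ℝ := fun s => ∫ r in (0:ℝ)..s, p' r with hP
  set Q : ℝ → H := fun s => ∫ r in (0:ℝ)..s, q' r with hQ
  have hQc : ContinuousOn Q (Set.Icc 0 t) := by
    have := intervalIntegral.continuousOn_primitive_interval
      (μ := volume) (a := (0:ℝ)) (b := t) (f := q')
      (by rw [Set.uIcc_of_le ht0]; exact hq'.mono_set (Set.Icc_subset_Icc le_rfl htT))
    rwa [Set.uIcc_of_le ht0] at this
  have hPc : ContinuousOn P (Set.Icc 0 t) := by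
    have := intervalIntegral.continuousOn_primitive_interval
      (μ := volume) (a := (0:ℝ)) (b := t) (f := p')
      (by rw [Set.uIcc_of_le ht0]; exact hp'.mono_set (Set.Icc_subset_Icc le_rfl htT))
    rwa [Set.uIcc_of_le ht0] at this
  obtain ⟨MQ, hMQ⟩ := (isCompact_Icc (a := (0:ℝ)) (b := t)).exists_bound_of_continuousOn hQc
  obtain ⟨MP, hMP⟩ := (isCompact_Icc (a := (0:ℝ)) (b := t)).exists_bound_of_continuousOn hPc
  have hIocIcc : Set.Ioc (0:ℝ) t ⊆ Set.Icc 0 t := Set.Ioc_subset_Icc_self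
  have hmeasIoc : MeasurableSet (Set.Ioc (0:ℝ) t) := measurableSet_Ioc
  have hpQ : Integrable (fun s => p' s • Q s) μ :=
    int_smul_bdd hmeasIoc hpμ
      ((hQc.mono hIocIcc).aestronglyMeasurable hmeasIoc)
      (fun s hs => hMQ s (hIocIcc hs))
  have hPq : Integrable (fun s => P s • q' s) μ :=
    int_bdd_smul hmeasIoc
      ((hPc.mono hIocIcc).aestronglyMeasurable hmeasIoc) hqμ
      (fun s hs => by rw [← Real.norm_eq_abs]; exact hMP s (hIocIcc hs))
  have hA : Integrable (fun s => p' s • q 0) μ := hpμ.smul_const (q 0)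
  have hB : Integrable (fun s => p 0 • q' s) μ := hqμ.smul (p 0)
  -- rewrite the integrand
  have hcongr : ∀ s ∈ Set.Ioc (0:ℝ) t,
      p' s • q s + p s • q' s
        = (p' s • q 0 + p 0 • q' s) + (p' s • Q s + P s • q' s) := by
    intro s hs
    rw [hq s (hsub hs), hp s (hsub hs)]
    show p' s • (q 0 + Q s) + (p 0 + P s) • q' s = _
    rw [smul_add, add_smul]
    abel
  have hsplit : (∫ s in (0:ℝ)..t, (p' s • q s + p s • q' s))
      = ((∫ s in (0:ℝ)..t, p' s) • q 0 + p 0 • (∫ s in (0:ℝ)..t, q' s))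
        + (∫ s in (0:ℝ)..t, (p' s • Q s + P s • q' s)) := by
    have hAB : Integrable (fun s => p' s • q 0 + p 0 • q' s) μ := hA.add hB
    have hCD : Integrable (fun s => p' s • Q s + P s • q' s) μ := hpQ.add hPq
    have e0 : (∫ s in (0:ℝ)..t, (p' s • q s + p s • q' s))
        = ∫ s, (p' s • q s + p s • q' s) ∂μ := intervalIntegral.integral_of_le ht0
    have e1 : (∫ s in (0:ℝ)..t, p' s) = ∫ s, p' s ∂μ := intervalIntegral.integral_of_le ht0
    have e2 : (∫ s in (0:ℝ)..t, q' s) = ∫ s, q' s ∂μ := intervalIntegral.integral_of_le ht0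
    have e3 : (∫ s in (0:ℝ)..t, (p' s • Q s + P s • q' s))
        = ∫ s, (p' s • Q s + P s • q' s) ∂μ := intervalIntegral.integral_of_le ht0
    rw [e0, e1, e2, e3, setIntegral_congr_fun hmeasIoc hcongr,
      integral_add hAB hCD, integral_add hA hB, integral_smul_const, integral_smul]
  rw [hsplit, ← prod_primitives hT ⟨ht0, htT⟩ hp' hq',
    hp t ⟨ht0, htT⟩, hq t ⟨ht0, htT⟩]
  show (p 0 + P t) • (q 0 + Q t) = _
  rw [smul_add, add_smul, add_smul]
  abel

/-- Gronwall inequality in integral form on `[0,T]`. -/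
lemma gronwall_int {T : ℝ} (hT : 0 < T) {g a : ℝ → ℝ} {c : ℝ} (hc : 0 ≤ c)
    (hg_cont : ContinuousOn g (Set.Icc 0 T))
    (hg_nonneg : ∀ t ∈ Set.Icc (0:ℝ) T, 0 ≤ g t)
    (ha_int : IntegrableOn a (Set.Icc 0 T))
    (ha_nonneg : ∀ s, 0 ≤ a s)
    (hineq : ∀ t ∈ Set.Icc (0:ℝ) T, g t ≤ c + ∫ s in (0:ℝ)..t, a s * g s) :
    ∀ t ∈ Set.Icc (0:ℝ) T, g t ≤ c * Real.exp (∫ s in (0:ℝ)..T, a s) := by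
  intro t ht
  -- continuous extension of g
  set π : ℝ → ℝ := fun r => min (max r 0) T with hπ
  have hπc : Continuous π := (continuous_id.max continuous_const).min continuous_const
  have hπmem : ∀ r, π r ∈ Set.Icc (0:ℝ) T := fun r =>
    ⟨le_min (le_max_right r 0) hT.le, min_le_right _ _⟩
  set g₁ : ℝ → ℝ := fun r => g (π r) with hg₁
  have hg₁c : Continuous g₁ := hg_cont.comp_continuous hπc hπmem
  have hg₁eq : ∀ r ∈ Set.Icc (0:ℝ) T, g₁ r = g r := by
    intro r hr
    simp only [hg₁, hπ, max_eq_left hr.1, min_eq_left hr.2]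
  -- bound
  obtain ⟨M, hM⟩ := (isCompact_Icc (a := (0:ℝ)) (b := T)).exists_bound_of_continuousOn hg_cont
  have hM0 : 0 ≤ M := le_trans (norm_nonneg _) (hM 0 ⟨le_rfl, hT.le⟩)
  have hgM : ∀ r ∈ Set.Icc (0:ℝ) T, g r ≤ M := fun r hr =>
    le_trans (le_abs_self _) (hM r hr)
  -- it suffices to prove the bound with a positive slack δ
  have key : ∀ δ : ℝ, 0 < δ →
      g t ≤ (c + M * δ) * Real.exp ((∫ s in (0:ℝ)..T, a s) + δ) := by
    intro δ hδ
    -- approximate a by a continuous nonnegative function β in L¹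
    have ha_ind : Integrable (Set.indicator (Set.Ioc 0 T) a) volume :=
      (ha_int.mono_set Set.Ioc_subset_Icc_self).integrable_indicator measurableSet_Ioc
    obtain ⟨α, -, hαδ, hαc, hαint⟩ :=
      ha_ind.exists_hasCompactSupport_integral_sub_le hδ
    set β : ℝ → ℝ := fun s => max (α s) 0 with hβ
    have hβc : Continuous β := hαc.max continuous_const
    have hβ0 : ∀ s, 0 ≤ β s := fun s => le_max_right _ _
    have hptw : ∀ s ∈ Set.Ioc (0:ℝ) T, |a s - β s| ≤ ‖Set.indicator (Set.Ioc 0 T) a s - α s‖ := by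
      intro s hs
      rw [Set.indicator_of_mem hs, Real.norm_eq_abs]
      rcases le_or_gt 0 (α s) with h | h
      · rw [hβ]; simp only [max_eq_left h]; exact le_rfl
      · rw [hβ]; simp only [max_eq_right h.le]
        rw [sub_zero, abs_of_nonneg (ha_nonneg s),
          abs_of_nonneg (by linarith [ha_nonneg s] : 0 ≤ a s - α s)]
        linarith
    -- integrability facts
    have hβint : IntegrableOn β (Set.Icc 0 T) :=
      hβc.continuousOn.integrableOn_compact isCompact_Icc
    have hamβ : IntegrableOn (fun s => |a s - β s|) (Set.Icc 0 T) :=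
      (ha_int.sub hβint).abs
    have hamβM : IntegrableOn (fun s => |a s - β s| * M) (Set.Icc 0 T) := hamβ.mul_const M
    have hIβ : (∫ s in Set.Ioc (0:ℝ) T, |a s - β s|) ≤ δ := by
      calc (∫ s in Set.Ioc (0:ℝ) T, |a s - β s|)
          ≤ ∫ s in Set.Ioc (0:ℝ) T, ‖Set.indicator (Set.Ioc 0 T) a s - α s‖ := by
            apply setIntegral_mono_on (hamβ.mono_set Set.Ioc_subset_Icc_self)
              ((ha_ind.sub hαint).norm.integrableOn) measurableSet_Ioc hptw
        _ ≤ ∫ s, ‖Set.indicator (Set.Ioc 0 T) a s - α s‖ :=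
            setIntegral_le_integral (ha_ind.sub hαint).norm
              (Filter.Eventually.of_forall fun s => norm_nonneg _)
        _ ≤ δ := hαδ
    -- set up the comparison ODE machinery
    set c' : ℝ := c + M * δ with hc'
    set B : ℝ → ℝ := fun s => β s * g₁ s with hB
    have hBc : Continuous B := hβc.mul hg₁c
    set Φ : ℝ → ℝ := fun r => c' + ∫ s in (0:ℝ)..r, B s with hΦ
    set A : ℝ → ℝ := fun r => ∫ s in (0:ℝ)..r, β s with hA
    have hΦd : ∀ r, HasDerivAt Φ (B r) r := fun r =>
      ((hBc.integral_hasStrictDerivAt 0 r).hasDerivAt).const_add c'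
    have hAd : ∀ r, HasDerivAt A (β r) r := fun r =>
      (hβc.integral_hasStrictDerivAt 0 r).hasDerivAt
    -- integrability of a * g on Icc 0 T
    have hgm : AEStronglyMeasurable g (volume.restrict (Set.Icc 0 T)) :=
      hg_cont.aestronglyMeasurable measurableSet_Icc
    have hag : IntegrableOn (fun s => a s * g s) (Set.Icc 0 T) := by
      refine Integrable.mono' (ha_int.norm.mul_const M)
        (ha_int.aestronglyMeasurable.mul hgm) ?_
      filter_upwards [ae_restrict_mem measurableSet_Icc] with s hs
      calc ‖a s * g s‖ = |a s| * |g s| := by rw [Real.norm_eq_abs, abs_mul]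
        _ ≤ |a s| * M := mul_le_mul_of_nonneg_left
            (by rw [abs_of_nonneg (hg_nonneg s hs)]; exact hgM s hs) (abs_nonneg _)
        _ = ‖a s‖ * M := by rw [Real.norm_eq_abs]
    have hBint : IntegrableOn B (Set.Icc 0 T) :=
      hBc.continuousOn.integrableOn_compact isCompact_Icc
    -- g ≤ Φ on [0,T]
    have hgΦ : ∀ r ∈ Set.Icc (0:ℝ) T, g r ≤ Φ r := by
      intro r hr
      have hsub : Set.Ioc (0:ℝ) r ⊆ Set.Icc 0 T := fun s hs => ⟨hs.1.le, hs.2.trans hr.2⟩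
      have hsub' : Set.Ioc (0:ℝ) r ⊆ Set.Ioc 0 T := Set.Ioc_subset_Ioc le_rfl hr.2
      have step : (∫ s in (0:ℝ)..r, a s * g s) ≤ (∫ s in (0:ℝ)..r, B s) + M * δ := by
        rw [intervalIntegral.integral_of_le hr.1, intervalIntegral.integral_of_le hr.1]
        have hd : (∫ s in Set.Ioc (0:ℝ) r, a s * g s) - (∫ s in Set.Ioc (0:ℝ) r, B s)
            = ∫ s in Set.Ioc (0:ℝ) r, (a s * g s - B s) :=
          (integral_sub (hag.mono_set hsub) (hBint.mono_set hsub)).symm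
        have hle : (∫ s in Set.Ioc (0:ℝ) r, (a s * g s - B s)) ≤
            ∫ s in Set.Ioc (0:ℝ) r, |a s - β s| * M := by
          apply setIntegral_mono_on
            ((hag.mono_set hsub).sub (hBint.mono_set hsub))
            (hamβM.mono_set hsub) measurableSet_Ioc
          intro s hs
          have hg0 : 0 ≤ g s := hg_nonneg s (hsub hs)
          have hgMs : g s ≤ M := hgM s (hsub hs)
          have hBs : B s = β s * g s := by simp only [hB]; rw [hg₁eq s (hsub hs)]
          simp only [Pi.sub_apply]
          rw [hBs]
          have h1 : a s * g s - β s * g s = (a s - β s) * g s := by ring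
          rw [h1]
          calc (a s - β s) * g s ≤ |a s - β s| * g s :=
                mul_le_mul_of_nonneg_right (le_abs_self _) hg0
            _ ≤ |a s - β s| * M := mul_le_mul_of_nonneg_left hgMs (abs_nonneg _)
        have hle2 : (∫ s in Set.Ioc (0:ℝ) r, |a s - β s| * M) ≤
            ∫ s in Set.Ioc (0:ℝ) T, |a s - β s| * M := by
          apply setIntegral_mono_set (hamβM.mono_set Set.Ioc_subset_Icc_self)
            (Filter.Eventually.of_forall fun s => mul_nonneg (abs_nonneg _) hM0)
            (HasSubset.Subset.eventuallyLE hsub')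
        have hle3 : (∫ s in Set.Ioc (0:ℝ) T, |a s - β s| * M) ≤ δ * M := by
          rw [integral_mul_const]
          exact mul_le_mul_of_nonneg_right hIβ hM0
        linarith
      calc g r ≤ c + ∫ s in (0:ℝ)..r, a s * g s := hineq r hr
        _ ≤ c + ((∫ s in (0:ℝ)..r, B s) + M * δ) := by linarith
        _ = Φ r := by rw [hΦ, hc']; ring
    -- the auxiliary function h = Φ * exp(-A) is nonincreasing
    set h : ℝ → ℝ := fun r => Φ r * Real.exp (-(A r)) with hh
    have hhd : ∀ r, HasDerivAt h
        (B r * Real.exp (-(A r)) + Φ r * (Real.exp (-(A r)) * -(β r))) r := by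
      intro r
      exact (hΦd r).mul (((hAd r).neg).exp)
    have hanti : AntitoneOn h (Set.Icc 0 T) := by
      apply antitoneOn_of_deriv_nonpos (convex_Icc 0 T)
        (fun r _ => ((hhd r).continuousAt).continuousWithinAt)
        (fun r _ => ((hhd r).differentiableAt).differentiableWithinAt)
      intro r hr
      rw [interior_Icc] at hr
      rw [(hhd r).deriv]
      have hgr : g₁ r ≤ Φ r := by
        rw [hg₁eq r (Set.Ioo_subset_Icc_self hr)]
        exact hgΦ r (Set.Ioo_subset_Icc_self hr)
      have hE : (0:ℝ) < Real.exp (-(A r)) := Real.exp_pos _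
      have hkey : B r - β r * Φ r ≤ 0 := by
        have : B r = β r * g₁ r := rfl
        nlinarith [hβ0 r]
      nlinarith
    -- conclude
    have h0 : h 0 = c' := by
      simp only [hh, hΦ, hA, intervalIntegral.integral_same, neg_zero, Real.exp_zero,
        add_zero, mul_one]
    have hht : h t ≤ c' := by
      rw [← h0]
      exact hanti ⟨le_rfl, hT.le⟩ ht ht.1
    have hΦt : Φ t ≤ c' * Real.exp (A t) := by
      have := mul_le_mul_of_nonneg_right hht (Real.exp_pos (A t)).le
      rwa [hh, mul_assoc, ← Real.exp_add, neg_add_cancel, Real.exp_zero, mul_one] at this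
    have hAle : A t ≤ (∫ s in (0:ℝ)..T, a s) + δ := by
      have h1 : A t ≤ A T := by
        have hadd : A t + (∫ s in t..T, β s) = A T :=
          intervalIntegral.integral_add_adjacent_intervals
            (hβc.intervalIntegrable 0 t) (hβc.intervalIntegrable t T)
        have h2 : (0:ℝ) ≤ ∫ s in t..T, β s :=
          intervalIntegral.integral_nonneg ht.2 (fun s _ => hβ0 s)
        linarith
      have h3 : A T ≤ (∫ s in (0:ℝ)..T, a s) + δ := by
        have e1 : A T = ∫ s in Set.Ioc (0:ℝ) T, β s := intervalIntegral.integral_of_le hT.le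
        rw [e1, intervalIntegral.integral_of_le hT.le]
        have hd : (∫ s in Set.Ioc (0:ℝ) T, β s) - (∫ s in Set.Ioc (0:ℝ) T, a s)
            = ∫ s in Set.Ioc (0:ℝ) T, (β s - a s) :=
          (integral_sub (hβint.mono_set Set.Ioc_subset_Icc_self)
            (ha_int.mono_set Set.Ioc_subset_Icc_self)).symm
        have hle : (∫ s in Set.Ioc (0:ℝ) T, (β s - a s)) ≤ ∫ s in Set.Ioc (0:ℝ) T, |a s - β s| := by
          apply setIntegral_mono_on
            ((hβint.mono_set Set.Ioc_subset_Icc_self).sub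
              (ha_int.mono_set Set.Ioc_subset_Icc_self))
            (hamβ.mono_set Set.Ioc_subset_Icc_self) measurableSet_Ioc
          intro s _
          rw [abs_sub_comm]
          exact le_abs_self _
        linarith
      linarith
    have hc'0 : 0 ≤ c' := by positivity
    calc g t ≤ Φ t := hgΦ t ht
      _ ≤ c' * Real.exp (A t) := hΦt
      _ ≤ c' * Real.exp ((∫ s in (0:ℝ)..T, a s) + δ) :=
          mul_le_mul_of_nonneg_left (Real.exp_le_exp.mpr hAle) hc'0
      _ = (c + M * δ) * Real.exp ((∫ s in (0:ℝ)..T, a s) + δ) := by rw [hc']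
  -- pass to the limit δ → 0⁺
  have hlim : Filter.Tendsto (fun δ : ℝ => (c + M * δ) * Real.exp ((∫ s in (0:ℝ)..T, a s) + δ))
      (nhdsWithin 0 (Set.Ioi 0)) (nhds (c * Real.exp (∫ s in (0:ℝ)..T, a s))) := by
    have : Filter.Tendsto (fun δ : ℝ => (c + M * δ) * Real.exp ((∫ s in (0:ℝ)..T, a s) + δ))
        (nhds 0) (nhds (c * Real.exp (∫ s in (0:ℝ)..T, a s))) := by
      have hcont : Continuous (fun δ : ℝ => (c + M * δ) * Real.exp ((∫ s in (0:ℝ)..T, a s) + δ)) :=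
        (continuous_const.add (continuous_const.mul continuous_id)).mul
          (Real.continuous_exp.comp (continuous_const.add continuous_id))
      have := hcont.tendsto 0
      simpa using this
    exact this.mono_left nhdsWithin_le_nhds
  exact ge_of_tendsto hlim (eventually_nhdsWithin_of_forall fun δ hδ => key δ hδ)


lemma II_of_Icc {E : Type*} [NormedAddCommGroup E] {f : ℝ → E} {T t : ℝ}
    (hf : IntegrableOn f (Set.Icc 0 T)) (ht : t ∈ Set.Icc (0:ℝ) T) :
    IntervalIntegrable f volume 0 t := by
  rw [intervalIntegrable_iff_integrableOn_Ioc_of_le ht.1]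
  exact hf.mono_set (fun s hs => ⟨hs.1.le, hs.2.trans ht.2⟩)

lemma primc_of_Icc {E : Type*} [NormedAddCommGroup E] [NormedSpace ℝ E] {f : ℝ → E} {T : ℝ}
    (hT0 : 0 ≤ T) (hf : IntegrableOn f (Set.Icc 0 T)) :
    ContinuousOn (fun r => ∫ s in (0:ℝ)..r, f s) (Set.Icc 0 T) := by
  have := intervalIntegral.continuousOn_primitive_interval (μ := volume) (a := (0:ℝ))
    (b := T) (f := f) (by rwa [Set.uIcc_of_le hT0])
  rwa [Set.uIcc_of_le hT0] at this

set_option maxHeartbeats 1000000 in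
theorem stmt9 (φ : H → EReal) (ψ : H → ℝ) (ψ' : H → H) (hst : Standing φ ψ ψ')
    (Lψ : ℝ) (hLψ : 0 ≤ Lψ)
    (hlip : ∀ a b : H, ‖ψ' a - ψ' b‖ ≤ Lψ * ‖a - b‖)
    (lam eta lam' eta' : ℝ → ℝ) (T c₀ : ℝ) (hT : 0 < T) (hc₀ : 0 < c₀)
    (hlam : ∀ t ∈ Set.Icc (0:ℝ) T, c₀ ≤ lam t)
    (heta : ∀ t ∈ Set.Icc (0:ℝ) T, c₀ ≤ eta t)
    (hlamint : IntegrableOn lam' (Set.Icc 0 T))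
    (hlamrep : ∀ t ∈ Set.Icc (0:ℝ) T, lam t = lam 0 + ∫ s in (0:ℝ)..t, lam' s)
    (hetaint : IntegrableOn eta' (Set.Icc 0 T))
    (hetarep : ∀ t ∈ Set.Icc (0:ℝ) T, eta t = eta 0 + ∫ s in (0:ℝ)..t, eta' s)
    (x v x' v' y w y' w' : ℝ → H) (x₀ v₀ y₀ w₀ : H)
    (hx0 : x 0 = x₀) (hv0 : v 0 = v₀) (hy0 : y 0 = y₀) (hw0 : w 0 = w₀)
    (hv₀ : IsSubdiff φ x₀ v₀) (hw₀ : IsSubdiff φ y₀ w₀)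
    (sol₁ : StrongSol φ ψ' lam T x v x' v')
    (sol₂ : StrongSol φ ψ' eta T y w y' w')
    (C : ℝ) (hC : ∀ᵐ t ∂(volume.restrict (Set.Ioo 0 T)), ‖x' t + y' t‖ ≤ C) :
    ∀ t ∈ Set.Icc (0:ℝ) T,
      Real.sqrt (c₀ ^ 2 * ‖x t - y t‖ ^ 2 + ‖v t - w t‖ ^ 2) ≤
        ((lam 0 + eta 0) / 2 * ‖x₀ - y₀‖ + ‖v₀ - w₀‖ +
          C / 2 * ∫ s in (0:ℝ)..T, |lam s - eta s|) *
        Real.exp ((∫ s in (0:ℝ)..T, |lam' s + eta' s|) / (2 * c₀) +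
          T * (1 + Lψ / c₀)) := by
  -- basic setup
  obtain ⟨hφ, -, -, -⟩ := hst
  have hT0 : (0:ℝ) ≤ T := hT.le
  have h0mem : (0:ℝ) ∈ Set.Icc (0:ℝ) T := ⟨le_rfl, hT0⟩
  set X : ℝ → H := fun s => x s - y s with hX
  set X' : ℝ → H := fun s => x' s - y' s with hX'
  set V : ℝ → H := fun s => v s - w s with hV
  set V' : ℝ → H := fun s => v' s - w' s with hV'
  set gam : ℝ → ℝ := fun s => (lam s + eta s) / 2 with hgam
  set gam' : ℝ → ℝ := fun s => (lam' s + eta' s) / 2 with hgam'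
  set u : ℝ → H := fun s => gam s • X s + V s with hu
  set G : ℝ → ℝ := fun s => ‖u s‖ with hG
  set af : ℝ → ℝ := fun s => |gam' s| / c₀ + (1 + Lψ / c₀) with haf
  set bf : ℝ → ℝ := fun s => C / 2 * |lam s - eta s| with hbf
  -- integrability of the derivatives
  have hX'int : IntegrableOn X' (Set.Icc 0 T) := sol₁.xint.sub sol₂.xint
  have hV'int : IntegrableOn V' (Set.Icc 0 T) := sol₁.vint.sub sol₂.vint
  have hgam'int : IntegrableOn gam' (Set.Icc 0 T) := (hlamint.add hetaint).div_const 2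
  -- integral representations
  have hXrep : ∀ t ∈ Set.Icc (0:ℝ) T, X t = X 0 + ∫ s in (0:ℝ)..t, X' s := by
    intro t ht
    have := intervalIntegral.integral_sub (II_of_Icc sol₁.xint ht) (II_of_Icc sol₂.xint ht)
    simp only [hX, hX']
    rw [sol₁.xrep t ht, sol₂.xrep t ht, this]
    abel
  have hVrep : ∀ t ∈ Set.Icc (0:ℝ) T, V t = V 0 + ∫ s in (0:ℝ)..t, V' s := by
    intro t ht
    have := intervalIntegral.integral_sub (II_of_Icc sol₁.vint ht) (II_of_Icc sol₂.vint ht)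
    simp only [hV, hV']
    rw [sol₁.vrep t ht, sol₂.vrep t ht, this]
    abel
  have hgamrep : ∀ t ∈ Set.Icc (0:ℝ) T, gam t = gam 0 + ∫ s in (0:ℝ)..t, gam' s := by
    intro t ht
    have h1 := intervalIntegral.integral_add (II_of_Icc hlamint ht) (II_of_Icc hetaint ht)
    simp only [hgam, hgam']
    rw [intervalIntegral.integral_div, h1, hlamrep t ht, hetarep t ht]
    ring
  -- continuity
  have hXc : ContinuousOn X (Set.Icc 0 T) := by
    apply ContinuousOn.congr (continuousOn_const.add (primc_of_Icc hT0 hX'int))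
    intro t ht
    exact hXrep t ht
  have hVc : ContinuousOn V (Set.Icc 0 T) := by
    apply ContinuousOn.congr (continuousOn_const.add (primc_of_Icc hT0 hV'int))
    intro t ht
    exact hVrep t ht
  have hgamc : ContinuousOn gam (Set.Icc 0 T) := by
    apply ContinuousOn.congr (continuousOn_const.add (primc_of_Icc hT0 hgam'int))
    intro t ht
    exact hgamrep t ht
  have hGc : ContinuousOn G (Set.Icc 0 T) := ((hgamc.smul hXc).add hVc).norm
  have hGnn : ∀ s ∈ Set.Icc (0:ℝ) T, 0 ≤ G s := fun s _ => norm_nonneg _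
  -- bounds on the continuous functions
  obtain ⟨MX, hMX⟩ := (isCompact_Icc (a := (0:ℝ)) (b := T)).exists_bound_of_continuousOn hXc
  obtain ⟨Mγ, hMγ⟩ := (isCompact_Icc (a := (0:ℝ)) (b := T)).exists_bound_of_continuousOn hgamc
  obtain ⟨MG, hMG⟩ := (isCompact_Icc (a := (0:ℝ)) (b := T)).exists_bound_of_continuousOn hGc
  -- gam ≥ c₀
  have hγc₀ : ∀ s ∈ Set.Icc (0:ℝ) T, c₀ ≤ gam s := by
    intro s hs
    have := hlam s hs; have := heta s hs
    simp only [hgam]; linarith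
  -- monotonicity of the subdifferential
  have hmono : ∀ s ∈ Set.Icc (0:ℝ) T, 0 ≤ (inner ℝ (X s) (V s) : ℝ) :=
    fun s hs => subdiff_mono_s9 hφ (sol₁.subdiff s hs) (sol₂.subdiff s hs)
  -- the pointwise energy inequality  θ ≤ G
  have hsq : ∀ s ∈ Set.Icc (0:ℝ) T, c₀^2 * ‖X s‖^2 + ‖V s‖^2 ≤ G s ^ 2 := by
    intro s hs
    have h1 : G s ^ 2 = ‖gam s • X s‖^2 + 2 * (inner ℝ (gam s • X s) (V s) : ℝ) + ‖V s‖^2 := by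
      simp only [hG, hu]
      rw [← norm_add_sq_real]
    have h2 : ‖gam s • X s‖^2 = gam s ^ 2 * ‖X s‖^2 := by
      rw [norm_smul, Real.norm_eq_abs, mul_pow, sq_abs]
    have h3 : (inner ℝ (gam s • X s) (V s) : ℝ) = gam s * (inner ℝ (X s) (V s) : ℝ) :=
      real_inner_smul_left _ _ _
    have h4 := hγc₀ s hs
    have h5 := hmono s hs
    have h6 : c₀^2 * ‖X s‖^2 ≤ gam s ^2 * ‖X s‖^2 := by
      have h6a : c₀^2 ≤ gam s ^2 := by nlinarith [hc₀.le]
      exact mul_le_mul_of_nonneg_right h6a (sq_nonneg _)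
    nlinarith [mul_nonneg (le_trans hc₀.le h4) h5]
  have hXG : ∀ s ∈ Set.Icc (0:ℝ) T, c₀ * ‖X s‖ ≤ G s := by
    intro s hs
    have h1 : (c₀ * ‖X s‖)^2 ≤ G s ^2 := by nlinarith [hsq s hs, sq_nonneg ‖V s‖]
    have h2 : 0 ≤ c₀ * ‖X s‖ := mul_nonneg hc₀.le (norm_nonneg _)
    have := Real.sqrt_le_sqrt h1
    rwa [Real.sqrt_sq h2, Real.sqrt_sq (hGnn s hs)] at this
  have hVG : ∀ s ∈ Set.Icc (0:ℝ) T, ‖V s‖ ≤ G s := by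
    intro s hs
    have haux : 0 ≤ c₀^2 * ‖X s‖^2 := by positivity
    have h1 : ‖V s‖^2 ≤ G s ^2 := by nlinarith [hsq s hs]
    have := Real.sqrt_le_sqrt h1
    rwa [Real.sqrt_sq (norm_nonneg _), Real.sqrt_sq (hGnn s hs)] at this
  -- C is nonnegative
  have hC0 : 0 ≤ C := by
    have hμ0 : volume.restrict (Set.Ioo (0:ℝ) T) ≠ 0 := by
      rw [Ne, Measure.restrict_eq_zero]
      simp only [Real.volume_Ioo, sub_zero, ENNReal.ofReal_eq_zero, not_le]
      exact hT
    haveI := MeasureTheory.ae_neBot.mpr hμ0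
    obtain ⟨s, hs⟩ := hC.exists
    exact le_trans (norm_nonneg _) hs
  -- integrand of the derivative of u
  set e : ℝ → H := fun s => (gam' s • X s + gam s • X' s) + V' s with he
  have heint1 : IntegrableOn (fun s => gam' s • X s) (Set.Icc 0 T) :=
    int_smul_bdd measurableSet_Icc hgam'int (hXc.aestronglyMeasurable measurableSet_Icc) hMX
  have heint2 : IntegrableOn (fun s => gam s • X' s) (Set.Icc 0 T) :=
    int_bdd_smul measurableSet_Icc (hgamc.aestronglyMeasurable measurableSet_Icc) hX'int
      (fun s hs => by rw [← Real.norm_eq_abs]; exact hMγ s hs)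
  have heint : IntegrableOn e (Set.Icc 0 T) := (heint1.add heint2).add hV'int
  -- representation of u
  have hurep : ∀ t ∈ Set.Icc (0:ℝ) T, u t = u 0 + ∫ s in (0:ℝ)..t, e s := by
    intro t ht
    have h1 : gam t • X t = gam 0 • X 0 + ∫ s in (0:ℝ)..t, (gam' s • X s + gam s • X' s) :=
      parts_rep hT0 hgam'int hX'int hgamrep hXrep ht
    have h2 := hVrep t ht
    have h3 : (∫ s in (0:ℝ)..t, ((gam' s • X s + gam s • X' s) + V' s))
        = (∫ s in (0:ℝ)..t, (gam' s • X s + gam s • X' s)) + ∫ s in (0:ℝ)..t, V' s :=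
      intervalIntegral.integral_add (II_of_Icc (heint1.add heint2) ht) (II_of_Icc hV'int ht)
    simp only [hu, he]
    rw [h1, h2, h3]
    abel
  -- a.e. bound on the derivative
  have hae : ∀ᵐ s ∂(volume.restrict (Set.Ioo 0 T)), ‖e s‖ ≤ af s * G s + bf s := by
    filter_upwards [sol₁.eqn, sol₂.eqn, hC, ae_restrict_mem measurableSet_Ioo]
      with s h1 h2 h3 hs
    have hsIcc : s ∈ Set.Icc (0:ℝ) T := ⟨hs.1.le, hs.2.le⟩
    rw [add_assoc] at h1 h2
    have e1 : lam s • x' s + v' s = -(v s + ψ' (x s)) := eq_neg_of_add_eq_zero_left h1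
    have e2 : eta s • y' s + w' s = -(w s + ψ' (y s)) := eq_neg_of_add_eq_zero_left h2
    have hid : gam s • X' s + V' s
        = (lam s • x' s + v' s) - (eta s • y' s + w' s)
          + ((eta s - lam s)/2) • (x' s + y' s) := by
      simp only [hgam, hX', hV']
      match_scalars <;> ring
    rw [e1, e2] at hid
    have hid2 : gam s • X' s + V' s
        = -(V s) - (ψ' (x s) - ψ' (y s)) + ((eta s - lam s)/2) • (x' s + y' s) := by
      rw [hid]
      simp only [hV]
      abel
    have hb1 : ‖gam' s • X s‖ ≤ |gam' s| / c₀ * G s := by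
      rw [norm_smul, Real.norm_eq_abs]
      have h4 := hXG s hsIcc
      have h5 : |gam' s| * ‖X s‖ = |gam' s| / c₀ * (c₀ * ‖X s‖) := by
        field_simp
      rw [h5]
      exact mul_le_mul_of_nonneg_left h4 (div_nonneg (abs_nonneg _) hc₀.le)
    have hb2 : ‖V s‖ ≤ G s := hVG s hsIcc
    have hb3 : ‖ψ' (x s) - ψ' (y s)‖ ≤ Lψ / c₀ * G s := by
      have h4 := hlip (x s) (y s)
      have h5 : Lψ * ‖x s - y s‖ = Lψ / c₀ * (c₀ * ‖X s‖) := by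
        simp only [hX]; field_simp
      rw [h5] at h4
      exact h4.trans (mul_le_mul_of_nonneg_left (hXG s hsIcc) (div_nonneg hLψ hc₀.le))
    have hb4 : ‖((eta s - lam s)/2) • (x' s + y' s)‖ ≤ bf s := by
      rw [norm_smul, Real.norm_eq_abs, hbf]
      have h6 : |(eta s - lam s)/2| = |lam s - eta s| / 2 := by
        rw [abs_div, abs_two, abs_sub_comm]
      rw [h6]
      calc |lam s - eta s| / 2 * ‖x' s + y' s‖ ≤ |lam s - eta s| / 2 * C :=
            mul_le_mul_of_nonneg_left h3 (by positivity)
        _ = C / 2 * |lam s - eta s| := by ring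
    have hsplit : ‖gam s • X' s + V' s‖ ≤ ‖V s‖ + ‖ψ' (x s) - ψ' (y s)‖
        + ‖((eta s - lam s)/2) • (x' s + y' s)‖ := by
      rw [hid2]
      calc ‖-(V s) - (ψ' (x s) - ψ' (y s)) + ((eta s - lam s)/2) • (x' s + y' s)‖
          ≤ ‖-(V s) - (ψ' (x s) - ψ' (y s))‖ + ‖((eta s - lam s)/2) • (x' s + y' s)‖ :=
            norm_add_le _ _
        _ ≤ (‖-(V s)‖ + ‖ψ' (x s) - ψ' (y s)‖) + ‖((eta s - lam s)/2) • (x' s + y' s)‖ := by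
            gcongr
            exact norm_sub_le _ _
        _ = ‖V s‖ + ‖ψ' (x s) - ψ' (y s)‖ + ‖((eta s - lam s)/2) • (x' s + y' s)‖ := by
            rw [norm_neg]
    calc ‖e s‖ = ‖gam' s • X s + (gam s • X' s + V' s)‖ := by rw [he]; congr 1; abel
      _ ≤ ‖gam' s • X s‖ + ‖gam s • X' s + V' s‖ := norm_add_le _ _
      _ ≤ (|gam' s| / c₀ * G s) + (G s + Lψ / c₀ * G s + bf s) := by
          refine add_le_add hb1 (hsplit.trans ?_)
          exact add_le_add (add_le_add hb2 hb3) hb4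
      _ = af s * G s + bf s := by rw [haf]; ring
  -- continuity of lam, eta and integrability of the coefficient functions
  have hlamc : ContinuousOn lam (Set.Icc 0 T) := by
    apply ContinuousOn.congr (continuousOn_const.add (primc_of_Icc hT0 hlamint))
    intro r hr
    exact hlamrep r hr
  have hetac : ContinuousOn eta (Set.Icc 0 T) := by
    apply ContinuousOn.congr (continuousOn_const.add (primc_of_Icc hT0 hetaint))
    intro r hr
    exact hetarep r hr
  have hGm : AEStronglyMeasurable G (volume.restrict (Set.Icc 0 T)) :=
    hGc.aestronglyMeasurable measurableSet_Icc
  have haf_int : IntegrableOn af (Set.Icc 0 T) :=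
    (hgam'int.abs.div_const c₀).add ((integrableOn_const_iff).mpr (Or.inr measure_Icc_lt_top))
  have haf_nonneg : ∀ s, 0 ≤ af s := fun s =>
    add_nonneg (div_nonneg (abs_nonneg _) hc₀.le)
      (add_nonneg zero_le_one (div_nonneg hLψ hc₀.le))
  have hafG_int : IntegrableOn (fun s => af s * G s) (Set.Icc 0 T) := by
    have := int_smul_bdd (H := ℝ) measurableSet_Icc haf_int hGm (M := MG)
      (fun s hs => hMG s hs)
    simpa [smul_eq_mul] using this
  have hbf_cont : ContinuousOn bf (Set.Icc 0 T) :=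
    continuousOn_const.mul ((hlamc.sub hetac).abs)
  have hbf_int : IntegrableOn bf (Set.Icc 0 T) :=
    hbf_cont.integrableOn_compact isCompact_Icc
  have hbf_nonneg : ∀ s, 0 ≤ bf s := fun s =>
    mul_nonneg (by positivity) (abs_nonneg _)
  set cc : ℝ := G 0 + ∫ s in (0:ℝ)..T, bf s with hcc
  have hIbf_nonneg : 0 ≤ ∫ s in (0:ℝ)..T, bf s :=
    intervalIntegral.integral_nonneg hT0 (fun s _ => hbf_nonneg s)
  have hcc0 : 0 ≤ cc := add_nonneg (hGnn 0 h0mem) hIbf_nonneg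
  -- the main integral inequality
  have hG_ineq : ∀ t ∈ Set.Icc (0:ℝ) T, G t ≤ cc + ∫ s in (0:ℝ)..t, af s * G s := by
    intro t ht
    have hsubIoc : Set.Ioc (0:ℝ) t ⊆ Set.Icc 0 T := fun s hs => ⟨hs.1.le, hs.2.trans ht.2⟩
    have hae2 : ∀ᵐ s ∂(volume.restrict (Set.Ioc 0 t)), ‖e s‖ ≤ af s * G s + bf s := by
      have h1 : ∀ᵐ s ∂volume, s ∈ Set.Ioo 0 T → ‖e s‖ ≤ af s * G s + bf s :=
        (ae_restrict_iff' measurableSet_Ioo).mp hae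
      have h2 : ∀ᵐ (s : ℝ) ∂volume, s ∉ ({t} : Set ℝ) :=
        measure_eq_zero_iff_ae_notMem.mp (measure_singleton t)
      rw [ae_restrict_iff' measurableSet_Ioc]
      filter_upwards [h1, h2] with s hs1 hs2 hs3
      apply hs1
      refine ⟨hs3.1, ?_⟩
      rcases lt_or_eq_of_le hs3.2 with h | h
      · exact h.trans_le ht.2
      · exact absurd h (by simpa using hs2)
    have h3 : u t = u 0 + ∫ s in (0:ℝ)..t, e s := hurep t ht
    have hre : G t ≤ G 0 + ∫ s in (0:ℝ)..t, ‖e s‖ := by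
      calc G t = ‖u 0 + ∫ s in (0:ℝ)..t, e s‖ := by simp only [hG]; rw [h3]
        _ ≤ ‖u 0‖ + ‖∫ s in (0:ℝ)..t, e s‖ := norm_add_le _ _
        _ ≤ G 0 + ∫ s in (0:ℝ)..t, ‖e s‖ := by
            refine add_le_add le_rfl ?_
            exact intervalIntegral.norm_integral_le_integral_norm ht.1
    have hmono2 : (∫ s in (0:ℝ)..t, ‖e s‖) ≤ ∫ s in (0:ℝ)..t, (af s * G s + bf s) := by
      rw [intervalIntegral.integral_of_le ht.1, intervalIntegral.integral_of_le ht.1]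
      have hsum_int : IntegrableOn (fun s => af s * G s + bf s) (Set.Icc 0 T) :=
        hafG_int.add hbf_int
      exact integral_mono_ae ((heint.mono_set hsubIoc).norm)
        (hsum_int.mono_set hsubIoc) hae2
    have hsplit2 : (∫ s in (0:ℝ)..t, (af s * G s + bf s))
        = (∫ s in (0:ℝ)..t, af s * G s) + ∫ s in (0:ℝ)..t, bf s :=
      intervalIntegral.integral_add (II_of_Icc hafG_int ht) (II_of_Icc hbf_int ht)
    have hbfmono : (∫ s in (0:ℝ)..t, bf s) ≤ ∫ s in (0:ℝ)..T, bf s := by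
      rw [intervalIntegral.integral_of_le ht.1, intervalIntegral.integral_of_le hT0]
      exact setIntegral_mono_set (hbf_int.mono_set Set.Ioc_subset_Icc_self)
        (Filter.Eventually.of_forall fun s => hbf_nonneg s)
        (HasSubset.Subset.eventuallyLE (Set.Ioc_subset_Ioc le_rfl ht.2))
    rw [hcc]
    linarith
  -- Gronwall
  have hgron := gronwall_int hT hcc0 hGc hGnn haf_int haf_nonneg hG_ineq
  intro t ht
  have hθ : Real.sqrt (c₀ ^ 2 * ‖x t - y t‖ ^ 2 + ‖v t - w t‖ ^ 2) ≤ G t := by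
    have h1 := hsq t ht
    simp only [hX, hV] at h1
    have h2 := Real.sqrt_le_sqrt h1
    rwa [Real.sqrt_sq (hGnn t ht)] at h2
  -- exponent identification
  have hTmem : T ∈ Set.Icc (0:ℝ) T := ⟨hT0, le_rfl⟩
  have hexp : (∫ s in (0:ℝ)..T, af s)
      = (∫ s in (0:ℝ)..T, |lam' s + eta' s|) / (2 * c₀) + T * (1 + Lψ / c₀) := by
    have h1 : (∫ s in (0:ℝ)..T, af s)
        = (∫ s in (0:ℝ)..T, |gam' s| / c₀) + ∫ s in (0:ℝ)..T, (1 + Lψ / c₀) :=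
      intervalIntegral.integral_add
        (II_of_Icc (hgam'int.abs.div_const c₀) hTmem) intervalIntegrable_const
    have h2 : (∫ s in (0:ℝ)..T, |gam' s| / c₀) = (∫ s in (0:ℝ)..T, |gam' s|) / c₀ :=
      intervalIntegral.integral_div _ _
    have h3 : (fun s => |gam' s|) = fun s => |lam' s + eta' s| / 2 := by
      funext s
      simp only [hgam']
      rw [abs_div, abs_two]
    have h4 : (∫ s in (0:ℝ)..T, |gam' s|) = (∫ s in (0:ℝ)..T, |lam' s + eta' s|) / 2 := by
      simp only [h3]
      exact intervalIntegral.integral_div _ _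
    have h5 : (∫ s in (0:ℝ)..T, (1 + Lψ / c₀)) = T * (1 + Lψ / c₀) := by
      rw [intervalIntegral.integral_const, sub_zero, smul_eq_mul]
    rw [h1, h2, h4, h5]
    field_simp
  -- bounding the prefactor
  have hcc_le : cc ≤ (lam 0 + eta 0) / 2 * ‖x₀ - y₀‖ + ‖v₀ - w₀‖
      + C / 2 * ∫ s in (0:ℝ)..T, |lam s - eta s| := by
    have h1 : G 0 ≤ (lam 0 + eta 0) / 2 * ‖x₀ - y₀‖ + ‖v₀ - w₀‖ := by
      have h0 : G 0 = ‖gam 0 • X 0 + V 0‖ := rfl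
      rw [h0]
      calc ‖gam 0 • X 0 + V 0‖ ≤ ‖gam 0 • X 0‖ + ‖V 0‖ := norm_add_le _ _
        _ = |gam 0| * ‖X 0‖ + ‖V 0‖ := by rw [norm_smul, Real.norm_eq_abs]
        _ = (lam 0 + eta 0) / 2 * ‖x₀ - y₀‖ + ‖v₀ - w₀‖ := by
            rw [abs_of_nonneg (le_trans hc₀.le (hγc₀ 0 h0mem))]
            simp only [hgam, hX, hV]
            rw [hx0, hy0, hv0, hw0]
    have h2 : (∫ s in (0:ℝ)..T, bf s) = C / 2 * ∫ s in (0:ℝ)..T, |lam s - eta s| := by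
      simp only [hbf]
      exact intervalIntegral.integral_const_mul _ _
    rw [hcc, h2]
    linarith
  refine le_trans hθ (le_trans (hgron t ht) ?_)
  rw [← hexp]
  exact mul_le_mul_of_nonneg_right hcc_le (Real.exp_nonneg _)
end
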